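/- arXiv:math/0408192 — 10 statements merged into one kernel-verified Lean document; each statement's English description precedes it below -/
import Mathlib

section
/- Let H be a real Hilbert space and let F : H → H be twice Fréchet differentiable. Suppose there exist a point u₀ ∈ H and functions M₁, M₂, m : (0,∞) → (0,∞) such that for every R > 0 and every u in the closed ball B(u₀,R) = {u : ‖u − u₀‖ ≤ R} one has ‖F′(u)‖ ≤ M₁(R), ‖F″(u)‖ ≤ M₂(R), and F′(u) is a boundedly invertible continuous linear operator with ‖[F′(u)]⁻¹‖ ≤ m(R). If sup_{R>0} R/m(R) = ∞, then F is surjective: for every f ∈ H there exists u ∈ H with F(u) = f. -/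
open Set Metric

/-- If `F : H → H` is twice Fréchet differentiable on a real Hilbert
space, with `‖F'(u)‖ ≤ M₁(R)`, `‖F''(u)‖ ≤ M₂(R)` and `F'(u)` boundedly invertible
with `‖[F'(u)]⁻¹‖ ≤ m(R)` on each closed ball `B(u₀,R)`, and
`sup_{R>0} R / m(R) = ∞`, then `F` is surjective. -/
theorem dsm_surjectivity
    {H : Type*} [NormedAddCommGroup H] [InnerProductSpace ℝ H] [CompleteSpace H]
    (F : H → H) (F' : H → H →L[ℝ] H) (F'' : H → H →L[ℝ] H →L[ℝ] H)
    (Finv : H → H →L[ℝ] H)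
    (hF' : ∀ u, HasFDerivAt F (F' u) u)
    (hF'' : ∀ u, HasFDerivAt F' (F'' u) u)
    (u₀ : H) (M₁ M₂ m : ℝ → ℝ)
    (hM₁pos : ∀ R > (0:ℝ), 0 < M₁ R)
    (hM₂pos : ∀ R > (0:ℝ), 0 < M₂ R)
    (hmpos : ∀ R > (0:ℝ), 0 < m R)
    (hM₁ : ∀ R > (0:ℝ), ∀ u ∈ closedBall u₀ R, ‖F' u‖ ≤ M₁ R)
    (hM₂ : ∀ R > (0:ℝ), ∀ u ∈ closedBall u₀ R, ‖F'' u‖ ≤ M₂ R)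
    (hinv_left : ∀ u, (Finv u).comp (F' u) = ContinuousLinearMap.id ℝ H)
    (hinv_right : ∀ u, (F' u).comp (Finv u) = ContinuousLinearMap.id ℝ H)
    (hm : ∀ R > (0:ℝ), ∀ u ∈ closedBall u₀ R, ‖Finv u‖ ≤ m R)
    (hsup : ∀ C : ℝ, ∃ R > (0:ℝ), C < R / m R) :
    Function.Surjective F := by
  -- pointwise inverse identities
  have hright : ∀ u x, F' u (Finv u x) = x := fun u x =>
    ContinuousLinearMap.ext_iff.mp (hinv_right u) x
  have hleft : ∀ u x, Finv u (F' u x) = x := fun u x =>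
    ContinuousLinearMap.ext_iff.mp (hinv_left u) x
  intro f
  set w : H := f - F u₀ with hw
  set d : ℝ := ‖w‖ with hd
  rcases eq_or_lt_of_le (norm_nonneg w) with h0 | hdpos
  · refine ⟨u₀, ?_⟩
    have hz : w = 0 := norm_eq_zero.mp h0.symm
    rw [hw] at hz
    exact (sub_eq_zero.mp hz).symm
  obtain ⟨R, hR, hRd⟩ := hsup d
  have hmR := hmpos R hR
  have hcd : m R * d < R := by
    rw [lt_div_iff₀ hmR] at hRd
    linarith [hRd]
  set c : ℝ := m R with hc
  -- the vector field
  set v : H → H := fun u => Finv u w with hv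
  -- F' is Lipschitz on the closed ball
  have hF'lip : ∀ u ∈ closedBall u₀ R, ∀ u' ∈ closedBall u₀ R,
      ‖F' u - F' u'‖ ≤ M₂ R * ‖u - u'‖ := by
    intro u hu u' hu'
    exact (convex_closedBall u₀ R).norm_image_sub_le_of_norm_hasFDerivWithin_le
      (fun x hx => (hF'' x).hasFDerivWithinAt) (fun x hx => hM₂ R hR x hx) hu' hu
  -- bound on v
  have hvbound : ∀ u ∈ closedBall u₀ R, ‖v u‖ ≤ c * d := by
    intro u hu
    calc ‖Finv u w‖ ≤ ‖Finv u‖ * ‖w‖ := (Finv u).le_opNorm w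
    _ ≤ c * d := by
        apply mul_le_mul_of_nonneg_right (hm R hR u hu) (norm_nonneg w)
  -- Lipschitz estimate for v
  have hvlip : ∀ u ∈ closedBall u₀ R, ∀ u' ∈ closedBall u₀ R,
      ‖v u - v u'‖ ≤ (c * c * M₂ R * d) * ‖u - u'‖ := by
    intro u hu u' hu'
    have key : v u - v u' = Finv u ((F' u' - F' u) (Finv u' w)) := by
      simp only [hv, ContinuousLinearMap.sub_apply, map_sub, hright, hleft]
    rw [key]
    have b1 : ‖Finv u' w‖ ≤ c * d :=
      le_trans ((Finv u').le_opNorm w)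
        (mul_le_mul_of_nonneg_right (hm R hR u' hu') (norm_nonneg w))
    have bF : ‖F' u' - F' u‖ ≤ M₂ R * ‖u - u'‖ := by
      rw [norm_sub_rev u]; exact hF'lip u' hu' u hu
    have b2 : ‖(F' u' - F' u) (Finv u' w)‖ ≤ (M₂ R * ‖u - u'‖) * (c * d) :=
      le_trans ((F' u' - F' u).le_opNorm _)
        (mul_le_mul bF b1 (norm_nonneg _)
          (mul_nonneg (le_of_lt (hM₂pos R hR)) (norm_nonneg _)))
    calc ‖Finv u ((F' u' - F' u) (Finv u' w))‖
        ≤ ‖Finv u‖ * ‖(F' u' - F' u) (Finv u' w)‖ := (Finv u).le_opNorm _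
      _ ≤ c * ((M₂ R * ‖u - u'‖) * (c * d)) :=
          mul_le_mul (hm R hR u hu) b2 (norm_nonneg _) (le_of_lt hmR)
      _ = (c * c * M₂ R * d) * ‖u - u'‖ := by ring
  -- Picard-Lindelöf
  set L : NNReal := Real.toNNReal (c * c * M₂ R * d) with hL
  have hpl : IsPicardLindelof (fun _ : ℝ => v) (⟨0, le_refl 0, zero_le_one⟩ : Icc (0:ℝ) 1) u₀
      R.toNNReal 0 (c * d).toNNReal L := by
    constructor
    · intro t ht
      apply LipschitzOnWith.of_dist_le_mul
      intro x hx y hy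
      rw [Real.coe_toNNReal _ hR.le] at hx hy
      rw [dist_eq_norm, dist_eq_norm]
      calc ‖v x - v y‖ ≤ (c * c * M₂ R * d) * ‖x - y‖ := hvlip x hx y hy
        _ ≤ L * ‖x - y‖ := by
            gcongr
            exact Real.le_coe_toNNReal _
    · intro x hx; exact continuousOn_const
    · intro t ht x hx
      rw [Real.coe_toNNReal _ hR.le] at hx
      rw [Real.coe_toNNReal _ (mul_nonneg hmR.le hdpos.le)]
      exact hvbound x hx
    · show ((c * d).toNNReal : ℝ) * max ((1:ℝ) - 0) (0 - 0) ≤ (R.toNNReal : ℝ) - ((0:NNReal):ℝ)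
      rw [Real.coe_toNNReal _ hR.le, Real.coe_toNNReal _ (mul_nonneg hmR.le hdpos.le)]
      calc c * d * max ((1:ℝ) - 0) (0 - 0) = c * d := by simp
        _ ≤ R - ((0:NNReal):ℝ) := by simp only [NNReal.coe_zero, sub_zero]; exact le_of_lt hcd
  obtain ⟨α, hα0, hαderiv⟩ := hpl.exists_eq_forall_mem_Icc_hasDerivWithinAt₀
  replace hα0 : α 0 = u₀ := hα0
  -- g t = F (α t) - t • w has zero derivative
  have hg : ∀ t ∈ Icc (0:ℝ) 1,
      HasDerivWithinAt (fun t => F (α t) - t • w) 0 (Icc (0:ℝ) 1) t := by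
    intro t ht
    have h1 : HasDerivWithinAt (fun t => F (α t)) (F' (α t) (v (α t))) (Icc (0:ℝ) 1) t :=
      (hF' (α t)).comp_hasDerivWithinAt t (hαderiv t ht)
    have h2 : HasDerivWithinAt (fun t : ℝ => t • w) w (Icc (0:ℝ) 1) t := by
      simpa using (hasDerivWithinAt_id t (Icc (0:ℝ) 1)).smul_const w
    have := h1.sub h2
    have hval : F' (α t) (v (α t)) = w := hright (α t) w
    rw [hval] at this
    simpa [Pi.sub_def] using this
  have hconst : ‖(F (α 1) - (1:ℝ) • w) - (F (α 0) - (0:ℝ) • w)‖ ≤ 0 * ‖(1:ℝ) - 0‖ := by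
    exact (convex_Icc (0:ℝ) 1).norm_image_sub_le_of_norm_hasDerivWithin_le
      hg (fun t ht => by simp) (by norm_num) (by norm_num)
  rw [hα0] at hconst
  have h2 : F (α 1) - w - F u₀ = 0 := by simpa using hconst
  refine ⟨α 1, ?_⟩
  have h3 : F (α 1) = w + F u₀ := by
    rw [← sub_eq_zero, ← h2]; abel
  rw [h3, hw]; abel
end

section
/- Let H be a real Hilbert space and let F : H → H be twice Fréchet differentiable. Suppose that for every R > 0 there exist constants M₁(R), M₂(R) such that ‖F′(u)‖ ≤ M₁(R) and ‖F″(u)‖ ≤ M₂(R) for all u with ‖u‖ ≤ R, and suppose there exist constants a ≥ 0 and b > 0 such that for every u ∈ H the derivative F′(u) is boundedly invertible with ‖[F′(u)]⁻¹‖ ≤ a‖u‖ + b. Then F is a homeomorphism of H onto H: F is bijective and both F and F⁻¹ are continuous. -/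
open Set Metric

set_option linter.unusedSectionVars false
set_option maxHeartbeats 1000000

open Filter Real

namespace DSMHadamard

variable {H : Type*} [NormedAddCommGroup H] [NormedSpace ℝ H] [CompleteSpace H]
variable {F : H → H} {F' : H → H →L[ℝ] H} {F'' : H → H →L[ℝ] H →L[ℝ] H}
variable {Finv : H → H →L[ℝ] H} {a b : ℝ}

theorem gb_mono {K ε t : ℝ} (hK : 0 ≤ K) (hε : 0 ≤ ε) (ht : t ≤ 1) :
    gronwallBound 0 K ε t ≤ gronwallBound 0 K ε 1 := by
  rcases eq_or_ne K 0 with h | h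
  · subst h; simp only [gronwallBound_K0]; nlinarith
  · have hK' : 0 < K := lt_of_le_of_ne hK (Ne.symm h)
    simp only [gronwallBound_of_K_ne_0 h, zero_mul, zero_add]
    have h1 : exp (K * t) ≤ exp (K * 1) := exp_le_exp.2 (by nlinarith)
    have h2 : 0 ≤ ε / K := div_nonneg hε hK
    nlinarith

theorem gb_nonneg {K ε t : ℝ} (hK : 0 ≤ K) (hε : 0 ≤ ε) (ht : 0 ≤ t) :
    0 ≤ gronwallBound 0 K ε t := by
  rcases eq_or_ne K 0 with h | h
  · subst h; simp only [gronwallBound_K0]; nlinarith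
  · have hK' : 0 < K := lt_of_le_of_ne hK (Ne.symm h)
    simp only [gronwallBound_of_K_ne_0 h, zero_mul, zero_add]
    have h1 : (1:ℝ) ≤ exp (K * t) := one_le_exp (by positivity)
    have h2 : 0 ≤ ε / K := div_nonneg hε hK
    nlinarith

theorem gb_lin (K ε t : ℝ) : gronwallBound 0 K ε t = ε * gronwallBound 0 K 1 t := by
  rcases eq_or_ne K 0 with h | h
  · subst h; simp only [gronwallBound_K0]; ring
  · simp only [gronwallBound_of_K_ne_0 h]; ring

theorem strictF (hF' : ∀ u, HasFDerivAt F (F' u) u) (hF'' : ∀ u, HasFDerivAt F' (F'' u) u)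
    (u : H) : HasStrictFDerivAt F (F' u) u :=
  hasStrictFDerivAt_of_hasFDerivAt_of_continuousAt (Eventually.of_forall hF')
    (hF'' u).continuousAt

variable (hF' : ∀ u, HasFDerivAt F (F' u) u)
variable (hF'' : ∀ u, HasFDerivAt F' (F'' u) u)
variable (hM : ∀ R > (0:ℝ), ∃ M₁ M₂ : ℝ, ∀ u : H, ‖u‖ ≤ R → ‖F' u‖ ≤ M₁ ∧ ‖F'' u‖ ≤ M₂)
variable (hl : ∀ u, (Finv u).comp (F' u) = ContinuousLinearMap.id ℝ H)
variable (hr : ∀ u, (F' u).comp (Finv u) = ContinuousLinearMap.id ℝ H)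
variable (hinv_bound : ∀ u : H, ‖Finv u‖ ≤ a * ‖u‖ + b)
variable (ha : 0 ≤ a) (hb : 0 < b)
variable (hstrict : ∀ u, HasStrictFDerivAt F (F' u) u)

noncomputable def cle' (u : H) : H ≃L[ℝ] H :=
  ContinuousLinearEquiv.equivOfInverse (F' u) (Finv u)
    (fun x => by simpa using ContinuousLinearMap.ext_iff.1 (hl u) x)
    (fun x => by simpa using ContinuousLinearMap.ext_iff.1 (hr u) x)

/-- A lift of the segment `t ↦ F 0 + t • c`. -/
def IsLift (F : H → H) (c : H) (T : ℝ) (u : ℝ → H) : Prop :=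
  ContinuousOn u (Icc 0 T) ∧ u 0 = 0 ∧ ∀ s ∈ Icc (0:ℝ) T, F (u s) = F 0 + s • c

theorem f'lip (hF'' : ∀ u, HasFDerivAt F' (F'' u) u)
    (hM : ∀ R > (0:ℝ), ∃ M₁ M₂ : ℝ, ∀ u : H, ‖u‖ ≤ R → ‖F' u‖ ≤ M₁ ∧ ‖F'' u‖ ≤ M₂) :
    ∀ R : ℝ, 0 ≤ R → ∃ K, 0 ≤ K ∧
      ∀ u v : H, ‖u‖ ≤ R → ‖v‖ ≤ R → ‖F' u - F' v‖ ≤ K * ‖u - v‖ := by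
  intro R hR
  obtain ⟨M₁, M₂, hM2⟩ := hM (R + 1) (by linarith)
  refine ⟨max M₂ 0, le_max_right _ _, fun u v hu hv => ?_⟩
  have hball : ∀ x : H, x ∈ closedBall (0:H) (R+1) → ‖x‖ ≤ R + 1 := by
    intro x hx; rwa [mem_closedBall_zero_iff] at hx
  exact Convex.norm_image_sub_le_of_norm_hasFDerivWithin_le
    (fun x hx => (hF'' x).hasFDerivWithinAt)
    (fun x hx => le_trans (hM2 x (hball x hx)).2 (le_max_left _ _))
    (convex_closedBall _ _)
    (mem_closedBall_zero_iff.2 (by linarith))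
    (mem_closedBall_zero_iff.2 (by linarith))

theorem finvlip (hF'' : ∀ u, HasFDerivAt F' (F'' u) u)
    (hM : ∀ R > (0:ℝ), ∃ M₁ M₂ : ℝ, ∀ u : H, ‖u‖ ≤ R → ‖F' u‖ ≤ M₁ ∧ ‖F'' u‖ ≤ M₂)
    (hl : ∀ u, (Finv u).comp (F' u) = ContinuousLinearMap.id ℝ H)
    (hr : ∀ u, (F' u).comp (Finv u) = ContinuousLinearMap.id ℝ H)
    (hinv_bound : ∀ u : H, ‖Finv u‖ ≤ a * ‖u‖ + b)
    (ha : 0 ≤ a) (hb : 0 < b) :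
    ∀ R : ℝ, 0 ≤ R → ∃ K, 0 ≤ K ∧
      ∀ u v : H, ‖u‖ ≤ R → ‖v‖ ≤ R → ‖Finv u - Finv v‖ ≤ K * ‖u - v‖ := by
  intro R hR
  obtain ⟨K, hK0, hK⟩ := f'lip hF'' hM R hR
  have hq : (0:ℝ) < a * R + b := by nlinarith
  refine ⟨(a*R+b)^2 * K, by positivity, fun u v hu hv => ?_⟩
  have key : Finv u - Finv v = ((Finv u).comp (F' v - F' u)).comp (Finv v) := by
    ext x
    have h1 : F' v ((Finv v) x) = x := ContinuousLinearMap.ext_iff.1 (hr v) x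
    have h2 : Finv u ((F' u) ((Finv v) x)) = Finv v x :=
      ContinuousLinearMap.ext_iff.1 (hl u) (Finv v x)
    simp only [ContinuousLinearMap.coe_comp', Function.comp_apply,
      ContinuousLinearMap.sub_apply, map_sub, h1, h2]
  have hbu : ‖Finv u‖ ≤ a * R + b := le_trans (hinv_bound u) (by nlinarith)
  have hbv : ‖Finv v‖ ≤ a * R + b := le_trans (hinv_bound v) (by nlinarith)
  have hf' : ‖F' v - F' u‖ ≤ K * ‖u - v‖ := by
    rw [norm_sub_rev]
    exact hK u v hu hv
  calc ‖Finv u - Finv v‖ = ‖((Finv u).comp (F' v - F' u)).comp (Finv v)‖ := by rw [key]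
    _ ≤ ‖(Finv u).comp (F' v - F' u)‖ * ‖Finv v‖ := ContinuousLinearMap.opNorm_comp_le _ _
    _ ≤ (‖Finv u‖ * ‖F' v - F' u‖) * ‖Finv v‖ := by
        gcongr
        exact ContinuousLinearMap.opNorm_comp_le _ _
    _ ≤ ((a*R+b) * (K * ‖u - v‖)) * (a*R+b) := by
        have h3 : 0 ≤ ‖Finv u‖ := norm_nonneg _
        have h4 : 0 ≤ ‖F' v - F' u‖ := norm_nonneg _
        have h5 : 0 ≤ ‖Finv v‖ := norm_nonneg _
        have h6 : 0 ≤ ‖u - v‖ := norm_nonneg _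
        have h7 : ‖Finv u‖ * ‖F' v - F' u‖ ≤ (a*R+b) * (K * ‖u - v‖) :=
          mul_le_mul hbu hf' h4 hq.le
        have h8 : 0 ≤ (a*R+b) * (K * ‖u - v‖) := by positivity
        exact mul_le_mul h7 hbv h5 h8
    _ = ((a*R+b)^2 * K) * ‖u - v‖ := by ring

include hF' hl hr hinv_bound ha hb in
theorem chart [Nontrivial H]
    (f'lip : ∀ R : ℝ, 0 ≤ R → ∃ K, 0 ≤ K ∧
      ∀ u v : H, ‖u‖ ≤ R → ‖v‖ ≤ R → ‖F' u - F' v‖ ≤ K * ‖u - v‖)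
    (hstrict : ∀ u, HasStrictFDerivAt F (F' u) u) :
    ∀ R : ℝ, 0 ≤ R → ∃ ρ > (0:ℝ), ∀ u₀ : H, ‖u₀‖ ≤ R → ∃ Φ : OpenPartialHomeomorph H H,
      (∀ x, Φ x = F x) ∧ u₀ ∈ Φ.source ∧ IsOpen Φ.source ∧
      InjOn F Φ.source ∧ closedBall (F u₀) ρ ⊆ Φ.target := by
  intro R hR
  set q : ℝ := a * R + b with hqdef
  have hq : 0 < q := by nlinarith
  obtain ⟨K₀, hK₀0, hK₀⟩ := f'lip (R + 1) (by linarith)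
  set K : ℝ := max K₀ 1 with hKdef
  have hK1 : (1:ℝ) ≤ K := le_max_right _ _
  have hKpos : (0:ℝ) < K := lt_of_lt_of_le one_pos hK1
  set r : ℝ := min 1 (1 / (2 * K * q)) with hrdef
  have hrpos : 0 < r := lt_min one_pos (by positivity)
  have hr1 : r ≤ 1 := min_le_left _ _
  have hKr : K * r ≤ 1 / (2 * q) := by
    have : r ≤ 1 / (2 * K * q) := min_le_right _ _
    calc K * r ≤ K * (1 / (2 * K * q)) := by nlinarith
      _ = 1 / (2 * q) := by field_simp
  refine ⟨r / (8 * q), by positivity, fun u₀ hu₀ => ?_⟩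
  set E : H ≃L[ℝ] H := cle' hl hr u₀ with hEdef
  have hEcoe : (E : H →L[ℝ] H) = F' u₀ := rfl
  have hEsymm : (E.symm : H →L[ℝ] H) = Finv u₀ := by
    rw [hEdef, cle']; rfl
  set N : NNReal := ‖(E.symm : H →L[ℝ] H)‖₊ with hNdef
  have hNq : (N : ℝ) ≤ q := by
    rw [hNdef, coe_nnnorm, hEsymm]
    calc ‖Finv u₀‖ ≤ a * ‖u₀‖ + b := hinv_bound u₀
      _ ≤ q := by nlinarith
  have hNpos : (0:ℝ) < N := by
    rw [hNdef, coe_nnnorm, hEsymm]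
    have hne : Finv u₀ ≠ 0 := by
      intro h0
      obtain ⟨x, hx⟩ := exists_ne (0 : H)
      have hinv : Finv u₀ (F' u₀ x) = x := by
        simpa using ContinuousLinearMap.ext_iff.1 (hl u₀) x
      rw [h0] at hinv
      simp at hinv
      exact hx hinv.symm
    exact norm_pos_iff.2 hne
  set cR : ℝ := K * r with hcRdef
  have hcRpos : 0 < cR := by positivity
  set c : NNReal := cR.toNNReal with hcdef
  have hccoe : (c : ℝ) = cR := Real.coe_toNNReal _ hcRpos.le
  have hcN : c < N⁻¹ := by
    rw [← NNReal.coe_lt_coe, hccoe, NNReal.coe_inv]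
    have h1 : cR ≤ 1 / (2*q) := hKr
    have h2 : 1 / (2*q) < 1 / q := by
      apply div_lt_div_of_pos_left one_pos hq
      linarith
    have h3 : 1 / q ≤ 1 / (N:ℝ) := one_div_le_one_div_of_le hNpos hNq
    rw [← one_div]
    linarith
  have happrox : ApproximatesLinearOn F (E : H →L[ℝ] H) (ball u₀ r) c := by
    intro x hx y hy
    rw [hEcoe, hccoe]
    refine Convex.norm_image_sub_le_of_norm_hasFDerivWithin_le'
      (f := F) (f' := F') (φ := F' u₀) (s := ball u₀ r) (C := cR)
      (fun z _ => (hF' z).hasFDerivWithinAt)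
      (fun z hz => ?_) (convex_ball _ _) hy hx
    have hzu : ‖z - u₀‖ < r := mem_ball_iff_norm.1 hz
    have hz1 : ‖z‖ ≤ R + 1 := by
      have := norm_sub_norm_le z u₀
      linarith
    calc ‖F' z - F' u₀‖ ≤ K₀ * ‖z - u₀‖ := hK₀ z u₀ hz1 (by linarith)
      _ ≤ K * r := by
          have hK₀K : K₀ ≤ K := le_max_left _ _
          nlinarith [norm_nonneg (z - u₀)]
      _ = cR := rfl
  have hsub : closedBall u₀ (r/2) ⊆ ball u₀ r := closedBall_subset_ball (by linarith)
  have htar := happrox.closedBall_subset_target (Or.inr hcN) isOpen_ball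
    (by positivity : (0:ℝ) ≤ r/2) hsub
  refine ⟨happrox.toOpenPartialHomeomorph F (ball u₀ r) (Or.inr hcN) isOpen_ball,
    fun x => rfl, ?_, ?_, ?_, ?_⟩
  · rw [ApproximatesLinearOn.toOpenPartialHomeomorph_source]
    exact mem_ball_self hrpos
  · exact (happrox.toOpenPartialHomeomorph F (ball u₀ r) (Or.inr hcN) isOpen_ball).open_source
  · have h := (happrox.toOpenPartialHomeomorph F (ball u₀ r) (Or.inr hcN) isOpen_ball).injOn
    rwa [ApproximatesLinearOn.toOpenPartialHomeomorph_coe,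
      ApproximatesLinearOn.toOpenPartialHomeomorph_source] at h
  · refine Subset.trans (closedBall_subset_closedBall ?_) htar
    show r / (8*q) ≤ (((N:NNReal)⁻¹ : NNReal) - (c:ℝ)) * (r/2)
    rw [NNReal.coe_inv, hccoe]
    have h3 : 1 / q ≤ ((N:ℝ))⁻¹ := by
      rw [← one_div]
      exact one_div_le_one_div_of_le hNpos hNq
    have h4 : 1/q - 1/(2*q) = 1/(2*q) := by
      field_simp
      norm_num
    have h7 : 1/(2*q) ≤ (N:ℝ)⁻¹ - cR := by linarith [hKr]
    rw [div_le_iff₀ (by positivity : (0:ℝ) < 8*q)]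
    have hmul : (1/(2*q))*((r/2)*(8*q)) ≤ ((N:ℝ)⁻¹ - cR)*((r/2)*(8*q)) :=
      mul_le_mul_of_nonneg_right h7 (by positivity)
    have hcancel : (1/(2*q)) * (2*q) = 1 := one_div_mul_cancel (by positivity)
    have hring : (1/(2*q))*((r/2)*(8*q)) = (1/(2*q)*(2*q))*(2*r) := by ring
    rw [hcancel, one_mul] at hring
    have : ((N:ℝ)⁻¹ - cR)*((r/2)*(8*q)) = ((N:ℝ)⁻¹ - cR)*(r/2)*(8*q) := by ring
    linarith [this ▸ hmul]

include hl hr hstrict in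
theorem lift_deriv {c : H} {T : ℝ} {u : ℝ → H}
    (hu : ContinuousOn u (Icc 0 T)) (hFu : ∀ s ∈ Icc (0:ℝ) T, F (u s) = F 0 + s • c)
    {t : ℝ} (ht : t ∈ Icc (0:ℝ) T) :
    HasDerivWithinAt u (Finv (u t) c) (Icc 0 T) t := by
  set E : H ≃L[ℝ] H := cle' hl hr (u t) with hEdef
  have hst : HasStrictFDerivAt F (E : H →L[ℝ] H) (u t) := hstrict (u t)
  set g : H → H := hst.localInverse F E (u t) with hgdef
  have hg : HasStrictFDerivAt g ((E.symm : H →L[ℝ] H)) (F (u t)) := hst.to_localInverse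
  have hseg : HasDerivAt (fun s : ℝ => F 0 + s • c) c t := by
    simpa using ((hasDerivAt_id t).smul_const c).const_add (F 0)
  have hgF : HasFDerivAt g ((E.symm : H →L[ℝ] H)) (F 0 + t • c) := by
    rw [← hFu t ht]
    exact hg.hasFDerivAt
  have hcomp : HasDerivAt (fun s : ℝ => g (F 0 + s • c)) (Finv (u t) c) t := by
    have h := hgF.comp_hasDerivAt t hseg
    have hEs : (E.symm : H →L[ℝ] H) = Finv (u t) := by
      rw [hEdef, cle']; rfl
    rwa [hEs] at h
  have heq : ∀ᶠ s in nhdsWithin t (Icc 0 T), u s = g (F 0 + s • c) := by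
    have h1 : ∀ᶠ s in nhdsWithin t (Icc 0 T), g (F (u s)) = u s :=
      (hu t ht).eventually hst.eventually_left_inverse
    have h2 : ∀ᶠ s in nhdsWithin t (Icc 0 T), s ∈ Icc (0:ℝ) T :=
      eventually_mem_nhdsWithin
    filter_upwards [h1, h2] with s hs1 hs2
    rw [← hs1, hFu s hs2]
  have hpt : u t = g (F 0 + t • c) := by
    rw [← hFu t ht]
    exact (hst.localInverse_apply_image).symm
  exact hcomp.hasDerivWithinAt.congr_of_eventuallyEq heq hpt

theorem deriv_Ici {T t : ℝ} {u : ℝ → H} {d : H} (ht : t ∈ Ico (0:ℝ) T)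
    (h : HasDerivWithinAt u d (Icc 0 T) t) : HasDerivWithinAt u d (Ici t) t := by
  apply h.mono_of_mem_nhdsWithin
  rw [mem_nhdsWithin]
  exact ⟨Iio T, isOpen_Iio, ht.2, fun x hx => ⟨le_trans ht.1 hx.2, le_of_lt hx.1⟩⟩

-- assume as hypotheses the previously proven lemmas
variable (gb_mono : ∀ {K ε t : ℝ}, 0 ≤ K → 0 ≤ ε → t ≤ 1 →
    gronwallBound 0 K ε t ≤ gronwallBound 0 K ε 1)
variable (LD : ∀ {c : H} {T : ℝ} {u : ℝ → H},
    ContinuousOn u (Icc 0 T) → (∀ s ∈ Icc (0:ℝ) T, F (u s) = F 0 + s • c) →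
    ∀ {t : ℝ}, t ∈ Icc (0:ℝ) T → HasDerivWithinAt u (Finv (u t) c) (Icc 0 T) t)
variable (DI : ∀ {T t : ℝ} {u : ℝ → H} {d : H}, t ∈ Ico (0:ℝ) T →
    HasDerivWithinAt u d (Icc 0 T) t → HasDerivWithinAt u d (Ici t) t)
variable (hinv_bound : ∀ u : H, ‖Finv u‖ ≤ a * ‖u‖ + b)
variable (ha : 0 ≤ a) (hb : 0 < b)

include gb_mono LD DI hinv_bound ha hb in
theorem lift_bound {c : H} {C T : ℝ} (hT : T ≤ 1) (hC : ‖c‖ ≤ C)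
    {u : ℝ → H} (hu : IsLift F c T u) :
    ∀ t ∈ Icc (0:ℝ) T, ‖u t‖ ≤ gronwallBound 0 (a*C) (b*C) 1 := by
  have hC0 : 0 ≤ C := le_trans (norm_nonneg c) hC
  intro t ht
  have key := norm_le_gronwallBound_of_norm_deriv_right_le
      (f := u) (f' := fun s => Finv (u s) c) (δ := 0) (K := a*C) (ε := b*C) (a := 0) (b := T)
      hu.1 (fun x hx => DI hx (LD hu.1 hu.2.2 (Ico_subset_Icc_self hx)))
      (by simp [hu.2.1]) ?_ t ht
  · calc ‖u t‖ ≤ gronwallBound 0 (a*C) (b*C) (t - 0) := key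
      _ ≤ gronwallBound 0 (a*C) (b*C) 1 := by
          rw [sub_zero]
          exact gb_mono (by positivity) (by positivity) (le_trans ht.2 hT)
  · intro x hx
    have h1 : ‖Finv (u x) c‖ ≤ ‖Finv (u x)‖ * ‖c‖ := (Finv (u x)).le_opNorm c
    have h2 : ‖Finv (u x)‖ ≤ a * ‖u x‖ + b := hinv_bound (u x)
    have h3 : (0:ℝ) ≤ a * ‖u x‖ + b := le_trans (norm_nonneg _) h2
    have h4 : ‖Finv (u x)‖ * ‖c‖ ≤ (a * ‖u x‖ + b) * C :=
      mul_le_mul h2 hC (norm_nonneg _) h3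
    calc ‖Finv (u x) c‖ ≤ (a * ‖u x‖ + b) * C := le_trans h1 h4
      _ = a * C * ‖u x‖ + b * C := by ring
      _ ≤ a * C * ‖u x‖ + b * C := le_refl _

include gb_mono LD DI hinv_bound ha hb in
theorem lift_comp {c c' : H} {T R K : ℝ} (hT : T ≤ 1) (hR0 : 0 ≤ R) (hK0 : 0 ≤ K)
    {u v : ℝ → H} (hu : IsLift F c T u) (hv : IsLift F c' T v)
    (hRu : ∀ t ∈ Icc (0:ℝ) T, ‖u t‖ ≤ R) (hRv : ∀ t ∈ Icc (0:ℝ) T, ‖v t‖ ≤ R)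
    (hK : ∀ x y : H, ‖x‖ ≤ R → ‖y‖ ≤ R → ‖Finv x - Finv y‖ ≤ K * ‖x - y‖) :
    ∀ t ∈ Icc (0:ℝ) T, ‖u t - v t‖ ≤
      gronwallBound 0 (K*‖c‖) ((a*R+b)*‖c - c'‖) 1 := by
  intro t ht
  have hq0 : (0:ℝ) ≤ a*R + b := by nlinarith
  have key := norm_le_gronwallBound_of_norm_deriv_right_le
      (f := fun s => u s - v s) (f' := fun s => Finv (u s) c - Finv (v s) c')
      (δ := 0) (K := K*‖c‖) (ε := (a*R+b)*‖c - c'‖) (a := 0) (b := T)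
      (hu.1.sub hv.1)
      (fun x hx => DI hx (((LD hu.1 hu.2.2 (Ico_subset_Icc_self hx)).sub
        (LD hv.1 hv.2.2 (Ico_subset_Icc_self hx)))))
      (by simp [hu.2.1, hv.2.1]) ?_ t ht
  · calc ‖u t - v t‖ ≤ gronwallBound 0 (K*‖c‖) ((a*R+b)*‖c - c'‖) (t - 0) := key
      _ ≤ _ := by
          rw [sub_zero]
          exact gb_mono (by positivity) (by positivity) (le_trans ht.2 hT)
  · intro x hx
    have hxI : x ∈ Icc (0:ℝ) T := Ico_subset_Icc_self hx
    have hsplit : Finv (u x) c - Finv (v x) c'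
        = (Finv (u x) - Finv (v x)) c + Finv (v x) (c - c') := by
      simp only [ContinuousLinearMap.sub_apply, map_sub]
      abel
    rw [hsplit]
    have h1 : ‖(Finv (u x) - Finv (v x)) c‖ ≤ (K * ‖u x - v x‖) * ‖c‖ := by
      refine le_trans ((Finv (u x) - Finv (v x)).le_opNorm c) ?_
      exact mul_le_mul_of_nonneg_right (hK _ _ (hRu x hxI) (hRv x hxI)) (norm_nonneg c)
    have h2 : ‖Finv (v x) (c - c')‖ ≤ (a*R+b) * ‖c - c'‖ := by
      refine le_trans ((Finv (v x)).le_opNorm _) ?_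
      apply mul_le_mul_of_nonneg_right ?_ (norm_nonneg _)
      refine le_trans (hinv_bound (v x)) ?_
      have := hRv x hxI
      nlinarith
    calc ‖(Finv (u x) - Finv (v x)) c + Finv (v x) (c - c')‖
        ≤ ‖(Finv (u x) - Finv (v x)) c‖ + ‖Finv (v x) (c - c')‖ := norm_add_le _ _
      _ ≤ (K * ‖u x - v x‖) * ‖c‖ + (a*R+b) * ‖c - c'‖ := add_le_add h1 h2
      _ = K * ‖c‖ * ‖u x - v x‖ + (a*R+b) * ‖c - c'‖ := by ring

variable (gb_nonneg : ∀ {K ε t : ℝ}, 0 ≤ K → 0 ≤ ε → 0 ≤ t → 0 ≤ gronwallBound 0 K ε t)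
variable (CH : ∀ R : ℝ, 0 ≤ R → ∃ ρ > (0:ℝ), ∀ u₀ : H, ‖u₀‖ ≤ R →
    ∃ Φ : OpenPartialHomeomorph H H, (∀ x, Φ x = F x) ∧ u₀ ∈ Φ.source ∧ IsOpen Φ.source ∧
      InjOn F Φ.source ∧ closedBall (F u₀) ρ ⊆ Φ.target)
variable (LB : ∀ {c : H} {C T : ℝ}, T ≤ 1 → ‖c‖ ≤ C → ∀ {u : ℝ → H}, IsLift F c T u →
    ∀ t ∈ Icc (0:ℝ) T, ‖u t‖ ≤ gronwallBound 0 (a*C) (b*C) 1)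
variable (ha : 0 ≤ a) (hb : 0 < b)

include gb_nonneg CH LB ha hb in
theorem lift_exists (c : H) : ∃ u : ℝ → H, IsLift F c 1 u := by
  set C : ℝ := ‖c‖ with hCdef
  have hC0 : 0 ≤ C := norm_nonneg c
  set R : ℝ := gronwallBound 0 (a*C) (b*C) 1 with hRdef
  have hR0 : 0 ≤ R := gb_nonneg (by positivity) (by positivity) zero_le_one
  obtain ⟨ρ, hρ, hchart⟩ := CH R hR0
  set η : ℝ := ρ / (C + 1) with hηdef
  have hη : 0 < η := by positivity
  -- one step of extension
  have step : ∀ t₀ ∈ Icc (0:ℝ) 1, (∃ u, IsLift F c t₀ u) →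
      ∃ u, IsLift F c (min (t₀ + η) 1) u := by
    rintro t₀ ht₀ ⟨u, hu⟩
    have hu₀R : ‖u t₀‖ ≤ R :=
      LB ht₀.2 (le_refl C) hu t₀ ⟨ht₀.1, le_refl t₀⟩
    obtain ⟨Φ, hΦF, hΦs, hΦo, hΦinj, hΦt⟩ := hchart (u t₀) hu₀R
    set T' : ℝ := min (t₀ + η) 1 with hT'def
    have hT'1 : T' ≤ 1 := min_le_right _ _
    have ht₀T' : t₀ ≤ T' := le_min (by linarith) ht₀.2
    have hFt₀ : F (u t₀) = F 0 + t₀ • c := hu.2.2 t₀ ⟨ht₀.1, le_refl t₀⟩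
    have hseg : ∀ s ∈ Icc t₀ T', F 0 + s • c ∈ Φ.target := by
      intro s hs
      apply hΦt
      rw [mem_closedBall, hFt₀, dist_eq_norm]
      have he : (F 0 + s • c) - (F 0 + t₀ • c) = (s - t₀) • c := by
        rw [sub_smul]; abel
      rw [he, norm_smul, Real.norm_eq_abs]
      have h1 : |s - t₀| ≤ η := by
        rw [abs_le]
        constructor
        · linarith [hs.1]
        · have := hs.2
          have h2 : T' ≤ t₀ + η := min_le_left _ _
          linarith
      calc |s - t₀| * ‖c‖ ≤ η * C := by
            apply mul_le_mul h1 (le_refl _) (norm_nonneg c) hη.le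
        _ ≤ ρ := by
            rw [hηdef, div_mul_eq_mul_div, div_le_iff₀ (by positivity)]
            nlinarith
    have hsetp : {s : ℝ | s ≤ t₀} = Iic t₀ := rfl
    have hsetn : {s : ℝ | ¬ s ≤ t₀} = Ioi t₀ := by
      ext x; simp [not_le]
    refine ⟨fun s => if s ≤ t₀ then u s else Φ.symm (F 0 + s • c), ?_, ?_, ?_⟩
    · -- continuity
      apply ContinuousOn.if
      · -- frontier
        intro s hs
        have hfr : s = t₀ := by
          have := hs.2
          rw [hsetp, frontier_Iic] at this
          exact this
        subst hfr
        have hli := Φ.left_inv hΦs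
        rw [hΦF] at hli
        rw [← hFt₀]
        exact hli.symm
      · -- ContinuousOn u
        apply hu.1.mono
        intro x hx
        rw [hsetp, isClosed_Iic.closure_eq] at hx
        exact ⟨hx.1.1, hx.2⟩
      · -- ContinuousOn of the extension
        have hsub2 : Icc 0 T' ∩ closure {s : ℝ | ¬ s ≤ t₀} ⊆ Icc t₀ T' := by
          intro x hx
          rw [hsetn, closure_Ioi] at hx
          exact ⟨hx.2, hx.1.2⟩
        apply ContinuousOn.mono ?_ hsub2
        apply Φ.continuousOn_symm.comp
        · exact (continuous_const.add (continuous_id.smul continuous_const)).continuousOn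
        · intro x hx
          exact hseg x hx
    · simp only [if_pos ht₀.1]
      exact hu.2.1
    · intro s hs
      by_cases h : s ≤ t₀
      · simp only [if_pos h]
        exact hu.2.2 s ⟨hs.1, h⟩
      · simp only [if_neg h]
        push_neg at h
        have hri := Φ.right_inv (hseg s ⟨h.le, hs.2⟩)
        rwa [hΦF] at hri
  -- induction
  have main : ∀ n : ℕ, ∃ u, IsLift F c (min ((n:ℝ) * η) 1) u := by
    intro n
    induction n with
    | zero =>
        refine ⟨fun _ => 0, continuousOn_const, rfl, ?_⟩
        intro s hs
        rw [Nat.cast_zero, zero_mul, min_eq_left zero_le_one, Icc_self,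
          mem_singleton_iff] at hs
        subst hs
        simp
    | succ n ih =>
        obtain ⟨u, hu⟩ := ih
        have h1 : min ((n:ℝ)*η) 1 ∈ Icc (0:ℝ) 1 :=
          ⟨le_min (by positivity) zero_le_one, min_le_right _ _⟩
        obtain ⟨v, hv⟩ := step _ h1 ⟨u, hu⟩
        have hle : min ((((n:ℕ):ℝ)+1)*η) 1 ≤ min (min ((n:ℝ)*η) 1 + η) 1 := by
          rcases le_total ((n:ℝ)*η) 1 with h | h
          · rw [min_eq_left h]
            have he : (((n:ℕ):ℝ)+1)*η = (n:ℝ)*η + η := by ring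
            rw [he]
          · rw [min_eq_right h]
            exact le_trans (min_le_right _ _) (le_min (by linarith) (le_refl 1))
        have hcast : ((n+1:ℕ):ℝ) = ((n:ℕ):ℝ) + 1 := by push_cast; ring
        rw [hcast]
        exact ⟨v, hv.1.mono (Icc_subset_Icc_right hle), hv.2.1,
          fun s hs => hv.2.2 s (Icc_subset_Icc_right hle hs)⟩
  obtain ⟨n, hn⟩ := exists_nat_ge (1/η)
  obtain ⟨u, hu⟩ := main n
  have hmin : min ((n:ℝ)*η) 1 = 1 := by
    apply min_eq_right
    rw [div_le_iff₀ hη] at hn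
    nlinarith
  rw [hmin] at hu
  exact ⟨u, hu⟩


end DSMHadamard

/-- Hadamard-type theorem. If `F : H → H` is twice Fréchet
differentiable, with bounds `‖F'(u)‖ ≤ M₁(R)`, `‖F''(u)‖ ≤ M₂(R)` on each ball
`{‖u‖ ≤ R}`, and `F'(u)` is boundedly invertible with `‖[F'(u)]⁻¹‖ ≤ a‖u‖ + b`
for all `u` (`a ≥ 0`, `b > 0`), then `F` is a homeomorphism of `H` onto `H`. -/
theorem dsm_global_homeomorphism
    {H : Type*} [NormedAddCommGroup H] [InnerProductSpace ℝ H] [CompleteSpace H]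
    (F : H → H) (F' : H → H →L[ℝ] H) (F'' : H → H →L[ℝ] H →L[ℝ] H)
    (Finv : H → H →L[ℝ] H)
    (hF' : ∀ u, HasFDerivAt F (F' u) u)
    (hF'' : ∀ u, HasFDerivAt F' (F'' u) u)
    (hM : ∀ R > (0:ℝ), ∃ M₁ M₂ : ℝ, ∀ u : H, ‖u‖ ≤ R → ‖F' u‖ ≤ M₁ ∧ ‖F'' u‖ ≤ M₂)
    (a b : ℝ) (ha : 0 ≤ a) (hb : 0 < b)
    (hinv_left : ∀ u, (Finv u).comp (F' u) = ContinuousLinearMap.id ℝ H)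
    (hinv_right : ∀ u, (F' u).comp (Finv u) = ContinuousLinearMap.id ℝ H)
    (hinv_bound : ∀ u : H, ‖Finv u‖ ≤ a * ‖u‖ + b) :
    ∃ e : H ≃ₜ H, ⇑e = F := by
  rcases subsingleton_or_nontrivial H with hsub | hnt
  · exact ⟨Homeomorph.refl H, funext fun x => Subsingleton.elim _ _⟩
  -- main case
  have hstrict : ∀ u, HasStrictFDerivAt F (F' u) u := DSMHadamard.strictF hF' hF''
  have hFc : Continuous F := continuous_iff_continuousAt.2 fun u => (hF' u).continuousAt
  have hf'lip := DSMHadamard.f'lip hF'' hM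
  have hfinvlip := DSMHadamard.finvlip hF'' hM hinv_left hinv_right hinv_bound ha hb
  have hCH := DSMHadamard.chart hF' hinv_left hinv_right hinv_bound ha hb hf'lip hstrict
  have hLD : ∀ {c : H} {T : ℝ} {u : ℝ → H},
      ContinuousOn u (Icc 0 T) → (∀ s ∈ Icc (0:ℝ) T, F (u s) = F 0 + s • c) →
      ∀ {t : ℝ}, t ∈ Icc (0:ℝ) T → HasDerivWithinAt u (Finv (u t) c) (Icc 0 T) t :=
    fun {c T u} hc hFu {t} ht => DSMHadamard.lift_deriv hinv_left hinv_right hstrict hc hFu ht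
  have hDI : ∀ {T t : ℝ} {u : ℝ → H} {d : H}, t ∈ Ico (0:ℝ) T →
      HasDerivWithinAt u d (Icc 0 T) t → HasDerivWithinAt u d (Ici t) t :=
    fun {T t u d} ht h => DSMHadamard.deriv_Ici ht h
  have hGBm : ∀ {K ε t : ℝ}, 0 ≤ K → 0 ≤ ε → t ≤ 1 →
      gronwallBound 0 K ε t ≤ gronwallBound 0 K ε 1 :=
    fun {K ε t} h1 h2 h3 => DSMHadamard.gb_mono h1 h2 h3
  have hGBn : ∀ {K ε t : ℝ}, 0 ≤ K → 0 ≤ ε → 0 ≤ t → 0 ≤ gronwallBound 0 K ε t :=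
    fun {K ε t} h1 h2 h3 => DSMHadamard.gb_nonneg h1 h2 h3
  have hLB : ∀ {c : H} {C T : ℝ}, T ≤ 1 → ‖c‖ ≤ C → ∀ {u : ℝ → H},
      DSMHadamard.IsLift F c T u →
      ∀ t ∈ Icc (0:ℝ) T, ‖u t‖ ≤ gronwallBound 0 (a*C) (b*C) 1 :=
    fun {c C T} hT hC {u} hu => DSMHadamard.lift_bound hinv_bound ha hb (fun {K ε t} h1 h2 h3 => hGBm h1 h2 h3)
      (fun {c T u} hc hFu {t} ht => hLD hc hFu ht)
      (fun {T t u d} h1 h2 => hDI h1 h2) hT hC hu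
  have hLC : ∀ {c c' : H} {T R K : ℝ}, T ≤ 1 → 0 ≤ R → 0 ≤ K →
      ∀ {u v : ℝ → H}, DSMHadamard.IsLift F c T u → DSMHadamard.IsLift F c' T v →
      (∀ t ∈ Icc (0:ℝ) T, ‖u t‖ ≤ R) → (∀ t ∈ Icc (0:ℝ) T, ‖v t‖ ≤ R) →
      (∀ x y : H, ‖x‖ ≤ R → ‖y‖ ≤ R → ‖Finv x - Finv y‖ ≤ K * ‖x - y‖) →
      ∀ t ∈ Icc (0:ℝ) T, ‖u t - v t‖ ≤
        gronwallBound 0 (K*‖c‖) ((a*R+b)*‖c - c'‖) 1 :=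
    fun {c c' T R K} hT hR0 hK0 {u v} hu hv hRu hRv hK =>
      DSMHadamard.lift_comp hinv_bound ha hb (fun {K ε t} h1 h2 h3 => hGBm h1 h2 h3)
      (fun {c T u} hc hFu {t} ht => hLD hc hFu ht)
      (fun {T t u d} h1 h2 => hDI h1 h2) hT hR0 hK0 hu hv hRu hRv hK
  have hex : ∀ c : H, ∃ u : ℝ → H, DSMHadamard.IsLift F c 1 u :=
    DSMHadamard.lift_exists ha hb (fun {K ε t} h1 h2 h3 => hGBn h1 h2 h3) hCH
      (fun {c C T} hT hC {u} hu => hLB hT hC hu)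
  choose lift hlift using hex
  set G : H → H := fun y => lift (y - F 0) 1 with hGdef
  have hFG : ∀ y, F (G y) = y := by
    intro y
    have h := (hlift (y - F 0)).2.2 1 ⟨zero_le_one, le_refl 1⟩
    rw [hGdef]
    simpa using h
  -- uniqueness of lifts at any time
  have huniq : ∀ (c : H) (u v : ℝ → H), DSMHadamard.IsLift F c 1 u →
      DSMHadamard.IsLift F c 1 v → ∀ t ∈ Icc (0:ℝ) 1, u t = v t := by
    intro c u v hu hv t ht
    set C : ℝ := ‖c‖ with hCdef
    have hC0 : (0:ℝ) ≤ C := norm_nonneg c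
    set R : ℝ := gronwallBound 0 (a*C) (b*C) 1 with hRdef
    have hR0 : 0 ≤ R := hGBn (by positivity) (by positivity) zero_le_one
    obtain ⟨K, hK0, hK⟩ := hfinvlip R hR0
    have hcomp := hLC (le_refl (1:ℝ)) hR0 hK0 hu hv
      (hLB (le_refl 1) (le_refl C) hu) (hLB (le_refl 1) (le_refl C) hv) hK t ht
    rw [sub_self, norm_zero, mul_zero, gronwallBound_ε0, zero_mul] at hcomp
    have h0 := le_antisymm hcomp (norm_nonneg _)
    rwa [norm_eq_zero, sub_eq_zero] at h0
  have hG0 : G (F 0) = 0 := by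
    have hz : DSMHadamard.IsLift F (F 0 - F 0) 1 (fun _ => (0:H)) :=
      ⟨continuousOn_const, rfl, by simp⟩
    have h := huniq (F 0 - F 0) _ _ (hlift (F 0 - F 0)) hz 1 ⟨zero_le_one, le_refl 1⟩
    simpa [hGdef] using h
  -- continuity of G
  have hGcont : Continuous G := by
    rw [continuous_iff_continuousAt]
    intro y₀
    set C : ℝ := ‖y₀ - F 0‖ + 1 with hCdef
    have hC0 : (0:ℝ) ≤ C := by positivity
    set R : ℝ := gronwallBound 0 (a*C) (b*C) 1 with hRdef
    have hR0 : 0 ≤ R := hGBn (by positivity) (by positivity) zero_le_one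
    obtain ⟨K, hK0, hK⟩ := hfinvlip R hR0
    set q : ℝ := a*R + b with hqdef
    have hq0 : (0:ℝ) ≤ q := by nlinarith
    set D : ℝ := q * gronwallBound 0 (K*‖y₀ - F 0‖) 1 1 with hDdef
    have hD0 : 0 ≤ D := mul_nonneg hq0 (hGBn (by positivity) zero_le_one zero_le_one)
    have hest : ∀ y : H, ‖y - y₀‖ ≤ 1 → ‖G y₀ - G y‖ ≤ D * ‖y₀ - y‖ := by
      intro y hy
      have hc₀C : ‖y₀ - F 0‖ ≤ C := by
        rw [hCdef]; linarith
      have hcC : ‖y - F 0‖ ≤ C := by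
        have he : y - F 0 = (y - y₀) + (y₀ - F 0) := by abel
        calc ‖y - F 0‖ = ‖(y - y₀) + (y₀ - F 0)‖ := by rw [← he]
          _ ≤ ‖y - y₀‖ + ‖y₀ - F 0‖ := norm_add_le _ _
          _ ≤ C := by rw [hCdef]; linarith
      have hu := hlift (y₀ - F 0)
      have hv := hlift (y - F 0)
      have hbu := hLB (le_refl (1:ℝ)) hc₀C hu
      have hbv := hLB (le_refl (1:ℝ)) hcC hv
      have hcomp := hLC (le_refl (1:ℝ)) hR0 hK0 hu hv hbu hbv hK 1 ⟨zero_le_one, le_refl 1⟩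
      rw [DSMHadamard.gb_lin] at hcomp
      have hcc : (y₀ - F 0) - (y - F 0) = y₀ - y := by abel
      rw [hcc] at hcomp
      calc ‖G y₀ - G y‖ ≤ (q * ‖y₀ - y‖) * gronwallBound 0 (K*‖y₀ - F 0‖) 1 1 := hcomp
        _ = D * ‖y₀ - y‖ := by rw [hDdef]; ring
    rw [Metric.continuousAt_iff]
    intro ε hε
    refine ⟨min 1 (ε / (D+1)), by positivity, fun y hyd => ?_⟩
    rw [dist_eq_norm] at hyd
    have h1 : ‖y - y₀‖ ≤ 1 := le_of_lt (lt_of_lt_of_le hyd (min_le_left _ _))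
    have h2 : ‖y - y₀‖ < ε / (D+1) := lt_of_lt_of_le hyd (min_le_right _ _)
    have h3 := hest y h1
    rw [dist_eq_norm, ← norm_sub_rev (G y₀)]
    have h4 : ‖y₀ - y‖ = ‖y - y₀‖ := norm_sub_rev _ _
    rw [h4] at h3
    have h5 : ‖y - y₀‖ * (D+1) < ε := by
      rw [← lt_div_iff₀ (by positivity)]
      exact h2
    nlinarith [norm_nonneg (y - y₀)]
  -- G ∘ F = id via connectedness
  have hGF : ∀ u : H, G (F u) = u := by
    have hclopen : IsClopen {u : H | G (F u) = u} := by
      constructor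
      · exact isClosed_eq (hGcont.comp hFc) continuous_id
      · rw [Metric.isOpen_iff]
        intro u₀ hu₀
        obtain ⟨ρ, hρ, hch⟩ := hCH ‖u₀‖ (norm_nonneg u₀)
        obtain ⟨Φ, hΦF, hΦs, hΦo, hΦinj, hΦt⟩ := hch u₀ (le_refl _)
        obtain ⟨δ₁, hδ₁, hball₁⟩ := Metric.isOpen_iff.1 hΦo u₀ hΦs
        have hcGF : ContinuousAt (fun u => G (F u)) u₀ := (hGcont.comp hFc).continuousAt
        have hmem : ball u₀ δ₁ ∈ nhds ((fun u => G (F u)) u₀) := by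
          have : (fun u => G (F u)) u₀ = u₀ := hu₀
          rw [this]
          exact ball_mem_nhds _ hδ₁
        have hpre := hcGF hmem
        obtain ⟨δ₂, hδ₂, hsub₂⟩ := Metric.mem_nhds_iff.1 hpre
        refine ⟨min δ₁ δ₂, lt_min hδ₁ hδ₂, fun x hx => ?_⟩
        have hx₁ : x ∈ ball u₀ δ₁ := ball_subset_ball (min_le_left _ _) hx
        have hx₂ : x ∈ ball u₀ δ₂ := ball_subset_ball (min_le_right _ _) hx
        have hGFx : G (F x) ∈ ball u₀ δ₁ := hsub₂ hx₂
        have hFeq : F (G (F x)) = F x := hFG (F x)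
        exact hΦinj (hball₁ hGFx) (hball₁ hx₁) hFeq
    have huniv := hclopen.eq_univ ⟨0, hG0⟩
    intro u
    have : u ∈ {u : H | G (F u) = u} := huniv ▸ mem_univ u
    exact this
  exact ⟨{ toFun := F, invFun := G, left_inv := hGF, right_inv := hFG,
           continuous_toFun := hFc, continuous_invFun := hGcont }, rfl⟩
end

section
/- Let H be a real Hilbert space and let F : H → H be twice Fréchet differentiable. Suppose that for every R > 0 there exist constants M₁(R), M₂(R) such that ‖F′(u)‖ ≤ M₁(R) and ‖F″(u)‖ ≤ M₂(R) for all u with ‖u‖ ≤ R, and suppose there exist constants a ≥ 0 and b > 0 such that for every u ∈ H the derivative F′(u) is boundedly invertible with ‖[F′(u)]⁻¹‖ ≤ a‖u‖ + b. Then F is injective: F(u) = F(v) implies u = v. -/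
open Set Metric

section helpers

lemma gronwallBound_le_of_mem {δ K ε x : ℝ} (hδ : 0 ≤ δ) (hK : 0 ≤ K) (hε : 0 ≤ ε)
    (hx0 : 0 ≤ x) (hx1 : x ≤ 1) : gronwallBound δ K ε x ≤ (δ + ε) * Real.exp K := by
  rcases eq_or_lt_of_le hK with hK0 | hKpos
  · rw [← hK0, gronwallBound_K0]
    rw [Real.exp_zero, mul_one]
    show δ + ε * x ≤ δ + ε
    nlinarith
  · rw [gronwallBound_of_K_ne_0 hKpos.ne']
    set y := K * x with hy
    have hy0 : 0 ≤ y := by positivity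
    have hyK : y ≤ K := by nlinarith
    have hexp_le : Real.exp y ≤ Real.exp K := Real.exp_le_exp.mpr hyK
    have h1 : Real.exp y - 1 ≤ y * Real.exp y := by
      have h := Real.add_one_le_exp (-y)
      have h2 : Real.exp (-y) * Real.exp y = 1 := by
        rw [← Real.exp_add]; simp
      nlinarith [Real.exp_pos y]
    have h2 : ε / K * (Real.exp y - 1) ≤ ε * Real.exp K := by
      have h3 : ε / K * (Real.exp y - 1) ≤ ε / K * (y * Real.exp y) := by
        apply mul_le_mul_of_nonneg_left h1 (by positivity)
      have h4 : ε / K * (y * Real.exp y) = ε * x * Real.exp y := by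
        field_simp [hy]; ring
      have h5 : ε * x * Real.exp y ≤ ε * Real.exp K := by
        have := mul_le_mul (mul_le_mul_of_nonneg_left hx1 hε) hexp_le
          (Real.exp_pos y).le (by positivity : (0:ℝ) ≤ ε * 1)
        simpa [mul_comm] using this
      linarith
    have h6 : δ * Real.exp y ≤ δ * Real.exp K :=
      mul_le_mul_of_nonneg_left hexp_le hδ
    nlinarith

variable {E : Type*} [NormedAddCommGroup E] [NormedSpace ℝ E]

/-- Radial retraction onto the closed ball of radius `R`. -/
noncomputable def radProj (R : ℝ) (x : E) : E := if ‖x‖ ≤ R then x else (R / ‖x‖) • x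

lemma radProj_eq_of_le {R : ℝ} {x : E} (h : ‖x‖ ≤ R) : radProj R x = x := if_pos h

lemma radProj_norm_le {R : ℝ} (hR : 0 ≤ R) (x : E) : ‖radProj R x‖ ≤ R := by
  unfold radProj
  split_ifs with h
  · exact h
  · push_neg at h
    have hx : 0 < ‖x‖ := lt_of_le_of_lt hR h
    rw [norm_smul, Real.norm_eq_abs, abs_of_nonneg (by positivity)]
    rw [div_mul_cancel₀ _ hx.ne']

lemma radProj_norm_le_self (R : ℝ) (hR : 0 ≤ R) (x : E) : ‖radProj R x‖ ≤ ‖x‖ := by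
  unfold radProj
  split_ifs with h
  · exact le_rfl
  · push_neg at h
    have hx : 0 < ‖x‖ := lt_of_le_of_lt hR h
    rw [norm_smul, Real.norm_eq_abs, abs_of_nonneg (by positivity), div_mul_cancel₀ _ hx.ne']
    exact le_of_lt h

lemma radProj_lipschitz {R : ℝ} (hR : 0 ≤ R) : LipschitzWith 2 (radProj R : E → E) := by
  have key : ∀ x y : E, ‖y‖ ≤ ‖x‖ → ‖radProj R x - radProj R y‖ ≤ 2 * ‖x - y‖ := by
    intro x y hxy
    have hxy' : ‖x‖ - ‖y‖ ≤ ‖x - y‖ := norm_sub_norm_le x y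
    by_cases hx : ‖x‖ ≤ R
    · have hy : ‖y‖ ≤ R := hxy.trans hx
      rw [radProj_eq_of_le hx, radProj_eq_of_le hy]
      nlinarith [norm_nonneg (x - y)]
    · push_neg at hx
      have hxpos : 0 < ‖x‖ := lt_of_le_of_lt hR hx
      have hπx : radProj R x = (R / ‖x‖) • x := if_neg (not_le.mpr hx)
      by_cases hy : ‖y‖ ≤ R
      · rw [hπx, radProj_eq_of_le hy]
        have step : (R / ‖x‖) • x - y = (R / ‖x‖) • (x - y) + ((R / ‖x‖) - 1) • y := by
          rw [smul_sub, sub_smul, one_smul]; abel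
        rw [step]
        have h1 : ‖(R / ‖x‖) • (x - y)‖ ≤ ‖x - y‖ := by
          rw [norm_smul, Real.norm_eq_abs, abs_of_nonneg (by positivity)]
          have : R / ‖x‖ ≤ 1 := (div_le_one hxpos).mpr hx.le
          nlinarith [norm_nonneg (x - y)]
        have h2 : ‖((R / ‖x‖) - 1) • y‖ ≤ ‖x - y‖ := by
          rw [norm_smul, Real.norm_eq_abs]
          have hle : R / ‖x‖ ≤ 1 := (div_le_one hxpos).mpr hx.le
          rw [abs_of_nonpos (by linarith), neg_sub]
          have : (1 - R / ‖x‖) * ‖y‖ ≤ ‖x‖ - ‖y‖ := by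
            have hyx : ‖y‖ / ‖x‖ ≤ 1 := (div_le_one hxpos).mpr hxy
            have e : (1 - R / ‖x‖) * ‖y‖ = (‖x‖ - R) * (‖y‖ / ‖x‖) := by
              field_simp
              try ring
            rw [e]
            calc (‖x‖ - R) * (‖y‖ / ‖x‖) ≤ (‖x‖ - R) * 1 := by
                  apply mul_le_mul_of_nonneg_left hyx (by linarith)
              _ = ‖x‖ - R := mul_one _
              _ ≤ ‖x‖ - ‖y‖ := by linarith
          linarith
        calc ‖(R / ‖x‖) • (x - y) + ((R / ‖x‖) - 1) • y‖
            ≤ ‖(R / ‖x‖) • (x - y)‖ + ‖((R / ‖x‖) - 1) • y‖ := norm_add_le _ _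
          _ ≤ 2 * ‖x - y‖ := by linarith
      · push_neg at hy
        have hypos : 0 < ‖y‖ := lt_of_le_of_lt hR hy
        have hπy : radProj R y = (R / ‖y‖) • y := if_neg (not_le.mpr hy)
        rw [hπx, hπy]
        have step : (R / ‖x‖) • x - (R / ‖y‖) • y
            = (R / ‖x‖) • (x - y) + ((R / ‖x‖) - (R / ‖y‖)) • y := by
          rw [smul_sub, sub_smul]; abel
        rw [step]
        have h1 : ‖(R / ‖x‖) • (x - y)‖ ≤ ‖x - y‖ := by
          rw [norm_smul, Real.norm_eq_abs, abs_of_nonneg (by positivity)]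
          have : R / ‖x‖ ≤ 1 := (div_le_one hxpos).mpr hx.le
          nlinarith [norm_nonneg (x - y)]
        have h2 : ‖((R / ‖x‖) - (R / ‖y‖)) • y‖ ≤ ‖x - y‖ := by
          rw [norm_smul, Real.norm_eq_abs]
          have hle : R / ‖x‖ ≤ R / ‖y‖ := by
            exact div_le_div_of_nonneg_left hR hypos hxy
          rw [abs_of_nonpos (by linarith), neg_sub]
          have e : (R / ‖y‖ - R / ‖x‖) * ‖y‖ = (R / ‖x‖) * (‖x‖ - ‖y‖) := by
            field_simp
            try ring
          rw [e]
          have hle1 : R / ‖x‖ ≤ 1 := (div_le_one hxpos).mpr hx.le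
          calc (R / ‖x‖) * (‖x‖ - ‖y‖) ≤ 1 * (‖x‖ - ‖y‖) := by
                apply mul_le_mul_of_nonneg_right hle1 (by linarith)
            _ = ‖x‖ - ‖y‖ := one_mul _
            _ ≤ ‖x - y‖ := hxy'
        calc ‖(R / ‖x‖) • (x - y) + ((R / ‖x‖) - (R / ‖y‖)) • y‖
            ≤ ‖(R / ‖x‖) • (x - y)‖ + ‖((R / ‖x‖) - (R / ‖y‖)) • y‖ := norm_add_le _ _
          _ ≤ 2 * ‖x - y‖ := by linarith
  apply LipschitzWith.of_dist_le_mul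
  intro x y
  rcases le_total ‖y‖ ‖x‖ with h | h
  · rw [dist_eq_norm, dist_eq_norm]
    simpa using key x y h
  · rw [dist_comm, dist_eq_norm, dist_eq_norm]
    calc ‖radProj R y - radProj R x‖ ≤ 2 * ‖y - x‖ := key y x h
      _ = 2 * ‖x - y‖ := by rw [norm_sub_rev]

end helpers

set_option maxHeartbeats 2000000

/-- Under the hypotheses of the Hadamard-type theorem
(`‖F'(u)‖ ≤ M₁(R)`, `‖F''(u)‖ ≤ M₂(R)` on `{‖u‖ ≤ R}`, and
`‖[F'(u)]⁻¹‖ ≤ a‖u‖ + b` everywhere, `a ≥ 0`, `b > 0`), `F` is injective. -/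
theorem dsm_injectivity
    {H : Type*} [NormedAddCommGroup H] [InnerProductSpace ℝ H] [CompleteSpace H]
    (F : H → H) (F' : H → H →L[ℝ] H) (F'' : H → H →L[ℝ] H →L[ℝ] H)
    (Finv : H → H →L[ℝ] H)
    (hF' : ∀ u, HasFDerivAt F (F' u) u)
    (hF'' : ∀ u, HasFDerivAt F' (F'' u) u)
    (hM : ∀ R > (0:ℝ), ∃ M₁ M₂ : ℝ, ∀ u : H, ‖u‖ ≤ R → ‖F' u‖ ≤ M₁ ∧ ‖F'' u‖ ≤ M₂)
    (a b : ℝ) (ha : 0 ≤ a) (hb : 0 < b)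
    (hinv_left : ∀ u, (Finv u).comp (F' u) = ContinuousLinearMap.id ℝ H)
    (hinv_right : ∀ u, (F' u).comp (Finv u) = ContinuousLinearMap.id ℝ H)
    (hinv_bound : ∀ u : H, ‖Finv u‖ ≤ a * ‖u‖ + b) :
    Function.Injective F := by
  intro u₀ u₁ hF01
  set p : H := F u₀ with hp
  set γ : ℝ → H := fun s => u₀ + s • (u₁ - u₀) with hγ
  set w : ℝ → H := fun s => p - F (γ s) with hw
  have hγ0 : γ 0 = u₀ := by simp [hγ]
  have hγ1 : γ 1 = u₁ := by simp [hγ]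
  have hw0 : w 0 = 0 := by simp [hw, hγ0, ← hp]
  have hw1 : w 1 = 0 := by simp [hw, hγ1, ← hF01]
  set r₀ : ℝ := ‖u₀‖ + ‖u₁ - u₀‖ with hr₀
  have hr₀0 : 0 ≤ r₀ := by positivity
  have hγ_mem : ∀ s ∈ Icc (0:ℝ) 1, ‖γ s‖ ≤ r₀ := by
    intro s hs
    calc ‖γ s‖ ≤ ‖u₀‖ + ‖s • (u₁ - u₀)‖ := norm_add_le _ _
      _ = ‖u₀‖ + |s| * ‖u₁ - u₀‖ := by rw [norm_smul, Real.norm_eq_abs]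
      _ ≤ r₀ := by
          have h1 : |s| ≤ 1 := abs_le.mpr ⟨by linarith [hs.1], hs.2⟩
          nlinarith [norm_nonneg (u₁ - u₀)]
  set R₁ : ℝ := r₀ + 1 with hR₁
  have hR₁pos : 0 < R₁ := by positivity
  obtain ⟨M₁', M₂x, hM₁'⟩ := hM R₁ hR₁pos
  set M₁ : ℝ := max M₁' 0 with hM₁def
  have hM₁0 : 0 ≤ M₁ := le_max_right _ _
  have hM₁b : ∀ u : H, ‖u‖ ≤ R₁ → ‖F' u‖ ≤ M₁ :=
    fun u hu => ((hM₁' u hu).1).trans (le_max_left _ _)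
  have hFlip : ∀ x ∈ closedBall (0:H) R₁, ∀ y ∈ closedBall (0:H) R₁,
      ‖F y - F x‖ ≤ M₁ * ‖y - x‖ := by
    intro x hx y hy
    exact (convex_closedBall (0:H) R₁).norm_image_sub_le_of_norm_hasFDerivWithin_le
      (fun z _ => (hF' z).hasFDerivWithinAt)
      (fun z hz => hM₁b z (by simpa [mem_closedBall, dist_zero_right] using hz)) hx hy
  set Lw : ℝ := M₁ * ‖u₁ - u₀‖ with hLw
  have hLw0 : 0 ≤ Lw := by positivity
  have hγmem' : ∀ s ∈ Icc (0:ℝ) 1, γ s ∈ closedBall (0:H) R₁ := by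
    intro s hs
    simp only [mem_closedBall, dist_zero_right]
    linarith [hγ_mem s hs]
  have hwlip : ∀ s ∈ Icc (0:ℝ) 1, ∀ s' ∈ Icc (0:ℝ) 1, ‖w s - w s'‖ ≤ Lw * |s - s'| := by
    intro s hs s' hs'
    have h0 : w s - w s' = F (γ s') - F (γ s) := by
      simp only [hw]
      abel
    rw [h0]
    have hseg : γ s' - γ s = (s' - s) • (u₁ - u₀) := by
      simp only [hγ, sub_smul]
      abel
    calc ‖F (γ s') - F (γ s)‖ ≤ M₁ * ‖γ s' - γ s‖ := hFlip _ (hγmem' s hs) _ (hγmem' s' hs')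
      _ = Lw * |s - s'| := by
          rw [hseg, norm_smul, Real.norm_eq_abs, abs_sub_comm, hLw]
          ring
  have hwbound : ∀ s ∈ Icc (0:ℝ) 1, ‖w s‖ ≤ Lw := by
    intro s hs
    have h1 := hwlip s hs 0 (left_mem_Icc.mpr zero_le_one)
    rw [hw0, sub_zero, sub_zero] at h1
    have habs : |s| ≤ 1 := abs_le.mpr ⟨by linarith [hs.1], hs.2⟩
    nlinarith
  set B : ℝ := (r₀ + b * Lw) * Real.exp (a * Lw) with hB
  have hB0 : 0 ≤ B := by positivity
  set R : ℝ := B + R₁ with hRdef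
  have hRpos : 0 < R := by positivity
  have hR0 : (0:ℝ) ≤ R := hRpos.le
  obtain ⟨M₂x', M₂', hM₂''⟩ := hM R hRpos
  set M₂ : ℝ := max M₂' 0 with hM₂def
  have hM₂0 : 0 ≤ M₂ := le_max_right _ _
  have hM₂b : ∀ u : H, ‖u‖ ≤ R → ‖F'' u‖ ≤ M₂ :=
    fun u hu => ((hM₂'' u hu).2).trans (le_max_left _ _)
  have hF'lip : ∀ x ∈ closedBall (0:H) R, ∀ y ∈ closedBall (0:H) R,
      ‖F' y - F' x‖ ≤ M₂ * ‖y - x‖ := by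
    intro x hx y hy
    exact (convex_closedBall (0:H) R).norm_image_sub_le_of_norm_hasFDerivWithin_le
      (fun z _ => (hF'' z).hasFDerivWithinAt)
      (fun z hz => hM₂b z (by simpa [mem_closedBall, dist_zero_right] using hz)) hx hy
  have hinv_diff : ∀ x y : H,
      Finv x - Finv y = ((Finv x).comp ((F' y) - (F' x))).comp (Finv y) := by
    intro x y
    ext z
    have h1 : F' y (Finv y z) = z := by
      have h := ContinuousLinearMap.ext_iff.mp (hinv_right y) z
      simpa using h
    have h2 : Finv x (F' x (Finv y z)) = Finv y z := by
      have h := ContinuousLinearMap.ext_iff.mp (hinv_left x) (Finv y z)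
      simpa using h
    simp only [ContinuousLinearMap.sub_apply, ContinuousLinearMap.comp_apply, map_sub, h1, h2]
  set ab : ℝ := a * R + b with hab
  have hab0 : 0 < ab := by positivity
  have hFinv_le : ∀ x : H, ‖x‖ ≤ R → ‖Finv x‖ ≤ ab := by
    intro x hx
    refine (hinv_bound x).trans ?_
    have := mul_le_mul_of_nonneg_left hx ha
    linarith
  have hFinv_lip : ∀ x : H, ‖x‖ ≤ R → ∀ y : H, ‖y‖ ≤ R →
      ‖Finv x - Finv y‖ ≤ ab * ((M₂ * ‖x - y‖) * ab) := by
    intro x hx y hy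
    rw [hinv_diff x y]
    have hd : ‖F' y - F' x‖ ≤ M₂ * ‖x - y‖ := by
      have h := hF'lip x (by simpa [mem_closedBall, dist_zero_right] using hx)
        y (by simpa [mem_closedBall, dist_zero_right] using hy)
      rwa [norm_sub_rev x y]
    calc ‖((Finv x).comp ((F' y) - (F' x))).comp (Finv y)‖
        ≤ ‖(Finv x).comp ((F' y) - (F' x))‖ * ‖Finv y‖ :=
          ContinuousLinearMap.opNorm_comp_le _ _
      _ ≤ (‖Finv x‖ * ‖F' y - F' x‖) * ‖Finv y‖ :=
          mul_le_mul_of_nonneg_right (ContinuousLinearMap.opNorm_comp_le _ _) (norm_nonneg _)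
      _ ≤ (ab * (M₂ * ‖x - y‖)) * ab := by
          apply mul_le_mul _ (hFinv_le y hy) (norm_nonneg _) (by positivity)
          exact mul_le_mul (hFinv_le x hx) hd (norm_nonneg _) hab0.le
      _ = ab * ((M₂ * ‖x - y‖) * ab) := by ring
  set v : ℝ → H → H := fun s x => Finv (radProj R x) (w s) with hv
  set Lv : ℝ := 2 * (ab * (M₂ * ab)) * Lw with hLv
  have hLv0 : 0 ≤ Lv := by positivity
  set K₀ : NNReal := Real.toNNReal Lv with hK₀
  have hK₀coe : ((K₀ : NNReal) : ℝ) = Lv := Real.coe_toNNReal _ hLv0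
  have hπR : ∀ z : H, ‖radProj R z‖ ≤ R := radProj_norm_le hR0
  have hvlip : ∀ s ∈ Icc (0:ℝ) 1, LipschitzWith K₀ (v s) := by
    intro s hs
    apply LipschitzWith.of_dist_le_mul
    intro x y
    rw [dist_eq_norm, dist_eq_norm, hK₀coe]
    have h1 : v s x - v s y = (Finv (radProj R x) - Finv (radProj R y)) (w s) := by
      simp [hv, ContinuousLinearMap.sub_apply]
    rw [h1]
    have h2 : ‖radProj R x - radProj R y‖ ≤ 2 * ‖x - y‖ := by
      have h := (radProj_lipschitz hR0).dist_le_mul x y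
      simpa [dist_eq_norm] using h
    calc ‖(Finv (radProj R x) - Finv (radProj R y)) (w s)‖
        ≤ ‖Finv (radProj R x) - Finv (radProj R y)‖ * ‖w s‖ :=
          ContinuousLinearMap.le_opNorm _ _
      _ ≤ (ab * ((M₂ * ‖radProj R x - radProj R y‖) * ab)) * Lw := by
          apply mul_le_mul (hFinv_lip _ (hπR x) _ (hπR y)) (hwbound s hs) (norm_nonneg _)
          positivity
      _ ≤ (ab * ((M₂ * (2 * ‖x - y‖)) * ab)) * Lw := by
          have s1 := mul_le_mul_of_nonneg_left h2 hM₂0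
          have s2 := mul_le_mul_of_nonneg_right s1 hab0.le
          have s3 := mul_le_mul_of_nonneg_left s2 hab0.le
          exact mul_le_mul_of_nonneg_right s3 hLw0
      _ = Lv * ‖x - y‖ := by rw [hLv]; ring
  have hvbound : ∀ s ∈ Icc (0:ℝ) 1, ∀ x : H, ‖v s x‖ ≤ ab * Lw := by
    intro s hs x
    calc ‖Finv (radProj R x) (w s)‖ ≤ ‖Finv (radProj R x)‖ * ‖w s‖ :=
        ContinuousLinearMap.le_opNorm _ _
      _ ≤ ab * Lw := mul_le_mul (hFinv_le _ (hπR x)) (hwbound s hs) (norm_nonneg _) hab0.le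
  -- existence of lifts
  have hexist : ∀ s : ℝ, ∃ G : ℝ → H, s ∈ Icc (0:ℝ) 1 →
      (G 0 = γ s ∧ ∀ t ∈ Icc (0:ℝ) 1, HasDerivWithinAt G (v s (G t)) (Icc (0:ℝ) 1) t) := by
    intro s
    by_cases hs : s ∈ Icc (0:ℝ) 1
    · have hpl : IsPicardLindelof (fun _ x => v s x) (tmin := 0) (tmax := 1)
          ⟨0, left_mem_Icc.mpr zero_le_one⟩ (γ s) (Real.toNNReal (ab * Lw)) 0
          (Real.toNNReal (ab * Lw)) K₀ :=
        { lipschitzOnWith := fun t _ => (hvlip s hs).lipschitzOnWith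
          continuousOn := fun x _ => continuousOn_const
          norm_le := fun t _ x _ => (hvbound s hs x).trans (Real.le_coe_toNNReal _)
          mul_max_le := by simp }
      obtain ⟨f, hf0, hfd⟩ := hpl.exists_eq_forall_mem_Icc_hasDerivWithinAt₀
      exact ⟨f, fun _ => ⟨hf0, hfd⟩⟩
    · exact ⟨fun _ => 0, fun h => absurd h hs⟩
  choose G hG using hexist
  have hIci : ∀ (f : ℝ → H) (d : H) (t : ℝ), t ∈ Ico (0:ℝ) 1 →
      HasDerivWithinAt f d (Icc (0:ℝ) 1) t → HasDerivWithinAt f d (Ici t) t :=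
    fun f d t ht hd => hd.mono_of_mem_nhdsWithin (Icc_mem_nhdsGE_of_mem ht)
  have hGcont : ∀ s ∈ Icc (0:ℝ) 1, ContinuousOn (G s) (Icc (0:ℝ) 1) :=
    fun s hs t ht => ((hG s hs).2 t ht).continuousWithinAt
  -- a priori bound
  have hGbound : ∀ s ∈ Icc (0:ℝ) 1, ∀ t ∈ Icc (0:ℝ) 1, ‖G s t‖ ≤ B := by
    intro s hs t ht
    have hgr := norm_le_gronwallBound_of_norm_deriv_right_le (f := G s)
      (f' := fun t => v s (G s t)) (δ := r₀) (K := a * Lw) (ε := b * Lw) (a := 0) (b := 1)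
      (hGcont s hs)
      (fun t' ht' => hIci _ _ t' ht' ((hG s hs).2 t' (Ico_subset_Icc_self ht')))
      (by rw [(hG s hs).1]; exact hγ_mem s hs)
      (fun t' _ => by
        simp only [hv]
        calc ‖Finv (radProj R (G s t')) (w s)‖ ≤ ‖Finv (radProj R (G s t'))‖ * ‖w s‖ :=
            ContinuousLinearMap.le_opNorm _ _
          _ ≤ (a * ‖radProj R (G s t')‖ + b) * Lw := by
              apply mul_le_mul (hinv_bound _) (hwbound s hs) (norm_nonneg _)
              positivity
          _ ≤ (a * ‖G s t'‖ + b) * Lw := by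
              have h4 := radProj_norm_le_self R hR0 (G s t')
              have h5 := mul_le_mul_of_nonneg_left h4 ha
              exact mul_le_mul_of_nonneg_right (add_le_add_left h5 b) hLw0
          _ = a * Lw * ‖G s t'‖ + b * Lw := by ring)
      t ht
    refine hgr.trans ?_
    rw [sub_zero]
    have := gronwallBound_le_of_mem hr₀0 (by positivity) (by positivity) ht.1 ht.2
      (δ := r₀) (K := a * Lw) (ε := b * Lw)
    rw [hB]
    linarith
  have hBR : B ≤ R := by rw [hRdef]; linarith
  have hπG : ∀ s ∈ Icc (0:ℝ) 1, ∀ t ∈ Icc (0:ℝ) 1, radProj R (G s t) = G s t :=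
    fun s hs t ht => radProj_eq_of_le ((hGbound s hs t ht).trans hBR)
  have hFc : Continuous F := continuous_iff_continuousAt.mpr (fun x => (hF' x).continuousAt)
  -- F along trajectories
  have hFG : ∀ s ∈ Icc (0:ℝ) 1, ∀ t ∈ Icc (0:ℝ) 1, F (G s t) - t • (w s) = F (γ s) := by
    intro s hs
    have hφcont : ContinuousOn (fun t => F (G s t) - t • (w s)) (Icc (0:ℝ) 1) := by
      apply ContinuousOn.sub
      · exact hFc.comp_continuousOn (hGcont s hs)
      · exact (continuous_id.smul continuous_const).continuousOn
    have hφderiv : ∀ t ∈ Ico (0:ℝ) 1,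
        HasDerivWithinAt (fun t => F (G s t) - t • (w s)) 0 (Ici t) t := by
      intro t ht
      have htI : t ∈ Icc (0:ℝ) 1 := Ico_subset_Icc_self ht
      have h1 : HasDerivWithinAt (G s) (Finv (G s t) (w s)) (Icc (0:ℝ) 1) t := by
        have h := (hG s hs).2 t htI
        simp only [hv] at h
        rwa [hπG s hs t htI] at h
      have h2 : HasDerivWithinAt (fun t => F (G s t))
          (F' (G s t) (Finv (G s t) (w s))) (Icc (0:ℝ) 1) t :=
        (hF' (G s t)).comp_hasDerivWithinAt t h1
      have h3 : F' (G s t) (Finv (G s t) (w s)) = w s := by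
        have h := ContinuousLinearMap.ext_iff.mp (hinv_right (G s t)) (w s)
        simpa using h
      have h4 : HasDerivWithinAt (fun t : ℝ => t • (w s)) ((1:ℝ) • (w s)) (Icc (0:ℝ) 1) t :=
        (hasDerivWithinAt_id t _).smul_const (w s)
      have h5 := h2.sub h4
      rw [h3, one_smul, sub_self] at h5
      exact hIci _ _ t ht h5
    intro t ht
    have h6 := constant_of_has_deriv_right_zero hφcont hφderiv t ht
    simp only [zero_smul, sub_zero] at h6
    rw [(hG s hs).1] at h6
    exact h6
  have hFG1 : ∀ s ∈ Icc (0:ℝ) 1, F (G s 1) = p := by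
    intro s hs
    have h := hFG s hs 1 (right_mem_Icc.mpr zero_le_one)
    rw [one_smul] at h
    have h7 : F (G s 1) = F (γ s) + w s := by
      rw [← h]; abel
    rw [h7]
    simp only [hw]
    abel
  -- endpoints
  have hend : ∀ s ∈ Icc (0:ℝ) 1, w s = 0 → G s 1 = γ s := by
    intro s hs hws
    have hderiv : ∀ t ∈ Ico (0:ℝ) 1, HasDerivWithinAt (G s) 0 (Ici t) t := by
      intro t ht
      have h := (hG s hs).2 t (Ico_subset_Icc_self ht)
      simp only [hv, hws, map_zero] at h
      exact hIci _ _ t ht h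
    have h := constant_of_has_deriv_right_zero (hGcont s hs) hderiv 1
      (right_mem_Icc.mpr zero_le_one)
    rw [h, (hG s hs).1]
  -- Lipschitz dependence on s
  set CL : ℝ := (‖u₁ - u₀‖ + ab * Lw) * Real.exp ((K₀ : NNReal) : ℝ) with hCL
  have hCL0 : 0 ≤ CL := by positivity
  have hGlip : ∀ s ∈ Icc (0:ℝ) 1, ∀ s' ∈ Icc (0:ℝ) 1,
      dist (G s 1) (G s' 1) ≤ CL * |s - s'| := by
    intro s hs s' hs'
    have hstep := dist_le_of_approx_trajectories_ODE (v := fun _ x => v s x) (K := K₀)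
      (f := G s) (g := G s') (f' := fun t => v s (G s t)) (g' := fun t => v s' (G s' t))
      (εf := 0) (εg := ab * (Lw * |s - s'|)) (δ := ‖u₁ - u₀‖ * |s - s'|) (a := 0) (b := 1)
      (fun _ => hvlip s hs)
      (hGcont s hs)
      (fun t ht => hIci _ _ t ht ((hG s hs).2 t (Ico_subset_Icc_self ht)))
      (fun t _ => by simp)
      (hGcont s' hs')
      (fun t ht => hIci _ _ t ht ((hG s' hs').2 t (Ico_subset_Icc_self ht)))
      (fun t _ => by
        simp only [hv, dist_eq_norm]
        have h1 : v s' (G s' t) - v s (G s' t)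
            = Finv (radProj R (G s' t)) (w s' - w s) := by
          simp [hv, map_sub]
        rw [h1]
        calc ‖Finv (radProj R (G s' t)) (w s' - w s)‖
            ≤ ‖Finv (radProj R (G s' t))‖ * ‖w s' - w s‖ :=
              ContinuousLinearMap.le_opNorm _ _
          _ ≤ ab * (Lw * |s - s'|) := by
              apply mul_le_mul (hFinv_le _ (hπR _)) _ (norm_nonneg _) hab0.le
              rw [abs_sub_comm]
              exact hwlip s' hs' s hs
        )
      (by
        rw [(hG s hs).1, (hG s' hs').1, dist_eq_norm]
        have h2 : γ s - γ s' = (s - s') • (u₁ - u₀) := by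
          simp only [hγ, sub_smul]
          abel
        rw [h2, norm_smul, Real.norm_eq_abs, mul_comm])
      1 (right_mem_Icc.mpr zero_le_one)
    refine hstep.trans ?_
    have hb1 := gronwallBound_le_of_mem (δ := ‖u₁ - u₀‖ * |s - s'|) (K := ((K₀ : NNReal) : ℝ))
      (ε := 0 + ab * (Lw * |s - s'|)) (by positivity) (by positivity) (by positivity)
      (x := 1 - 0) (by norm_num) (by norm_num)
    refine hb1.trans ?_
    rw [hCL]
    ring_nf
    exact le_rfl
  -- local constancy of s ↦ G s 1
  haveI hpreconn : PreconnectedSpace (Icc (0:ℝ) 1) :=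
    Subtype.preconnectedSpace isPreconnected_Icc
  have hloc : IsLocallyConstant (fun s : Icc (0:ℝ) 1 => G s.val 1) := by
    rw [IsLocallyConstant.iff_eventually_eq]
    intro s₀
    have hxp := hFG1 s₀.val s₀.2
    set x : H := G s₀.val 1 with hxdef
    have hstrict : HasStrictFDerivAt F (F' x) x :=
      hasStrictFDerivAt_of_hasFDerivAt_of_continuousAt
        (Filter.Eventually.of_forall (fun y => hF' y)) (hF'' x).continuousAt
    have hleft : Function.LeftInverse (Finv x) (F' x) := fun z => by
      have h := ContinuousLinearMap.ext_iff.mp (hinv_left x) z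
      simpa using h
    have hright : Function.RightInverse (Finv x) (F' x) := fun z => by
      have h := ContinuousLinearMap.ext_iff.mp (hinv_right x) z
      simpa using h
    set e : H ≃L[ℝ] H := ContinuousLinearEquiv.equivOfInverse (F' x) (Finv x) hleft hright
      with he
    have hcoe : (e : H →L[ℝ] H) = F' x := by rfl
    have hstrict' : HasStrictFDerivAt F (e : H →L[ℝ] H) x := by rw [hcoe]; exact hstrict
    have hev := hstrict'.eventually_left_inverse
    obtain ⟨δH, hδH, hball⟩ := Metric.eventually_nhds_iff.mp hev
    rw [Metric.eventually_nhds_iff]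
    refine ⟨δH / (CL + 1), by positivity, ?_⟩
    intro s hdist
    have hsub : dist s s₀ = |(s : ℝ) - (s₀ : ℝ)| := by
      rw [Subtype.dist_eq, Real.dist_eq]
    have hd := hGlip s.val s.2 s₀.val s₀.2
    have hlt : dist (G s.val 1) x < δH := by
      rw [hsub] at hdist
      have hcl1 : (0:ℝ) < CL + 1 := by linarith
      have hq : (CL + 1) * (δH / (CL + 1)) = δH := mul_div_cancel₀ _ hcl1.ne'
      have h9 : CL * |(s : ℝ) - (s₀ : ℝ)| ≤ CL * (δH / (CL + 1)) :=
        mul_le_mul_of_nonneg_left hdist.le hCL0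
      have h10 : CL * (δH / (CL + 1)) < δH := by nlinarith [div_pos hδH hcl1]
      calc dist (G s.val 1) x ≤ CL * |(s : ℝ) - (s₀ : ℝ)| := hd
        _ < δH := lt_of_le_of_lt h9 h10
    have e1 := hball hlt
    have e2 := hball (show dist x x < δH by simpa using hδH)
    rw [hFG1 s.val s.2] at e1
    rw [hxp] at e2
    show G s.val 1 = x
    rw [e1.symm.trans e2]
  have hkey : G (0:ℝ) 1 = G (1:ℝ) 1 := by
    have h := hloc.apply_eq_of_preconnectedSpace
      ⟨0, left_mem_Icc.mpr zero_le_one⟩ ⟨1, right_mem_Icc.mpr zero_le_one⟩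
    simpa using h
  have h0 : G (0:ℝ) 1 = u₀ := by
    rw [hend 0 (left_mem_Icc.mpr zero_le_one) hw0, hγ0]
  have h1 : G (1:ℝ) 1 = u₁ := by
    rw [hend 1 (right_mem_Icc.mpr zero_le_one) hw1, hγ1]
  rw [h0, h1] at hkey
  exact hkey
end

section
/- Let H be a real Hilbert space, F : H → H Fréchet differentiable with F′(u) boundedly invertible for every u, and let f ∈ H. If u : [0,T) → H is a differentiable solution of the DSM equation u̇(t) = −[F′(u(t))]⁻¹(F(u(t)) − f), then for all t ∈ [0,T) one has F(u(t)) − f = e^{−t}(F(u(0)) − f); in particular ‖F(u(t)) − f‖ = e^{−t}‖F(u(0)) − f‖. -/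
open Set Metric

/-- Along any solution of the DSM equation
`u̇ = -[F'(u)]⁻¹ (F(u) - f)` on `[0,T)` one has the exact decay
`F(u(t)) - f = e^{-t} (F(u(0)) - f)`, hence
`‖F(u(t)) - f‖ = e^{-t} ‖F(u(0)) - f‖`. -/
theorem dsm_exponential_decay
    {H : Type*} [NormedAddCommGroup H] [InnerProductSpace ℝ H] [CompleteSpace H]
    (F : H → H) (F' : H → H →L[ℝ] H) (Finv : H → H →L[ℝ] H)
    (hF' : ∀ u, HasFDerivAt F (F' u) u)
    (hinv_left : ∀ u, (Finv u).comp (F' u) = ContinuousLinearMap.id ℝ H)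
    (hinv_right : ∀ u, (F' u).comp (Finv u) = ContinuousLinearMap.id ℝ H)
    (f : H) (T : ℝ) (u : ℝ → H)
    (hu : ∀ t ∈ Ico (0:ℝ) T,
      HasDerivWithinAt u (-(Finv (u t) (F (u t) - f))) (Ico (0:ℝ) T) t) :
    ∀ t ∈ Ico (0:ℝ) T,
      F (u t) - f = Real.exp (-t) • (F (u 0) - f) ∧
      ‖F (u t) - f‖ = Real.exp (-t) * ‖F (u 0) - f‖ := by
  set w : ℝ → H := fun t => F (u t) - f with hw
  have hwderiv : ∀ t ∈ Ico (0:ℝ) T,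
      HasDerivWithinAt w (-(w t)) (Ico (0:ℝ) T) t := by
    intro t ht
    have h1 : HasDerivWithinAt (fun s => F (u s))
        ((F' (u t)) (-(Finv (u t) (F (u t) - f)))) (Ico (0:ℝ) T) t :=
      (hF' (u t)).comp_hasDerivWithinAt t (hu t ht)
    have h2 : (F' (u t)) (-(Finv (u t) (F (u t) - f))) = -(w t) := by
      have h3 := congrArg (fun (L : H →L[ℝ] H) => L (F (u t) - f)) (hinv_right (u t))
      simp only [ContinuousLinearMap.comp_apply, ContinuousLinearMap.id_apply] at h3
      rw [map_neg, h3]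
    exact h2 ▸ h1.sub_const f
  have hg : ∀ t ∈ Ico (0:ℝ) T,
      HasDerivWithinAt (fun s => Real.exp s • w s) 0 (Ico (0:ℝ) T) t := by
    intro t ht
    have he : HasDerivWithinAt Real.exp (Real.exp t) (Ico (0:ℝ) T) t :=
      (Real.hasDerivAt_exp t).hasDerivWithinAt
    have := he.smul (hwderiv t ht)
    convert this using 1
    · rfl
    · simp
  intro t ht
  have h0 : (0:ℝ) ∈ Ico (0:ℝ) T := ⟨le_refl _, lt_of_le_of_lt ht.1 ht.2⟩
  have hle := (convex_Ico (0:ℝ) T).norm_image_sub_le_of_norm_hasDerivWithin_le (C := 0)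
    hg (fun x _ => by simp) h0 ht
  have heq0 : Real.exp t • w t - Real.exp 0 • w 0 = 0 := by
    have : ‖Real.exp t • w t - Real.exp 0 • w 0‖ ≤ 0 := by simpa using hle
    exact norm_le_zero_iff.mp this
  have heq : Real.exp t • w t = w 0 := by
    have := sub_eq_zero.mp heq0
    simpa using this
  have key : w t = Real.exp (-t) • w 0 := by
    rw [← heq, smul_smul, Real.exp_neg, inv_mul_cancel₀ (Real.exp_ne_zero t), one_smul]
  refine ⟨key, ?_⟩
  show ‖w t‖ = Real.exp (-t) * ‖w 0‖
  rw [key, norm_smul, Real.norm_eq_abs, abs_of_pos (Real.exp_pos _)]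
end

section
/- Let H be a real Hilbert space, F : H → H Fréchet differentiable with F′(u) boundedly invertible for every u, f ∈ H, u₀ ∈ H, and R > 0. Suppose ‖[F′(u)]⁻¹‖ ≤ m(R) for all u in the closed ball B(u₀,R), and let u : [0,T) → H be a differentiable solution of u̇(t) = −[F′(u(t))]⁻¹(F(u(t)) − f), u(0) = u₀, such that u(t) ∈ B(u₀,R) for all t ∈ [0,T). Then ‖u̇(t)‖ ≤ m(R)‖F(u₀) − f‖ e^{−t} for all t ∈ [0,T). -/
open Set Metric

/-- If `‖[F'(u)]⁻¹‖ ≤ m(R)` on the closed ball `B(u₀,R)` and the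
DSM solution `u(t)` stays in `B(u₀,R)` on `[0,T)`, then
`‖u̇(t)‖ ≤ m(R) ‖F(u₀) - f‖ e^{-t}` on `[0,T)`. -/
theorem dsm_velocity_bound
    {H : Type*} [NormedAddCommGroup H] [InnerProductSpace ℝ H] [CompleteSpace H]
    (F : H → H) (F' : H → H →L[ℝ] H) (Finv : H → H →L[ℝ] H)
    (hF' : ∀ u, HasFDerivAt F (F' u) u)
    (hinv_left : ∀ u, (Finv u).comp (F' u) = ContinuousLinearMap.id ℝ H)
    (hinv_right : ∀ u, (F' u).comp (Finv u) = ContinuousLinearMap.id ℝ H)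
    (f u₀ : H) (R : ℝ) (hR : 0 < R) (m : ℝ → ℝ)
    (hm : ∀ u ∈ closedBall u₀ R, ‖Finv u‖ ≤ m R)
    (T : ℝ) (u u' : ℝ → H)
    (hu0 : u 0 = u₀)
    (hODE : ∀ t ∈ Ico (0:ℝ) T, u' t = -(Finv (u t) (F (u t) - f)))
    (hderiv : ∀ t ∈ Ico (0:ℝ) T, HasDerivWithinAt u (u' t) (Ico (0:ℝ) T) t)
    (hball : ∀ t ∈ Ico (0:ℝ) T, u t ∈ closedBall u₀ R) :
    ∀ t ∈ Ico (0:ℝ) T, ‖u' t‖ ≤ m R * ‖F u₀ - f‖ * Real.exp (-t) := by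
  intro t ht
  set g : ℝ → H := fun s => F (u s) - f with hg
  -- derivative of g within Ico
  have hgderiv : ∀ s ∈ Ico (0:ℝ) T, HasDerivWithinAt g (-(g s)) (Ico (0:ℝ) T) s := by
    intro s hs
    have h1 : HasDerivWithinAt (fun r => F (u r)) (F' (u s) (u' s)) (Ico (0:ℝ) T) s :=
      (hF' (u s)).comp_hasDerivWithinAt s (hderiv s hs)
    have h2 : F' (u s) (u' s) = -(g s) := by
      rw [hODE s hs]
      have := congrArg (fun (L : H →L[ℝ] H) => L (F (u s) - f)) (hinv_right (u s))
      simp only [ContinuousLinearMap.comp_apply, ContinuousLinearMap.id_apply] at this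
      rw [map_neg, this]
    have := h1.sub_const f
    rwa [h2] at this
  -- h(s) = exp s • g s has zero derivative
  have hh : ∀ s ∈ Ico (0:ℝ) T,
      HasDerivWithinAt (fun r => Real.exp r • g r) 0 (Ico (0:ℝ) T) s := by
    intro s hs
    have he : HasDerivWithinAt Real.exp (Real.exp s) (Ico (0:ℝ) T) s :=
      (Real.hasDerivAt_exp s).hasDerivWithinAt
    have := he.smul (hgderiv s hs)
    convert this using 1
    · rfl
    simp [smul_neg]
  have h0 : (0:ℝ) ∈ Ico (0:ℝ) T := ⟨le_refl 0, lt_of_le_of_lt ht.1 ht.2⟩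
  have hconst : Real.exp t • g t = g 0 := by
    have := (convex_Ico (0:ℝ) T).norm_image_sub_le_of_norm_hasDerivWithin_le
      (fun s hs => hh s hs) (C := 0) (fun s hs => by simp) h0 ht
    simp only [zero_mul] at this
    have hz : Real.exp t • g t - Real.exp 0 • g 0 = 0 := by
      have := norm_le_zero_iff.mp this
      simpa using this
    have := sub_eq_zero.mp hz
    simpa using this
  have hgt : g t = Real.exp (-t) • g 0 := by
    rw [← hconst, smul_smul, Real.exp_neg, inv_mul_cancel₀ (Real.exp_ne_zero t), one_smul]
  have hgnorm : ‖g t‖ = Real.exp (-t) * ‖g 0‖ := by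
    rw [hgt, norm_smul, Real.norm_eq_abs, abs_of_pos (Real.exp_pos _)]
  have hg0 : g 0 = F u₀ - f := by simp [hg, hu0]
  rw [hODE t ht, norm_neg]
  calc ‖Finv (u t) (g t)‖ ≤ ‖Finv (u t)‖ * ‖g t‖ := (Finv (u t)).le_opNorm _
    _ ≤ m R * ‖g t‖ := by
        apply mul_le_mul_of_nonneg_right (hm _ (hball t ht)) (norm_nonneg _)
    _ = m R * ‖F u₀ - f‖ * Real.exp (-t) := by
        rw [hgnorm, hg0]; ring
end

section
/- Let H be a real Hilbert space, F : H → H twice Fréchet differentiable, u₀ ∈ H, f ∈ H, and R > 0. Suppose ‖F′(u)‖ ≤ M₁(R) and ‖F″(u)‖ ≤ M₂(R) on the closed ball B(u₀,R), that F′(u) is boundedly invertible with ‖[F′(u)]⁻¹‖ ≤ m(R) for all u ∈ B(u₀,R), and that m(R)·‖F(u₀) − f‖ ≤ R. Then the initial value problem u̇(t) = −[F′(u(t))]⁻¹(F(u(t)) − f), u(0) = u₀, has a unique solution u defined on all of [0,∞) with u(t) ∈ B(u₀,R) for all t ≥ 0; the limit u(∞) := lim_{t→∞} u(t) exists in H;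 F(u(∞)) = f; and ‖u(t) − u(∞)‖ ≤ m(R)‖F(u₀) − f‖ e^{−t} for all t ≥ 0. -/
open Set Metric Filter

open Topology


noncomputable def dsmField {H : Type*} [NormedAddCommGroup H] [NormedSpace ℝ H]
    (F : H → H) (Finv : H → H →L[ℝ] H) (f : H) : H → H :=
  fun x => -(Finv x (F x - f))

section ProjBall

variable {H : Type*} [NormedAddCommGroup H] [NormedSpace ℝ H]

noncomputable def projBall (u₀ : H) (R : ℝ) : H → H :=
  fun x => u₀ + (R / max R ‖x - u₀‖) • (x - u₀)

lemma projBall_of_mem {u₀ : H} {R : ℝ} (hR : 0 < R) {x : H} (hx : x ∈ closedBall u₀ R) :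
    projBall u₀ R x = x := by
  have h : ‖x - u₀‖ ≤ R := by rwa [mem_closedBall, dist_eq_norm] at hx
  simp [projBall, max_eq_left h, div_self hR.ne', add_comm]

lemma projBall_mem {u₀ : H} {R : ℝ} (hR : 0 < R) (x : H) :
    projBall u₀ R x ∈ closedBall u₀ R := by
  have hM : 0 < max R ‖x - u₀‖ := lt_max_of_lt_left hR
  rw [mem_closedBall, dist_eq_norm, projBall, add_sub_cancel_left, norm_smul,
    Real.norm_eq_abs, abs_of_nonneg (by positivity)]
  rw [div_mul_eq_mul_div, div_le_iff₀ hM]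
  nlinarith [le_max_right R ‖x - u₀‖, norm_nonneg (x - u₀)]


lemma projBall_lipschitz {u₀ : H} {R : ℝ} (hR : 0 < R) :
    LipschitzWith 2 (projBall u₀ R) := by
  have key : ∀ y z : H, ‖(R / max R ‖y‖) • y - (R / max R ‖z‖) • z‖ ≤ 2 * ‖y - z‖ := by
    intro y z
    set My := max R ‖y‖ with hMy
    set Mz := max R ‖z‖ with hMz
    have hMy0 : 0 < My := lt_max_of_lt_left hR
    have hMz0 : 0 < Mz := lt_max_of_lt_left hR
    have hyM : ‖y‖ ≤ My := le_max_right _ _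
    have hzM : ‖z‖ ≤ Mz := le_max_right _ _
    have hRM : R ≤ My := le_max_left _ _
    have habs : |My - Mz| ≤ ‖y - z‖ := by
      have h1 : My = max ‖y‖ R := max_comm _ _
      have h2 : Mz = max ‖z‖ R := max_comm _ _
      rw [h1, h2]
      exact (abs_max_sub_max_le_abs ‖y‖ ‖z‖ R).trans (abs_norm_sub_norm_le y z)
    have hid : (R / My) • y - (R / Mz) • z
        = (R / My) • (y - z) + ((R / My) - (R / Mz)) • z := by
      rw [smul_sub, sub_smul]; abel
    rw [hid]
    have h1 : ‖(R / My) • (y - z)‖ ≤ ‖y - z‖ := by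
      rw [norm_smul, Real.norm_eq_abs, abs_of_nonneg (by positivity)]
      have : R / My ≤ 1 := (div_le_one hMy0).2 hRM
      nlinarith [norm_nonneg (y - z)]
    have h2 : ‖((R / My) - (R / Mz)) • z‖ ≤ ‖y - z‖ := by
      rw [norm_smul, Real.norm_eq_abs]
      have hdiff : R / My - R / Mz = R * (Mz - My) / (My * Mz) := by
        field_simp
      rw [hdiff, abs_div, abs_mul, abs_of_nonneg hR.le, abs_of_pos (mul_pos hMy0 hMz0)]
      have habs' : |Mz - My| ≤ ‖y - z‖ := by rwa [abs_sub_comm]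
      calc R * |Mz - My| / (My * Mz) * ‖z‖
          ≤ R * ‖y - z‖ / (My * Mz) * Mz := by
            gcongr <;> first | exact habs' | positivity
        _ = (R / My) * ‖y - z‖ := by field_simp
        _ ≤ 1 * ‖y - z‖ := by
            apply mul_le_mul_of_nonneg_right ((div_le_one hMy0).2 hRM) (norm_nonneg _)
        _ = ‖y - z‖ := one_mul _
    calc ‖(R / My) • (y - z) + ((R / My) - (R / Mz)) • z‖
        ≤ ‖(R / My) • (y - z)‖ + ‖((R / My) - (R / Mz)) • z‖ := norm_add_le _ _
      _ ≤ 2 * ‖y - z‖ := by linarith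
  refine LipschitzWith.of_dist_le_mul fun x x' => ?_
  have : dist (projBall u₀ R x) (projBall u₀ R x')
      = ‖(R / max R ‖x - u₀‖) • (x - u₀) - (R / max R ‖x' - u₀‖) • (x' - u₀)‖ := by
    rw [projBall, projBall, dist_eq_norm]; abel_nf
  rw [this, dist_eq_norm]
  have := key (x - u₀) (x' - u₀)
  have hxy : (x - u₀) - (x' - u₀) = x - x' := by abel
  rw [hxy] at this
  exact this.trans_eq (by norm_num)

end ProjBall

section Estimates

variable {H : Type*} [NormedAddCommGroup H] [InnerProductSpace ℝ H] [CompleteSpace H]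
  (F : H → H) (F' : H → H →L[ℝ] H) (F'' : H → H →L[ℝ] H →L[ℝ] H)
  (Finv : H → H →L[ℝ] H) (u₀ f : H) (R : ℝ) (M₁ M₂ m : ℝ → ℝ)

/-- The Lipschitz constant for the DSM field on the ball. -/
noncomputable def dsmK (u₀ f : H) (R : ℝ) (M₁ M₂ m : ℝ → ℝ) (F : H → H) : ℝ :=
  m R * m R * M₂ R * (M₁ R * R + ‖F u₀ - f‖) + m R * M₁ R

lemma dsm_estimates
    (hF' : ∀ u, HasFDerivAt F (F' u) u)
    (hF'' : ∀ u, HasFDerivAt F' (F'' u) u)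
    (hR : 0 < R)
    (hM₁ : ∀ u ∈ closedBall u₀ R, ‖F' u‖ ≤ M₁ R)
    (hM₂ : ∀ u ∈ closedBall u₀ R, ‖F'' u‖ ≤ M₂ R)
    (hinv_left : ∀ u, (Finv u).comp (F' u) = ContinuousLinearMap.id ℝ H)
    (hinv_right : ∀ u, (F' u).comp (Finv u) = ContinuousLinearMap.id ℝ H)
    (hm : ∀ u ∈ closedBall u₀ R, ‖Finv u‖ ≤ m R) :
    (∀ x ∈ closedBall u₀ R, ∀ y ∈ closedBall u₀ R,
      ‖dsmField F Finv f x - dsmField F Finv f y‖ ≤ dsmK u₀ f R M₁ M₂ m F * ‖x - y‖) ∧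
    (∀ x ∈ closedBall u₀ R, ‖dsmField F Finv f x‖ ≤ m R * (M₁ R * R + ‖F u₀ - f‖)) ∧
    (∀ x ∈ closedBall u₀ R, ∀ y ∈ closedBall u₀ R,
      ‖Finv x - Finv y‖ ≤ m R * (M₂ R * ‖y - x‖) * m R) := by
  have hs : Convex ℝ (closedBall u₀ R) := convex_closedBall u₀ R
  have hm0 : 0 ≤ m R := le_trans (norm_nonneg (Finv u₀)) (hm u₀ (mem_closedBall_self hR.le))
  have hM₁0 : 0 ≤ M₁ R := le_trans (norm_nonneg (F' u₀)) (hM₁ u₀ (mem_closedBall_self hR.le))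
  have hM₂0 : 0 ≤ M₂ R := le_trans (norm_nonneg (F'' u₀)) (hM₂ u₀ (mem_closedBall_self hR.le))
  have FLip : ∀ x ∈ closedBall u₀ R, ∀ y ∈ closedBall u₀ R, ‖F y - F x‖ ≤ M₁ R * ‖y - x‖ :=
    fun x hx y hy => hs.norm_image_sub_le_of_norm_hasFDerivWithin_le
      (fun z hz => (hF' z).hasFDerivWithinAt) hM₁ hx hy
  have F'Lip : ∀ x ∈ closedBall u₀ R, ∀ y ∈ closedBall u₀ R, ‖F' y - F' x‖ ≤ M₂ R * ‖y - x‖ :=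
    fun x hx y hy => hs.norm_image_sub_le_of_norm_hasFDerivWithin_le
      (fun z hz => (hF'' z).hasFDerivWithinAt) hM₂ hx hy
  have FinvLip : ∀ x ∈ closedBall u₀ R, ∀ y ∈ closedBall u₀ R,
      ‖Finv x - Finv y‖ ≤ m R * (M₂ R * ‖y - x‖) * m R := by
    intro x hx y hy
    have hid : Finv x - Finv y = (Finv x).comp (((F' y) - (F' x)).comp (Finv y)) := by
      have h1 : (Finv x).comp ((F' y).comp (Finv y)) = Finv x := by
        rw [hinv_right y, ContinuousLinearMap.comp_id]
      have h2 : (Finv x).comp ((F' x).comp (Finv y)) = Finv y := by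
        rw [← ContinuousLinearMap.comp_assoc, hinv_left x, ContinuousLinearMap.id_comp]
      rw [ContinuousLinearMap.sub_comp, ContinuousLinearMap.comp_sub, h1, h2]
    rw [hid]
    calc ‖(Finv x).comp (((F' y) - (F' x)).comp (Finv y))‖
        ≤ ‖Finv x‖ * ‖((F' y) - (F' x)).comp (Finv y)‖ := ContinuousLinearMap.opNorm_comp_le _ _
      _ ≤ ‖Finv x‖ * (‖F' y - F' x‖ * ‖Finv y‖) := by
          exact mul_le_mul_of_nonneg_left (ContinuousLinearMap.opNorm_comp_le _ _) (norm_nonneg _)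
      _ ≤ m R * ((M₂ R * ‖y - x‖) * m R) := by
          apply mul_le_mul (hm x hx) _ (by positivity) hm0
          exact mul_le_mul (F'Lip x hx y hy) (hm y hy) (norm_nonneg _) (by positivity)
      _ = m R * (M₂ R * ‖y - x‖) * m R := by ring
  have Ffbound : ∀ x ∈ closedBall u₀ R, ‖F x - f‖ ≤ M₁ R * R + ‖F u₀ - f‖ := by
    intro x hx
    calc ‖F x - f‖ = ‖(F x - F u₀) + (F u₀ - f)‖ := by abel_nf
      _ ≤ ‖F x - F u₀‖ + ‖F u₀ - f‖ := norm_add_le _ _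
      _ ≤ M₁ R * R + ‖F u₀ - f‖ := by
          have h1 := FLip u₀ (mem_closedBall_self hR.le) x hx
          have h2 : ‖x - u₀‖ ≤ R := by rwa [mem_closedBall, dist_eq_norm] at hx
          have : ‖F x - F u₀‖ ≤ M₁ R * R :=
            h1.trans (mul_le_mul_of_nonneg_left h2 hM₁0)
          linarith
  refine ⟨?_, ?_, FinvLip⟩
  · intro x hx y hy
    have hid : Finv x (F x - f) - Finv y (F y - f)
        = (Finv x - Finv y) (F x - f) + Finv y (F x - F y) := by
      simp [ContinuousLinearMap.sub_apply, map_sub]; abel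
    have : ‖dsmField F Finv f x - dsmField F Finv f y‖
        = ‖Finv x (F x - f) - Finv y (F y - f)‖ := by
      rw [dsmField, dsmField, ← norm_neg]; congr 1; abel
    rw [this, hid]
    calc ‖(Finv x - Finv y) (F x - f) + Finv y (F x - F y)‖
        ≤ ‖(Finv x - Finv y) (F x - f)‖ + ‖Finv y (F x - F y)‖ := norm_add_le _ _
      _ ≤ ‖Finv x - Finv y‖ * ‖F x - f‖ + ‖Finv y‖ * ‖F x - F y‖ := by
          gcongr <;> exact ContinuousLinearMap.le_opNorm _ _
      _ ≤ (m R * (M₂ R * ‖y - x‖) * m R) * (M₁ R * R + ‖F u₀ - f‖)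
            + m R * (M₁ R * ‖x - y‖) := by
          refine add_le_add ?_ ?_
          · exact mul_le_mul (FinvLip x hx y hy) (Ffbound x hx) (norm_nonneg _) (by positivity)
          · exact mul_le_mul (hm y hy) (FLip y hy x hx) (norm_nonneg _) hm0
      _ = dsmK u₀ f R M₁ M₂ m F * ‖x - y‖ := by
          rw [dsmK, norm_sub_rev y x]; ring
  · intro x hx
    have h1 : ‖dsmField F Finv f x‖ = ‖Finv x (F x - f)‖ := norm_neg _
    rw [h1]
    calc ‖Finv x (F x - f)‖ ≤ ‖Finv x‖ * ‖F x - f‖ := ContinuousLinearMap.le_opNorm _ _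
      _ ≤ m R * (M₁ R * R + ‖F u₀ - f‖) :=
          mul_le_mul (hm x hx) (Ffbound x hx) (norm_nonneg _) hm0

end Estimates

section Loc


variable {H : Type*} [NormedAddCommGroup H] [InnerProductSpace ℝ H] [CompleteSpace H]
  {F : H → H} {F' : H → H →L[ℝ] H} {Finv : H → H →L[ℝ] H} {u₀ f : H} {R : ℝ} {m : ℝ → ℝ}

lemma dsm_loc
    (hF' : ∀ u, HasFDerivAt F (F' u) u)
    (hR : 0 < R)
    (hinv_right : ∀ u, (F' u).comp (Finv u) = ContinuousLinearMap.id ℝ H)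
    (hm : ∀ u ∈ closedBall u₀ R, ‖Finv u‖ ≤ m R)
    (hGcont : ContinuousOn (dsmField F Finv f) (closedBall u₀ R))
    {v : ℝ → H} {w : ℝ → H} {b : ℝ}
    (hv0 : v 0 = u₀)
    (hv : ∀ t ∈ Ici (0:ℝ), HasDerivWithinAt v (w t) (Ici (0:ℝ)) t)
    (hw : ∀ t ∈ Ici (0:ℝ), v t ∈ closedBall u₀ R → w t = dsmField F Finv f (v t))
    (hb : 0 ≤ b)
    (hball : ∀ s ∈ Icc (0:ℝ) b, v s ∈ closedBall u₀ R) :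
    (∀ t ∈ Icc (0:ℝ) b, F (v t) - f = Real.exp (-t) • (F u₀ - f)) ∧
    (∀ t₁ t₂, 0 ≤ t₁ → t₁ ≤ t₂ → t₂ ≤ b →
      ‖v t₂ - v t₁‖ ≤ m R * ‖F u₀ - f‖ * (Real.exp (-t₁) - Real.exp (-t₂))) := by
  have hm0 : 0 ≤ m R := le_trans (norm_nonneg (Finv u₀)) (hm u₀ (mem_closedBall_self hR.le))
  have hvc : ContinuousOn v (Icc 0 b) := fun s hs =>
    ((hv s hs.1).continuousWithinAt).mono Icc_subset_Ici_self
  -- derivative of F ∘ v - f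
  have hgderiv : ∀ s ∈ Icc (0:ℝ) b,
      HasDerivWithinAt (fun t => F (v t) - f) (-(F (v s) - f)) (Ici (0:ℝ)) s := by
    intro s hs
    have h1 : HasDerivWithinAt (fun t => F (v t)) (F' (v s) (w s)) (Ici (0:ℝ)) s :=
      (hF' (v s)).comp_hasDerivWithinAt s (hv s hs.1)
    have h2 : F' (v s) (w s) = -(F (v s) - f) := by
      rw [hw s hs.1 (hball s hs), dsmField, map_neg]
      have h3 : F' (v s) (Finv (v s) (F (v s) - f)) = F (v s) - f := by
        have h4 := congrArg (fun (A : H →L[ℝ] H) => A (F (v s) - f)) (hinv_right (v s))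
        simpa using h4
      rw [h3]
    exact h2 ▸ (h1.sub_const f)
  -- exp t • (F (v t) - f) has zero derivative
  have hhderiv : ∀ s ∈ Icc (0:ℝ) b,
      HasDerivWithinAt (fun t => Real.exp t • (F (v t) - f)) 0 (Ici (0:ℝ)) s := by
    intro s hs
    have h5 := ((Real.hasDerivAt_exp s).hasDerivWithinAt (s := Ici (0:ℝ))).smul (hgderiv s hs)
    convert h5 using 1
    · rfl
    · rw [smul_neg]; abel
  have hcont_h : ContinuousOn (fun t => Real.exp t • (F (v t) - f)) (Icc 0 b) := fun s hs =>
    ((hhderiv s hs).continuousWithinAt).mono Icc_subset_Ici_self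
  have hconst := constant_of_has_deriv_right_zero hcont_h
    (fun x hx => ((hhderiv x (Ico_subset_Icc_self hx)).mono (Ici_subset_Ici.mpr hx.1)))
  have hinv : ∀ t ∈ Icc (0:ℝ) b, F (v t) - f = Real.exp (-t) • (F u₀ - f) := by
    intro t ht
    have h6 := hconst t ht
    rw [Real.exp_zero, one_smul, hv0] at h6
    calc F (v t) - f = (Real.exp (-t) * Real.exp t) • (F (v t) - f) := by
          rw [← Real.exp_add]; simp
      _ = Real.exp (-t) • (Real.exp t • (F (v t) - f)) := by rw [mul_smul]
      _ = Real.exp (-t) • (F u₀ - f) := by rw [h6]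
  refine ⟨hinv, ?_⟩
  -- norm bound on the derivative
  have hwnorm : ∀ s ∈ Icc (0:ℝ) b, ‖w s‖ ≤ m R * ‖F u₀ - f‖ * Real.exp (-s) := by
    intro s hs
    rw [hw s hs.1 (hball s hs), dsmField, norm_neg]
    calc ‖Finv (v s) (F (v s) - f)‖ ≤ ‖Finv (v s)‖ * ‖F (v s) - f‖ :=
          ContinuousLinearMap.le_opNorm _ _
      _ ≤ m R * (Real.exp (-s) * ‖F u₀ - f‖) := by
          refine mul_le_mul (hm _ (hball s hs)) ?_ (norm_nonneg _) hm0
          rw [hinv s hs, norm_smul, Real.norm_eq_abs, abs_of_pos (Real.exp_pos _)]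
      _ = m R * ‖F u₀ - f‖ * Real.exp (-s) := by ring
  -- continuity of w on the interval
  have hwcont : ContinuousOn w (Icc 0 b) := by
    refine ContinuousOn.congr (hGcont.comp hvc (fun s hs => hball s hs)) ?_
    exact fun s hs => hw s hs.1 (hball s hs)
  intro t₁ t₂ h0 h12 h2b
  have hsub : Icc t₁ t₂ ⊆ Icc 0 b := Icc_subset_Icc h0 h2b
  have huIcc : uIcc t₁ t₂ = Icc t₁ t₂ := uIcc_of_le h12
  -- FTC
  have hftc : ∫ s in t₁..t₂, w s = v t₂ - v t₁ := by
    apply intervalIntegral.integral_eq_sub_of_hasDeriv_right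
    · rw [huIcc]; exact hvc.mono hsub
    · rw [min_eq_left h12, max_eq_right h12]
      intro x hx
      have hx0 : (0:ℝ) < x := lt_of_le_of_lt h0 hx.1
      exact ((hv x hx0.le).hasDerivAt (Ici_mem_nhds hx0)).hasDerivWithinAt
    · exact (hwcont.mono (huIcc ▸ hsub)).intervalIntegrable
  -- the comparison integral
  have hint : ∫ s in t₁..t₂, m R * ‖F u₀ - f‖ * Real.exp (-s)
      = m R * ‖F u₀ - f‖ * (Real.exp (-t₁) - Real.exp (-t₂)) := by
    have hanti : ∀ s ∈ uIcc t₁ t₂, HasDerivAt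
        (fun s => -(m R * ‖F u₀ - f‖) * Real.exp (-s))
        (m R * ‖F u₀ - f‖ * Real.exp (-s)) s := by
      intro s _
      have h7 : HasDerivAt (fun s : ℝ => Real.exp (-s)) (-Real.exp (-s)) s := by
        simpa using (hasDerivAt_neg s).exp
      have := h7.const_mul (-(m R * ‖F u₀ - f‖))
      rw [show m R * ‖F u₀ - f‖ * Real.exp (-s) = -(m R * ‖F u₀ - f‖) * -Real.exp (-s) by ring]
      exact this
    rw [intervalIntegral.integral_eq_sub_of_hasDerivAt hanti
      ((continuous_const.mul (Real.continuous_exp.comp continuous_neg)).intervalIntegrable _ _)]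
    ring
  rw [← hftc, ← hint]
  calc ‖∫ s in t₁..t₂, w s‖ ≤ ∫ s in t₁..t₂, ‖w s‖ :=
        intervalIntegral.norm_integral_le_integral_norm h12
    _ ≤ ∫ s in t₁..t₂, m R * ‖F u₀ - f‖ * Real.exp (-s) := by
        apply intervalIntegral.integral_mono_on h12
        · exact ContinuousOn.intervalIntegrable (by rw [huIcc]; exact (hwcont.mono hsub).norm)
        · exact ((continuous_const.mul (Real.continuous_exp.comp continuous_neg)).intervalIntegrable _ _)
        · exact fun s hs => hwnorm s (hsub hs)
lemma dsm_apriori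
    (hF' : ∀ u, HasFDerivAt F (F' u) u)
    (hR : 0 < R)
    (hinv_right : ∀ u, (F' u).comp (Finv u) = ContinuousLinearMap.id ℝ H)
    (hm : ∀ u ∈ closedBall u₀ R, ‖Finv u‖ ≤ m R)
    (hGcont : ContinuousOn (dsmField F Finv f) (closedBall u₀ R))
    (hsmall : m R * ‖F u₀ - f‖ ≤ R)
    {v : ℝ → H} {w : ℝ → H}
    (hv0 : v 0 = u₀)
    (hv : ∀ t ∈ Ici (0:ℝ), HasDerivWithinAt v (w t) (Ici (0:ℝ)) t)
    (hw : ∀ t ∈ Ici (0:ℝ), v t ∈ closedBall u₀ R → w t = dsmField F Finv f (v t)) :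
    ∀ t ∈ Ici (0:ℝ), ‖v t - u₀‖ ≤ m R * ‖F u₀ - f‖ * (1 - Real.exp (-t)) := by
  set c := m R * ‖F u₀ - f‖ with hc
  have hm0 : 0 ≤ m R := le_trans (norm_nonneg (Finv u₀)) (hm u₀ (mem_closedBall_self hR.le))
  have hc0 : 0 ≤ c := mul_nonneg hm0 (norm_nonneg _)
  have hcbound : ∀ s : ℝ, 0 ≤ s → c * (1 - Real.exp (-s)) ≤ R := by
    intro s hs
    have h1 : Real.exp (-s) ≤ 1 := Real.exp_le_one_iff.mpr (by linarith)
    nlinarith [Real.exp_pos (-s)]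
  intro t₀ ht₀
  rw [mem_Ici] at ht₀
  set A : Set ℝ := {b | b ∈ Icc (0:ℝ) t₀ ∧
    ∀ s ∈ Icc (0:ℝ) b, ‖v s - u₀‖ ≤ c * (1 - Real.exp (-s))} with hA
  have hA0 : (0:ℝ) ∈ A := by
    refine ⟨⟨le_refl _, ht₀⟩, fun s hs => ?_⟩
    have hs0 : s = 0 := le_antisymm hs.2 hs.1
    subst hs0; simp [hv0]
  have hAbdd : BddAbove A := ⟨t₀, fun x hx => hx.1.2⟩
  set T := sSup A with hT
  have hT0 : 0 ≤ T := le_csSup hAbdd hA0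
  have hTt₀ : T ≤ t₀ := csSup_le ⟨0, hA0⟩ (fun x hx => hx.1.2)
  have hTA : T ∈ A := by
    refine ⟨⟨hT0, hTt₀⟩, ?_⟩
    have hlt : ∀ s, 0 ≤ s → s < T → ‖v s - u₀‖ ≤ c * (1 - Real.exp (-s)) := by
      intro s hs0 hsT
      obtain ⟨b, hbA, hsb⟩ := exists_lt_of_lt_csSup ⟨0, hA0⟩ hsT
      exact hbA.2 s ⟨hs0, hsb.le⟩
    intro s hs
    rcases lt_or_eq_of_le hs.2 with h | h
    · exact hlt s hs.1 h
    · subst h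
      rcases eq_or_lt_of_le hT0 with h0 | h0
      · rw [← h0]; simp [hv0]
      · -- limit argument from the left
        have hne : (𝓝[Ico (0:ℝ) T] T).NeBot := by
          rw [← mem_closure_iff_nhdsWithin_neBot, closure_Ico (ne_of_lt h0)]
          exact ⟨hT0, le_refl _⟩
        have hq : ContinuousWithinAt (fun s' => ‖v s' - u₀‖ - c * (1 - Real.exp (-s')))
            (Ico (0:ℝ) T) T := by
          refine ContinuousWithinAt.sub ?_ ?_
          · exact (((hv T hT0).continuousWithinAt.mono
              (fun x hx => hx.1)).sub continuousWithinAt_const).norm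
          · exact ((continuous_const.mul ((continuous_const.sub
              (Real.continuous_exp.comp continuous_neg)))).continuousWithinAt)
        have hle : ∀ᶠ s' in 𝓝[Ico (0:ℝ) T] T,
            (fun s' => ‖v s' - u₀‖ - c * (1 - Real.exp (-s'))) s' ≤ 0 := by
          filter_upwards [self_mem_nhdsWithin] with s' hs'
          have := hlt s' hs'.1 hs'.2
          simpa using sub_nonpos.mpr this
        have hfin := le_of_tendsto hq hle
        simp only [sub_nonpos] at hfin
        exact hfin
  rcases eq_or_lt_of_le hTt₀ with hEq | hLt
  · exact hTA.2 t₀ ⟨ht₀, hEq.symm.le⟩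
  · exfalso
    have hballT : ∀ s ∈ Icc (0:ℝ) T, v s ∈ closedBall u₀ R := by
      intro s hs
      rw [mem_closedBall, dist_eq_norm]
      exact (hTA.2 s hs).trans (hcbound s hs.1)
    have hstrict : ‖v T - u₀‖ < R := by
      have h1 := hTA.2 T ⟨hT0, le_refl _⟩
      rcases eq_or_lt_of_le hc0 with h2 | h2
      · rw [← h2] at h1; simpa using lt_of_le_of_lt (by simpa using h1) hR
      · have h3 := Real.exp_pos (-T)
        nlinarith [hsmall]
    -- continuity gives a margin past T
    have hev : {s : ℝ | ‖v s - u₀‖ < R} ∈ 𝓝[Ici (0:ℝ)] T := by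
      have hq : ContinuousWithinAt (fun s' => ‖v s' - u₀‖) (Ici (0:ℝ)) T :=
        ((hv T hT0).continuousWithinAt.sub continuousWithinAt_const).norm
      exact hq (Iio_mem_nhds hstrict)
    rw [mem_nhdsWithin] at hev
    obtain ⟨U, hUopen, hTU, hUsub⟩ := hev
    obtain ⟨ε, hε, hballU⟩ := Metric.isOpen_iff.mp hUopen T hTU
    set δ := min (ε / 2) (t₀ - T) with hδ
    have hδ0 : 0 < δ := lt_min (by linarith) (by linarith)
    have hball' : ∀ s ∈ Icc (0:ℝ) (T + δ), v s ∈ closedBall u₀ R := by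
      intro s hs
      rcases le_or_gt s T with h | h
      · exact hballT s ⟨hs.1, h⟩
      · have hsU : s ∈ U := by
          apply hballU
          rw [mem_ball, Real.dist_eq, abs_of_pos (by linarith)]
          have : s - T ≤ δ := by linarith [hs.2]
          have : δ ≤ ε / 2 := min_le_left _ _
          linarith
        have := hUsub ⟨hsU, hs.1⟩
        rw [mem_setOf_eq] at this
        rw [mem_closedBall, dist_eq_norm]
        exact this.le
    have hloc := dsm_loc hF' hR hinv_right hm hGcont hv0 hv hw
      (by linarith : (0:ℝ) ≤ T + δ) hball'
    have hTδA : T + δ ∈ A := by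
      refine ⟨⟨by linarith, by linarith [min_le_right (ε/2) (t₀ - T)]⟩, ?_⟩
      intro s hs
      have := hloc.2 0 s (le_refl _) hs.1 hs.2
      rw [hv0] at this
      simpa using this
    have := le_csSup hAbdd hTδA
    linarith

end Loc

section Global

lemma global_solution_of_lipschitz_bounded {E : Type*} [NormedAddCommGroup E] [NormedSpace ℝ E]
    [CompleteSpace E] (Gt : E → E) (L : NNReal) (hlip : LipschitzWith L Gt)
    (C : ℝ) (hC : ∀ x, ‖Gt x‖ ≤ C) (x₀ : E) :
    ∃ α : ℝ → E, α 0 = x₀ ∧ ∀ t ∈ Ici (0:ℝ), HasDerivWithinAt α (Gt (α t)) (Ici (0:ℝ)) t := by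
  have hC0 : 0 ≤ C := le_trans (norm_nonneg _) (hC x₀)
  have hex : ∀ n : ℕ, ∃ α : ℝ → E, α 0 = x₀ ∧
      ∀ t ∈ Icc (0:ℝ) n, HasDerivWithinAt α (Gt (α t)) (Icc (0:ℝ) n) t := by
    intro n
    have hpl : IsPicardLindelof (fun _ x => Gt x) (tmin := 0) (tmax := (n:ℝ))
        ⟨0, le_refl _, Nat.cast_nonneg n⟩ x₀ (C.toNNReal * n) 0 C.toNNReal L :=
      { lipschitzOnWith := fun t _ => hlip.lipschitzOnWith
        continuousOn := fun x _ => continuousOn_const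
        norm_le := fun t _ x _ => (hC x).trans (Real.le_coe_toNNReal C)
        mul_max_le := by
          simp [Real.coe_toNNReal _ hC0] }
    obtain ⟨α, h0, hα⟩ := hpl.exists_eq_forall_mem_Icc_hasDerivWithinAt₀
    exact ⟨α, h0, hα⟩
  choose seq hseq0 hseqD using hex
  have huniq : ∀ k n : ℕ, k ≤ n → EqOn (seq k) (seq n) (Icc (0:ℝ) k) := by
    intro k n hkn
    have hkn' : (k:ℝ) ≤ n := Nat.cast_le.mpr hkn
    apply ODE_solution_unique_of_mem_Icc_right
      (v := fun _ x => Gt x) (s := fun _ => (univ : Set E))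
      (fun t _ => hlip.lipschitzOnWith)
    · exact fun t ht => ((hseqD k t ht).continuousWithinAt)
    · intro t ht
      exact (hseqD k t (Ico_subset_Icc_self ht)).mono_of_mem_nhdsWithin
        (Icc_mem_nhdsGE_of_mem ht)
    · exact fun _ _ => mem_univ _
    · exact fun t ht => ((hseqD n t ⟨ht.1, ht.2.trans hkn'⟩).continuousWithinAt).mono
        (Icc_subset_Icc le_rfl hkn')
    · intro t ht
      exact (hseqD n t ⟨ht.1, (ht.2.le).trans hkn'⟩).mono_of_mem_nhdsWithin
        (Icc_mem_nhdsGE_of_mem ⟨ht.1, lt_of_lt_of_le ht.2 hkn'⟩)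
    · exact fun _ _ => mem_univ _
    · rw [hseq0, hseq0]
  set α : ℝ → E := fun t => seq (⌊t⌋₊ + 1) t with hα
  have hagree : ∀ n : ℕ, ∀ t ∈ Icc (0:ℝ) n, α t = seq n t := by
    intro n t ht
    have htk : t ≤ (⌊t⌋₊ + 1 : ℕ) := by
      push_cast
      exact (Nat.lt_floor_add_one t).le
    rcases le_total (⌊t⌋₊ + 1) n with h | h
    · exact huniq _ n h ⟨ht.1, htk⟩
    · exact (huniq n _ h ht).symm
  refine ⟨α, by simpa [hα, Nat.floor_zero] using hseq0 1, ?_⟩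
  intro t ht
  rw [mem_Ici] at ht
  set n : ℕ := ⌊t⌋₊ + 1 with hn
  have htn : t < (n:ℝ) := by push_cast [hn]; exact Nat.lt_floor_add_one t
  have hmem : Icc (0:ℝ) n ∈ 𝓝[Ici (0:ℝ)] t := by
    rw [mem_nhdsWithin]
    exact ⟨Iio (n:ℝ), isOpen_Iio, htn, fun x hx => ⟨hx.2, hx.1.le⟩⟩
  have hd := (hseqD n t ⟨ht, htn.le⟩).mono_of_mem_nhdsWithin hmem
  have heq : α =ᶠ[𝓝[Ici (0:ℝ)] t] seq n :=
    Filter.eventuallyEq_of_mem hmem (fun s hs => hagree n s hs)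
  have hval : α t = seq n t := hagree n t ⟨ht, htn.le⟩
  rw [show Gt (α t) = Gt (seq n t) from by rw [hval]]
  exact hd.congr_of_eventuallyEq heq hval

end Global

/-- Under bounds `M₁(R)`, `M₂(R)`, `m(R)` on the ball `B(u₀,R)` and
the condition `m(R)·‖F(u₀) - f‖ ≤ R`, the DSM problem
`u̇ = -[F'(u)]⁻¹(F(u) - f)`, `u(0) = u₀` has a unique global solution staying in
`B(u₀,R)`; `u(∞) = lim_{t→∞} u(t)` exists, `F(u(∞)) = f`, and
`‖u(t) - u(∞)‖ ≤ m(R)‖F(u₀) - f‖ e^{-t}`. -/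
theorem dsm_global_convergence
    {H : Type*} [NormedAddCommGroup H] [InnerProductSpace ℝ H] [CompleteSpace H]
    (F : H → H) (F' : H → H →L[ℝ] H) (F'' : H → H →L[ℝ] H →L[ℝ] H)
    (Finv : H → H →L[ℝ] H)
    (hF' : ∀ u, HasFDerivAt F (F' u) u)
    (hF'' : ∀ u, HasFDerivAt F' (F'' u) u)
    (u₀ f : H) (R : ℝ) (hR : 0 < R) (M₁ M₂ m : ℝ → ℝ)
    (hM₁ : ∀ u ∈ closedBall u₀ R, ‖F' u‖ ≤ M₁ R)
    (hM₂ : ∀ u ∈ closedBall u₀ R, ‖F'' u‖ ≤ M₂ R)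
    (hinv_left : ∀ u, (Finv u).comp (F' u) = ContinuousLinearMap.id ℝ H)
    (hinv_right : ∀ u, (F' u).comp (Finv u) = ContinuousLinearMap.id ℝ H)
    (hm : ∀ u ∈ closedBall u₀ R, ‖Finv u‖ ≤ m R)
    (hsmall : m R * ‖F u₀ - f‖ ≤ R) :
    ∃ u : ℝ → H,
      u 0 = u₀ ∧
      (∀ t ∈ Ici (0:ℝ),
        HasDerivWithinAt u (-(Finv (u t) (F (u t) - f))) (Ici (0:ℝ)) t) ∧
      (∀ t ∈ Ici (0:ℝ), u t ∈ closedBall u₀ R) ∧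
      (∀ v : ℝ → H, v 0 = u₀ →
        (∀ t ∈ Ici (0:ℝ),
          HasDerivWithinAt v (-(Finv (v t) (F (v t) - f))) (Ici (0:ℝ)) t) →
        ∀ t ∈ Ici (0:ℝ), v t = u t) ∧
      (∃ uinf : H, Tendsto u atTop (nhds uinf) ∧ F uinf = f ∧
        ∀ t ∈ Ici (0:ℝ), ‖u t - uinf‖ ≤ m R * ‖F u₀ - f‖ * Real.exp (-t)) := by
  classical
  obtain ⟨GLip, Gbdd, -⟩ := dsm_estimates F F' F'' Finv u₀ f R M₁ M₂ m
    hF' hF'' hR hM₁ hM₂ hinv_left hinv_right hm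
  have hm0 : 0 ≤ m R := le_trans (norm_nonneg (Finv u₀)) (hm u₀ (mem_closedBall_self hR.le))
  have hM₁0 : 0 ≤ M₁ R := le_trans (norm_nonneg (F' u₀)) (hM₁ u₀ (mem_closedBall_self hR.le))
  have hM₂0 : 0 ≤ M₂ R := le_trans (norm_nonneg (F'' u₀)) (hM₂ u₀ (mem_closedBall_self hR.le))
  have hCf0 : 0 ≤ M₁ R * R + ‖F u₀ - f‖ :=
    add_nonneg (mul_nonneg hM₁0 hR.le) (norm_nonneg _)
  have hK0 : 0 ≤ dsmK u₀ f R M₁ M₂ m F := by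
    unfold dsmK
    exact add_nonneg (mul_nonneg (mul_nonneg (mul_nonneg hm0 hm0) hM₂0) hCf0)
      (mul_nonneg hm0 hM₁0)
  set K : NNReal := Real.toNNReal (dsmK u₀ f R M₁ M₂ m F) with hK
  have hKcoe : (K : ℝ) = dsmK u₀ f R M₁ M₂ m F := Real.coe_toNNReal _ hK0
  have GLipOn : LipschitzOnWith K (dsmField F Finv f) (closedBall u₀ R) := by
    rw [lipschitzOnWith_iff_dist_le_mul]
    intro x hx y hy
    rw [dist_eq_norm, dist_eq_norm, hKcoe]
    exact GLip x hx y hy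
  have hGcont : ContinuousOn (dsmField F Finv f) (closedBall u₀ R) := GLipOn.continuousOn
  -- the projected (globally Lipschitz, bounded) field
  set Gt : H → H := fun x => dsmField F Finv f (projBall u₀ R x) with hGt
  have hGtLip : LipschitzWith (K * 2) Gt := by
    rw [← lipschitzOnWith_univ]
    exact GLipOn.comp ((projBall_lipschitz hR).lipschitzOnWith) (fun x _ => projBall_mem hR x)
  have hGtBdd : ∀ x, ‖Gt x‖ ≤ m R * (M₁ R * R + ‖F u₀ - f‖) :=
    fun x => Gbdd _ (projBall_mem hR x)
  obtain ⟨α, hα0, hαd⟩ := global_solution_of_lipschitz_bounded Gt (K * 2) hGtLip _ hGtBdd u₀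
  have hwproj : ∀ t ∈ Ici (0:ℝ), α t ∈ closedBall u₀ R →
      Gt (α t) = dsmField F Finv f (α t) := by
    intro t _ hmem
    rw [hGt]
    simp only []
    rw [projBall_of_mem hR hmem]
  have hapr := dsm_apriori hF' hR hinv_right hm hGcont hsmall hα0 hαd hwproj
  set c := m R * ‖F u₀ - f‖ with hc
  have hc0 : 0 ≤ c := mul_nonneg hm0 (norm_nonneg _)
  have hmem : ∀ t ∈ Ici (0:ℝ), α t ∈ closedBall u₀ R := by
    intro t ht
    rw [mem_Ici] at ht
    rw [mem_closedBall, dist_eq_norm]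
    have h1 := hapr t ht
    have h2 : Real.exp (-t) ≤ 1 := Real.exp_le_one_iff.mpr (by linarith)
    nlinarith [Real.exp_pos (-t)]
  have hαderiv : ∀ t ∈ Ici (0:ℝ), HasDerivWithinAt α (dsmField F Finv f (α t)) (Ici (0:ℝ)) t := by
    intro t ht
    have h3 := hαd t ht
    rwa [hwproj t ht (hmem t ht)] at h3
  have hloc : ∀ b : ℝ, 0 ≤ b →
      (∀ t ∈ Icc (0:ℝ) b, F (α t) - f = Real.exp (-t) • (F u₀ - f)) ∧
      (∀ t₁ t₂, 0 ≤ t₁ → t₁ ≤ t₂ → t₂ ≤ b →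
        ‖α t₂ - α t₁‖ ≤ m R * ‖F u₀ - f‖ * (Real.exp (-t₁) - Real.exp (-t₂))) :=
    fun b hb => dsm_loc hF' hR hinv_right hm hGcont hα0 hαderiv
      (fun _ _ _ => rfl) hb (fun s hs => hmem s hs.1)
  have hinvt : ∀ t : ℝ, 0 ≤ t → F (α t) - f = Real.exp (-t) • (F u₀ - f) :=
    fun t ht => (hloc t ht).1 t ⟨ht, le_rfl⟩
  have hcau : ∀ t₁ t₂ : ℝ, 0 ≤ t₁ → t₁ ≤ t₂ →
      ‖α t₂ - α t₁‖ ≤ c * (Real.exp (-t₁) - Real.exp (-t₂)) :=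
    fun t₁ t₂ h1 h12 => (hloc t₂ (h1.trans h12)).2 t₁ t₂ h1 h12 le_rfl
  -- limit
  have hcauchy : CauchySeq (fun n : ℕ => α n) := by
    apply cauchySeq_of_le_tendsto_0 (fun N : ℕ => c * Real.exp (-(N:ℝ)))
    · intro n m N hn hm'
      have key : ∀ a b : ℕ, N ≤ a → a ≤ b → dist (α a) (α b) ≤ c * Real.exp (-(N:ℝ)) := by
        intro a b ha hab
        rw [dist_eq_norm, norm_sub_rev]
        have h4 := hcau a b (Nat.cast_nonneg a) (Nat.cast_le.mpr hab)
        have h5 : Real.exp (-(a:ℝ)) ≤ Real.exp (-(N:ℝ)) :=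
          Real.exp_le_exp.mpr (by simpa using (Nat.cast_le (α := ℝ)).mpr ha)
        nlinarith [Real.exp_pos (-(b:ℝ)), Real.exp_pos (-(a:ℝ))]
      rcases le_total n m with h | h
      · exact key n m hn h
      · rw [dist_comm]; exact key m n hm' h
    · have h6 : Tendsto (fun N : ℕ => Real.exp (-(N:ℝ))) atTop (𝓝 0) := by
        exact Real.tendsto_exp_neg_atTop_nhds_zero.comp
          (tendsto_natCast_atTop_atTop (R := ℝ))
      simpa using h6.const_mul c
  obtain ⟨uinf, hconv⟩ := cauchySeq_tendsto_of_complete hcauchy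
  have hbound : ∀ t ∈ Ici (0:ℝ), ‖α t - uinf‖ ≤ c * Real.exp (-t) := by
    intro t ht
    rw [mem_Ici] at ht
    have h7 : Tendsto (fun n : ℕ => ‖α t - α n‖) atTop (𝓝 ‖α t - uinf‖) :=
      ((tendsto_const_nhds.sub hconv).norm)
    refine le_of_tendsto h7 ?_
    filter_upwards [eventually_ge_atTop ⌈t⌉₊] with n hn
    have htn : t ≤ (n:ℝ) := le_trans (Nat.le_ceil t) (Nat.cast_le.mpr hn)
    have h8 := hcau t n ht htn
    rw [norm_sub_rev]
    nlinarith [Real.exp_pos (-(n:ℝ))]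
  have htends : Tendsto α atTop (𝓝 uinf) := by
    rw [tendsto_iff_dist_tendsto_zero]
    refine squeeze_zero' (g := fun t : ℝ => c * Real.exp (-t))
      (Filter.Eventually.of_forall (fun t => dist_nonneg)) ?_ ?_
    · filter_upwards [eventually_ge_atTop (0:ℝ)] with t' ht'
      rw [dist_eq_norm]
      exact hbound t' ht'
    · have h9 : Tendsto (fun t : ℝ => Real.exp (-t)) atTop (𝓝 (0:ℝ)) :=
        Real.tendsto_exp_neg_atTop_nhds_zero
      simpa using h9.const_mul c
  have hFuinf : F uinf = f := by
    have h10 : Tendsto (fun t : ℝ => F (α t)) atTop (𝓝 (F uinf)) :=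
      ((hF' uinf).continuousAt.tendsto).comp htends
    have h11 : Tendsto (fun t : ℝ => f + Real.exp (-t) • (F u₀ - f)) atTop (𝓝 f) := by
      have h12 : Tendsto (fun t : ℝ => Real.exp (-t) • (F u₀ - f)) atTop (𝓝 (0 : H)) := by
        have := Real.tendsto_exp_neg_atTop_nhds_zero.smul_const (F u₀ - f)
        simpa using this
      simpa using tendsto_const_nhds.add h12
    have h13 : (fun t : ℝ => F (α t)) =ᶠ[atTop] (fun t : ℝ => f + Real.exp (-t) • (F u₀ - f)) := by
      filter_upwards [eventually_ge_atTop (0:ℝ)] with t ht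
      have h14 := hinvt t ht
      rw [← h14]
      abel
    exact tendsto_nhds_unique (h10.congr' h13) h11
  refine ⟨α, hα0, hαderiv, fun t ht => hmem t ht, ?_, uinf, htends, hFuinf, hbound⟩
  -- uniqueness
  intro v hv0 hvd t ht
  rw [mem_Ici] at ht
  have hvapr := dsm_apriori hF' hR hinv_right hm hGcont hsmall hv0 hvd (fun _ _ _ => rfl)
  have hvmem : ∀ s ∈ Ici (0:ℝ), v s ∈ closedBall u₀ R := by
    intro s hs
    rw [mem_Ici] at hs
    rw [mem_closedBall, dist_eq_norm]
    have h1 := hvapr s hs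
    have h2 : Real.exp (-s) ≤ 1 := Real.exp_le_one_iff.mpr (by linarith)
    nlinarith [Real.exp_pos (-s)]
  have := ODE_solution_unique_of_mem_Icc_right
    (v := fun _ x => dsmField F Finv f x) (s := fun _ => closedBall u₀ R)
    (a := 0) (b := t)
    (fun _ _ => GLipOn)
    (fun s hs => (hvd s hs.1).continuousWithinAt.mono (fun x hx => hx.1))
    (fun s hs => (hvd s hs.1).mono (Ici_subset_Ici.mpr hs.1))
    (fun s hs => hvmem s hs.1)
    (fun s hs => (hαderiv s hs.1).continuousWithinAt.mono (fun x hx => hx.1))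
    (fun s hs => (hαderiv s hs.1).mono (Ici_subset_Ici.mpr hs.1))
    (fun s hs => hmem s hs.1)
    (by rw [hv0, hα0])
  exact this ⟨ht, le_rfl⟩
end

section
/- Let H be a real Hilbert space, F : H → H Fréchet differentiable with F′(u) boundedly invertible for every u, and suppose there exist constants a > 0 and b > 0 such that ‖[F′(u)]⁻¹‖ ≤ a‖u‖ + b for all u ∈ H. Let f ∈ H and let u : [0,∞) → H be a differentiable solution of u̇(t) = −[F′(u(t))]⁻¹(F(u(t)) − f), u(0) = u₀, and set g₀ := ‖F(u₀) − f‖ and p := b/a. Then sup_{t ≥ 0} ‖u(t)‖ ≤ (‖u₀‖ + p)e^{a g₀} − p, and consequently ‖u̇(t)‖ ≤ (a c₁ + b) g₀ e^{−t} for all t ≥ 0, where c₁ := (‖u₀‖ + p)e^{a g₀} − p. -/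
open Set Metric

/-- If `‖[F'(u)]⁻¹‖ ≤ a‖u‖ + b` (`a > 0`, `b > 0`) and `u` solves
the DSM equation on `[0,∞)` with `u(0) = u₀`, then with `g₀ = ‖F(u₀) - f‖`,
`p = b/a`, `c₁ = (‖u₀‖ + p)e^{a g₀} - p`, one has `‖u(t)‖ ≤ c₁` and
`‖u̇(t)‖ ≤ (a c₁ + b) g₀ e^{-t}` for all `t ≥ 0`. -/
theorem dsm_trajectory_bound
    {H : Type*} [NormedAddCommGroup H] [InnerProductSpace ℝ H] [CompleteSpace H]
    (F : H → H) (F' : H → H →L[ℝ] H) (Finv : H → H →L[ℝ] H)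
    (hF' : ∀ u, HasFDerivAt F (F' u) u)
    (hinv_left : ∀ u, (Finv u).comp (F' u) = ContinuousLinearMap.id ℝ H)
    (hinv_right : ∀ u, (F' u).comp (Finv u) = ContinuousLinearMap.id ℝ H)
    (a b : ℝ) (ha : 0 < a) (hb : 0 < b)
    (hinv_bound : ∀ u : H, ‖Finv u‖ ≤ a * ‖u‖ + b)
    (f u₀ : H) (u u' : ℝ → H)
    (hu0 : u 0 = u₀)
    (hODE : ∀ t ∈ Ici (0:ℝ), u' t = -(Finv (u t) (F (u t) - f)))
    (hderiv : ∀ t ∈ Ici (0:ℝ), HasDerivWithinAt u (u' t) (Ici (0:ℝ)) t) :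
    (∀ t ∈ Ici (0:ℝ),
      ‖u t‖ ≤ (‖u₀‖ + b / a) * Real.exp (a * ‖F u₀ - f‖) - b / a) ∧
    (∀ t ∈ Ici (0:ℝ),
      ‖u' t‖ ≤ (a * ((‖u₀‖ + b / a) * Real.exp (a * ‖F u₀ - f‖) - b / a) + b) *
        ‖F u₀ - f‖ * Real.exp (-t)) := by
  set g₀ : ℝ := ‖F u₀ - f‖ with hg₀
  have hg₀0 : 0 ≤ g₀ := norm_nonneg _
  -- Step 1: F(u t) - f = exp(-t) • (F u₀ - f)
  have hkey : ∀ t ∈ Ici (0:ℝ), F (u t) - f = Real.exp (-t) • (F u₀ - f) := by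
    intro T hT
    set y : ℝ → H := fun s => Real.exp s • (F (u s) - f) with hy_def
    have hy : ∀ x ∈ Ici (0:ℝ), HasDerivWithinAt y 0 (Ici (0:ℝ)) x := by
      intro x hx
      have hu : HasDerivWithinAt u (u' x) (Ici (0:ℝ)) x := hderiv x hx
      have hFu : HasDerivWithinAt (fun s => F (u s) - f) (F' (u x) (u' x)) (Ici (0:ℝ)) x :=
        ((hF' (u x)).comp_hasDerivWithinAt x hu).sub_const f
      have hexp : HasDerivWithinAt Real.exp (Real.exp x) (Ici (0:ℝ)) x :=
        (Real.hasDerivAt_exp x).hasDerivWithinAt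
      have h := hexp.smul hFu
      have key : F' (u x) (u' x) = -(F (u x) - f) := by
        rw [hODE x hx, map_neg]
        have := congrArg (fun L => L (F (u x) - f)) (hinv_right (u x))
        simpa using congrArg Neg.neg this
      convert h using 1
      · rfl
      rw [key, smul_neg, neg_add_cancel]
    have hcont : ContinuousOn y (Icc 0 T) := fun x hx =>
      (hy x (mem_Ici.2 hx.1)).continuousWithinAt.mono Icc_subset_Ici_self
    have := constant_of_has_deriv_right_zero hcont
      (fun x hx => (hy x (mem_Ici.2 hx.1)).mono (Ici_subset_Ici.2 hx.1)) T (right_mem_Icc.2 hT)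
    have h0 : y 0 = F u₀ - f := by simp [hy_def, hu0]
    rw [h0] at this
    rw [← this]
    simp [hy_def, ← smul_assoc, smul_eq_mul, ← Real.exp_add]
  -- Step 2: pointwise derivative bound
  have hub : ∀ t ∈ Ici (0:ℝ), ‖u' t‖ ≤ (a * ‖u t‖ + b) * (g₀ * Real.exp (-t)) := by
    intro t ht
    rw [hODE t ht, norm_neg]
    calc ‖Finv (u t) (F (u t) - f)‖ ≤ ‖Finv (u t)‖ * ‖F (u t) - f‖ :=
          (Finv (u t)).le_opNorm _
      _ ≤ (a * ‖u t‖ + b) * ‖F (u t) - f‖ := by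
          apply mul_le_mul_of_nonneg_right (hinv_bound (u t)) (norm_nonneg _)
      _ = (a * ‖u t‖ + b) * (g₀ * Real.exp (-t)) := by
          rw [hkey t ht, norm_smul, Real.norm_eq_abs, Real.abs_exp, mul_comm (Real.exp _)]
  -- Step 3: Gronwall after time substitution s = 1 - exp(-t)
  have hnorm : ∀ t ∈ Ici (0:ℝ), ‖u t‖ ≤ (‖u₀‖ + b / a) * Real.exp (a * g₀) - b / a := by
    intro T hT
    set τ : ℝ → ℝ := fun s => -Real.log (1 - s) with hτ_def
    set v : ℝ → H := fun s => u (τ s) with hv_def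
    set v' : ℝ → H := fun s => (1 - s)⁻¹ • u' (τ s) with hv'_def
    have hτmem : ∀ s ∈ Ico (0:ℝ) 1, τ s ∈ Ici (0:ℝ) := by
      intro s hs
      have : Real.log (1 - s) ≤ 0 := Real.log_nonpos (by linarith [hs.2]) (by linarith [hs.1])
      simpa [hτ_def] using neg_nonneg.2 this
    have hτd : ∀ s ∈ Ico (0:ℝ) 1, HasDerivAt τ ((1 - s)⁻¹) s := by
      intro s hs
      have h1s : (1:ℝ) - s ≠ 0 := by linarith [hs.2]
      have hlog : HasDerivAt (fun s : ℝ => Real.log (1 - s)) ((1 - s)⁻¹ * (-1)) s :=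
        (Real.hasDerivAt_log h1s).comp s (((hasDerivAt_id s).const_sub 1))
      have h2 := hlog.neg
      simp only [mul_neg, mul_one, neg_neg] at h2
      exact h2
    have hvmaps : MapsTo τ (Ico (0:ℝ) 1) (Ici (0:ℝ)) := fun s hs => hτmem s hs
    have hvd : ∀ s ∈ Ico (0:ℝ) 1, HasDerivWithinAt v (v' s) (Ico (0:ℝ) 1) s := by
      intro s hs
      exact HasDerivWithinAt.scomp s (hderiv (τ s) (hτmem s hs))
        ((hτd s hs).hasDerivWithinAt) hvmaps
    have bound : ∀ s ∈ Ico (0:ℝ) 1, ‖v' s‖ ≤ (a * g₀) * ‖v s‖ + b * g₀ := by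
      intro s hs
      have h1s : (0:ℝ) < 1 - s := by linarith [hs.2]
      have hexplog : Real.exp (-τ s) = 1 - s := by
        simp [hτ_def, Real.exp_log h1s]
      have := hub (τ s) (hτmem s hs)
      rw [hexplog] at this
      have hn : ‖v' s‖ = (1 - s)⁻¹ * ‖u' (τ s)‖ := by
        show ‖(1 - s)⁻¹ • u' (τ s)‖ = _
        rw [norm_smul, Real.norm_eq_abs, abs_of_pos (inv_pos.2 h1s)]
      rw [hn]
      have h2 : (1 - s)⁻¹ * ‖u' (τ s)‖ ≤ (1 - s)⁻¹ * ((a * ‖v s‖ + b) * (g₀ * (1 - s))) :=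
        mul_le_mul_of_nonneg_left this (le_of_lt (inv_pos.2 h1s))
      have h3 : (1 - s)⁻¹ * ((a * ‖v s‖ + b) * (g₀ * (1 - s))) = (a * g₀) * ‖v s‖ + b * g₀ := by
        field_simp
      linarith [h2, h3 ▸ h2]
    set s₀ : ℝ := 1 - Real.exp (-T) with hs₀_def
    have hs₀ : s₀ ∈ Ico (0:ℝ) 1 := by
      constructor
      · have : Real.exp (-T) ≤ 1 := Real.exp_le_one_iff.2 (by simpa using hT)
        linarith
      · have : 0 < Real.exp (-T) := Real.exp_pos _
        linarith
    have hτs₀ : τ s₀ = T := by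
      simp [hτ_def, hs₀_def, Real.log_exp]
    have hss : Icc (0:ℝ) s₀ ⊆ Ico (0:ℝ) 1 := fun x hx => ⟨hx.1, lt_of_le_of_lt hx.2 hs₀.2⟩
    have hcont : ContinuousOn v (Icc 0 s₀) := fun x hx =>
      (hvd x (hss hx)).continuousWithinAt.mono hss
    have hf' : ∀ x ∈ Ico (0:ℝ) s₀, HasDerivWithinAt v (v' x) (Ici x) x := by
      intro x hx
      have hx1 : x < 1 := lt_of_lt_of_le (lt_of_lt_of_le hx.2 hs₀.2.le) le_rfl
      have hmem : Ico (0:ℝ) 1 ∈ nhdsWithin x (Ici x) := by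
        apply Filter.mem_of_superset
          (Filter.inter_mem self_mem_nhdsWithin
            (mem_nhdsWithin_of_mem_nhds (Iio_mem_nhds hx1)))
        rintro z ⟨hz1, hz2⟩
        exact ⟨le_trans hx.1 hz1, hz2⟩
      exact (hvd x ⟨hx.1, hx1⟩).mono_of_mem_nhdsWithin hmem
    have hv0 : ‖v 0‖ ≤ ‖u₀‖ := by
      have : τ 0 = 0 := by simp [hτ_def]
      simp [hv_def, this, hu0]
    have hG := norm_le_gronwallBound_of_norm_deriv_right_le hcont hf' hv0
      (fun x hx => bound x ⟨hx.1, lt_of_lt_of_le hx.2 hs₀.2.le⟩) s₀ (right_mem_Icc.2 hs₀.1)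
    have hvT : v s₀ = u T := by rw [hv_def]; simp [hτs₀]
    rw [hvT, sub_zero] at hG
    refine le_trans hG ?_
    -- bound gronwallBound
    rcases eq_or_lt_of_le hg₀0 with hg0 | hg0
    · rw [← hg0]
      simp only [mul_zero, gronwallBound_ε0, zero_mul, Real.exp_zero, mul_one]
      linarith
    · have hK : a * g₀ ≠ 0 := (mul_pos ha hg0).ne'
      rw [gronwallBound_of_K_ne_0 hK]
      have hεK : b * g₀ / (a * g₀) = b / a := by
        field_simp
      rw [hεK]
      have hs₀1 : a * g₀ * s₀ ≤ a * g₀ := by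
        nlinarith [hs₀.2.le, mul_pos ha hg0, hs₀.1]
      have hexp_le : Real.exp (a * g₀ * s₀) ≤ Real.exp (a * g₀) := Real.exp_le_exp.2 hs₀1
      have hp : 0 < b / a := div_pos hb ha
      have h0 : 0 ≤ ‖u₀‖ + b / a := by positivity
      nlinarith [norm_nonneg u₀, Real.exp_pos (a * g₀ * s₀)]
  refine ⟨hnorm, ?_⟩
  intro t ht
  have h1 := hub t ht
  have h2 := hnorm t ht
  have hge : 0 ≤ g₀ * Real.exp (-t) := mul_nonneg hg₀0 (Real.exp_pos _).le
  calc ‖u' t‖ ≤ (a * ‖u t‖ + b) * (g₀ * Real.exp (-t)) := h1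
    _ ≤ (a * ((‖u₀‖ + b / a) * Real.exp (a * g₀) - b / a) + b) * (g₀ * Real.exp (-t)) := by
        apply mul_le_mul_of_nonneg_right _ hge
        nlinarith
    _ = (a * ((‖u₀‖ + b / a) * Real.exp (a * g₀) - b / a) + b) * g₀ * Real.exp (-t) := by ring
end

section
/- Let H be a real Hilbert space and F : H → H twice Fréchet differentiable, with, for every R > 0, bounds ‖F′(u)‖ ≤ M₁(R) and ‖F″(u)‖ ≤ M₂(R) on {u : ‖u‖ ≤ R}, and with F′(u) boundedly invertible and ‖[F′(u)]⁻¹‖ ≤ a‖u‖ + b for all u ∈ H, where a ≥ 0, b > 0. Fix f ∈ H and r > 0. Then there exist constants c > 0 and σ > 0 such that: for any two initial points w₁, w₂ with ‖w₁‖ ≤ r, ‖w₂‖ ≤ r, and ‖w₁ − w₂‖ ≤ σ, the solutions u(t, w₁), u(t, w₂) of the DSM equation u̇ = −[F′(u)]⁻¹(F(u) − f) with initial data w₁ and w₂ respectively satisfy sup_{t ≥ 0} ‖u(t, w₁) − u(t, w₂)‖ ≤ c ‖w₁ − w₂‖. -/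
open Set Metric

set_option maxHeartbeats 2000000 in
/-- Continuous dependence of DSM trajectories on the initial
point: under the Hadamard-type hypotheses, for every `f` and `r > 0` there are
`c > 0` and `σ > 0` such that any two DSM solutions starting at points
`w₁, w₂` with `‖w₁‖ ≤ r`, `‖w₂‖ ≤ r`, `‖w₁ - w₂‖ ≤ σ` satisfy
`sup_{t ≥ 0} ‖u(t,w₁) - u(t,w₂)‖ ≤ c ‖w₁ - w₂‖`. -/
theorem dsm_continuous_dependence
    {H : Type*} [NormedAddCommGroup H] [InnerProductSpace ℝ H] [CompleteSpace H]
    (F : H → H) (F' : H → H →L[ℝ] H) (F'' : H → H →L[ℝ] H →L[ℝ] H)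
    (Finv : H → H →L[ℝ] H)
    (hF' : ∀ u, HasFDerivAt F (F' u) u)
    (hF'' : ∀ u, HasFDerivAt F' (F'' u) u)
    (hM : ∀ R > (0:ℝ), ∃ M₁ M₂ : ℝ, ∀ u : H, ‖u‖ ≤ R → ‖F' u‖ ≤ M₁ ∧ ‖F'' u‖ ≤ M₂)
    (a b : ℝ) (ha : 0 ≤ a) (hb : 0 < b)
    (hinv_left : ∀ u, (Finv u).comp (F' u) = ContinuousLinearMap.id ℝ H)
    (hinv_right : ∀ u, (F' u).comp (Finv u) = ContinuousLinearMap.id ℝ H)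
    (hinv_bound : ∀ u : H, ‖Finv u‖ ≤ a * ‖u‖ + b)
    (f : H) (r : ℝ) (hr : 0 < r) :
    ∃ c > (0:ℝ), ∃ σ > (0:ℝ),
      ∀ (w₁ w₂ : H) (u₁ u₂ : ℝ → H),
        ‖w₁‖ ≤ r → ‖w₂‖ ≤ r → ‖w₁ - w₂‖ ≤ σ →
        u₁ 0 = w₁ → u₂ 0 = w₂ →
        (∀ t ∈ Ici (0:ℝ),
          HasDerivWithinAt u₁ (-(Finv (u₁ t) (F (u₁ t) - f))) (Ici (0:ℝ)) t) →
        (∀ t ∈ Ici (0:ℝ),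
          HasDerivWithinAt u₂ (-(Finv (u₂ t) (F (u₂ t) - f))) (Ici (0:ℝ)) t) →
        ∀ t ∈ Ici (0:ℝ), ‖u₁ t - u₂ t‖ ≤ c * ‖w₁ - w₂‖ := by
  classical
  -- Bounds on the small ball of radius r
  obtain ⟨M₁r, M₂r, hMr⟩ := hM r hr
  have hM₁r0 : 0 ≤ M₁r := le_trans (norm_nonneg _) (hMr 0 (by simpa using hr.le)).1
  -- Lipschitz bound for F on the ball of radius r
  have hFlip_r : ∀ x y : H, ‖x‖ ≤ r → ‖y‖ ≤ r → ‖F x - F y‖ ≤ M₁r * ‖x - y‖ := by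
    intro x y hx hy
    have := Convex.norm_image_sub_le_of_norm_hasFDerivWithin_le
      (f := F) (f' := F') (s := closedBall (0:H) r)
      (fun z hz => (hF' z).hasFDerivWithinAt)
      (fun z hz => (hMr z (by simpa [mem_closedBall, dist_eq_norm] using hz)).1)
      (convex_closedBall _ _)
      (by simpa [mem_closedBall, dist_eq_norm] using hy)
      (by simpa [mem_closedBall, dist_eq_norm] using hx)
    simpa using this
  -- Uniform bound on ‖F w - f‖ for ‖w‖ ≤ r
  set C₀ : ℝ := ‖F 0 - f‖ + M₁r * r with hC₀def
  have hC₀0 : 0 ≤ C₀ := add_nonneg (norm_nonneg _) (mul_nonneg hM₁r0 hr.le)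
  have hC₀ : ∀ w : H, ‖w‖ ≤ r → ‖F w - f‖ ≤ C₀ := by
    intro w hw
    have h1 : ‖F w - f‖ ≤ ‖F w - F 0‖ + ‖F 0 - f‖ := norm_sub_le_norm_sub_add_norm_sub _ _ _
    have h2 : ‖F w - F 0‖ ≤ M₁r * r := by
      have h3 := hFlip_r w 0 hw (by simpa using hr.le)
      have h4 : M₁r * ‖w - 0‖ ≤ M₁r * r := by
        have : ‖w - 0‖ ≤ r := by simpa using hw
        exact mul_le_mul_of_nonneg_left this hM₁r0
      exact h3.trans h4
    linarith
  -- Grönwall constants for the a-priori bound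
  set K₀ : ℝ := a * C₀ + 1 with hK₀def
  have hK₀ : 0 < K₀ := by positivity
  set R : ℝ := r * Real.exp K₀ + b * C₀ / K₀ * (Real.exp K₀ - 1) with hRdef
  have hexpK₀ : 1 ≤ Real.exp K₀ := Real.one_le_exp hK₀.le
  have hR0 : 0 < R := by
    have h1 : 0 < r * Real.exp K₀ := by positivity
    have h2 : 0 ≤ b * C₀ / K₀ * (Real.exp K₀ - 1) := by
      apply mul_nonneg (by positivity) (by linarith)
    rw [hRdef]; linarith
  have hgronR : ∀ s ∈ Icc (0:ℝ) 1, gronwallBound r K₀ (b * C₀) s ≤ R := by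
    intro s hs
    rw [gronwallBound_of_K_ne_0 hK₀.ne']
    have hE : Real.exp (K₀ * s) ≤ Real.exp K₀ :=
      Real.exp_le_exp.2 (by nlinarith [hs.1, hs.2])
    have h1 : r * Real.exp (K₀ * s) ≤ r * Real.exp K₀ :=
      mul_le_mul_of_nonneg_left hE hr.le
    have h2 : b * C₀ / K₀ * (Real.exp (K₀ * s) - 1) ≤ b * C₀ / K₀ * (Real.exp K₀ - 1) :=
      mul_le_mul_of_nonneg_left (by linarith) (by positivity)
    simpa [hRdef] using add_le_add h1 h2
  -- Bounds on the big ball of radius R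
  obtain ⟨M₁R, M₂R, hMR⟩ := hM R hR0
  have hM₂R0 : 0 ≤ M₂R := le_trans (norm_nonneg (F'' 0)) (hMR 0 (by simpa using hR0.le)).2
  -- norm bound of Finv on the big ball
  set A : ℝ := a * R + b with hAdef
  have hA0 : 0 < A := by positivity
  have hFinvA : ∀ x : H, ‖x‖ ≤ R → ‖Finv x‖ ≤ A := by
    intro x hx
    refine (hinv_bound x).trans ?_
    have : a * ‖x‖ ≤ a * R := mul_le_mul_of_nonneg_left hx ha
    linarith
  -- Lipschitz bound for F' on the big ball
  have hF'lip : ∀ x y : H, ‖x‖ ≤ R → ‖y‖ ≤ R → ‖F' x - F' y‖ ≤ M₂R * ‖x - y‖ := by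
    intro x y hx hy
    have := Convex.norm_image_sub_le_of_norm_hasFDerivWithin_le
      (f := F') (f' := F'') (s := closedBall (0:H) R)
      (fun z hz => (hF'' z).hasFDerivWithinAt)
      (fun z hz => (hMR z (by simpa [mem_closedBall, dist_eq_norm] using hz)).2)
      (convex_closedBall _ _)
      (by simpa [mem_closedBall, dist_eq_norm] using hy)
      (by simpa [mem_closedBall, dist_eq_norm] using hx)
    simpa using this
  -- Lipschitz bound for Finv on the big ball
  have hFinvLip : ∀ x y : H, ‖x‖ ≤ R → ‖y‖ ≤ R →
      ‖Finv x - Finv y‖ ≤ A * A * M₂R * ‖x - y‖ := by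
    intro x y hx hy
    have key : Finv x - Finv y = (Finv x).comp ((F' y - F' x).comp (Finv y)) := by
      rw [ContinuousLinearMap.sub_comp, ContinuousLinearMap.comp_sub,
        hinv_right y, ← ContinuousLinearMap.comp_assoc, hinv_left x,
        ContinuousLinearMap.comp_id, ContinuousLinearMap.id_comp]
    rw [key]
    calc ‖(Finv x).comp ((F' y - F' x).comp (Finv y))‖
        ≤ ‖Finv x‖ * ‖(F' y - F' x).comp (Finv y)‖ := ContinuousLinearMap.opNorm_comp_le _ _
      _ ≤ ‖Finv x‖ * (‖F' y - F' x‖ * ‖Finv y‖) := by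
          exact mul_le_mul_of_nonneg_left (ContinuousLinearMap.opNorm_comp_le _ _)
            (norm_nonneg _)
      _ ≤ A * ((M₂R * ‖x - y‖) * A) := by
          apply mul_le_mul (hFinvA x hx) _ (mul_nonneg (norm_nonneg _) (norm_nonneg _)) hA0.le
          apply mul_le_mul _ (hFinvA y hy) (norm_nonneg _) (by positivity)
          simpa [norm_sub_rev x y] using hF'lip y x hy hx
      _ = A * A * M₂R * ‖x - y‖ := by ring
  -- time reparametrization
  set τ : ℝ → ℝ := fun s => -Real.log (1 - s) with hτdef
  have hτ0 : τ 0 = 0 := by simp [hτdef]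
  have hτnonneg : ∀ s : ℝ, 0 ≤ s → s < 1 → 0 ≤ τ s := by
    intro s h0 h1
    have : Real.log (1 - s) ≤ 0 := Real.log_nonpos (by linarith) (by linarith)
    simpa [hτdef] using neg_nonneg.2 this
  have hτderiv : ∀ s : ℝ, s < 1 → HasDerivAt τ ((1 - s)⁻¹) s := by
    intro s h1
    have h0 : (1 : ℝ) - s ≠ 0 := by intro h; linarith [sub_eq_zero.1 h]
    have d1 : HasDerivAt (fun x : ℝ => 1 - x) (-1) s := (hasDerivAt_id s).const_sub 1
    have d2 : HasDerivAt (fun x : ℝ => Real.log (1 - x)) (-1 / (1 - s)) s := d1.log h0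
    have d3 := d2.neg
    exact d3.congr_deriv (by rw [neg_div, neg_neg, one_div])
  have hexpτ : ∀ s : ℝ, s < 1 → Real.exp (-(τ s)) = 1 - s := by
    intro s h1
    have : -(τ s) = Real.log (1 - s) := by simp [hτdef]
    rw [this, Real.exp_log (by linarith)]
  -- Per-solution facts
  have sol : ∀ u : ℝ → H, ‖u 0‖ ≤ r →
      (∀ t ∈ Ici (0:ℝ), HasDerivWithinAt u (-(Finv (u t) (F (u t) - f))) (Ici (0:ℝ)) t) →
      (∀ s ∈ Ico (0:ℝ) 1,
        HasDerivWithinAt (fun x => u (τ x)) (-(Finv (u (τ s)) (F (u 0) - f))) (Ici s) s) ∧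
      (∀ s ∈ Ico (0:ℝ) 1, ‖u (τ s)‖ ≤ R) ∧
      ContinuousOn (fun x => u (τ x)) (Ico (0:ℝ) 1) := by
    intro u hu0 hu
    have hucont : ContinuousOn u (Ici (0:ℝ)) := fun t ht => (hu t ht).continuousWithinAt
    -- decay identity
    have hdecay : ∀ t ∈ Ici (0:ℝ), F (u t) - f = Real.exp (-t) • (F (u 0) - f) := by
      have hDzero : ∀ t ∈ Ici (0:ℝ),
          HasDerivWithinAt (fun x => Real.exp x • (F (u x) - f)) 0 (Ici (0:ℝ)) t := by
        intro t ht
        have d1 : HasDerivWithinAt (fun x => F (u x) - f)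
            (F' (u t) (-(Finv (u t) (F (u t) - f)))) (Ici (0:ℝ)) t :=
          ((hF' (u t)).comp_hasDerivWithinAt t (hu t ht)).sub_const f
        have d2 := ((Real.hasDerivAt_exp t).hasDerivWithinAt).smul d1
        have hid : F' (u t) ((Finv (u t)) (F (u t) - f)) = F (u t) - f := by
          have := DFunLike.congr_fun (hinv_right (u t)) (F (u t) - f)
          simpa using this
        have hD : F' (u t) (-(Finv (u t) (F (u t) - f))) = -(F (u t) - f) := by
          rw [map_neg, hid]
        rw [hD] at d2
        convert d2 using 1
        · rfl
        rw [smul_neg, neg_add_cancel]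
      have hconst : ∀ t ∈ Ici (0:ℝ),
          Real.exp t • (F (u t) - f) = F (u 0) - f := by
        intro t ht
        have := Convex.norm_image_sub_le_of_norm_hasDerivWithin_le
          (f := fun x => Real.exp x • (F (u x) - f)) (f' := fun _ => (0:H))
          (s := Ici (0:ℝ)) (C := 0) hDzero (fun x hx => by simp) (convex_Ici 0) self_mem_Ici ht
        have h0 : Real.exp t • (F (u t) - f) - Real.exp 0 • (F (u 0) - f) = 0 := by
          have hz : ‖Real.exp t • (F (u t) - f) - Real.exp 0 • (F (u 0) - f)‖ ≤ 0 := by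
            simpa using this
          exact norm_le_zero_iff.1 hz
        have := sub_eq_zero.1 h0
        simpa using this
      intro t ht
      have h1 := hconst t ht
      have : Real.exp (-t) • (Real.exp t • (F (u t) - f)) = Real.exp (-t) • (F (u 0) - f) := by
        rw [h1]
      rwa [smul_smul, ← Real.exp_add, neg_add_cancel, Real.exp_zero, one_smul] at this
    -- reparametrized derivative
    have hyderiv : ∀ s ∈ Ico (0:ℝ) 1,
        HasDerivWithinAt (fun x => u (τ x)) (-(Finv (u (τ s)) (F (u 0) - f))) (Ici s) s := by
      intro s hs
      obtain ⟨hs0, hs1⟩ := hs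
      have hτs : τ s ∈ Ici (0:ℝ) := hτnonneg s hs0 hs1
      have hmap : MapsTo τ (Ici s ∩ Iio 1) (Ici (0:ℝ)) := by
        intro x hx
        exact hτnonneg x (le_trans hs0 hx.1) hx.2
      have hd := (hu (τ s) hτs).scomp (x := s)
        ((hτderiv s hs1).hasDerivWithinAt) hmap
      have hd2 : HasDerivWithinAt (u ∘ τ)
          ((1 - s)⁻¹ • -(Finv (u (τ s)) (F (u (τ s)) - f))) (Ici s) s :=
        (hasDerivWithinAt_inter (Iio_mem_nhds hs1)).1 hd
      have hrw : (1 - s)⁻¹ • -(Finv (u (τ s)) (F (u (τ s)) - f))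
          = -(Finv (u (τ s)) (F (u 0) - f)) := by
        rw [hdecay (τ s) hτs, hexpτ s hs1, map_smul, smul_neg, smul_smul,
          inv_mul_cancel₀ (by intro h; linarith [sub_eq_zero.1 h] : (1:ℝ) - s ≠ 0), one_smul]
      rw [hrw] at hd2
      exact hd2
    -- continuity
    have hycont : ContinuousOn (fun x => u (τ x)) (Ico (0:ℝ) 1) := by
      apply hucont.comp
      · intro x hx
        have h0 : (1:ℝ) - x ≠ 0 := by intro h; linarith [sub_eq_zero.1 h, hx.2]
        exact ((Real.continuousAt_log h0).comp
          ((continuous_const.sub continuous_id).continuousAt)).neg.continuousWithinAt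
      · intro x hx
        exact hτnonneg x hx.1 hx.2
    -- a priori bound
    have hbound : ∀ s ∈ Ico (0:ℝ) 1, ‖u (τ s)‖ ≤ R := by
      intro s hs
      obtain ⟨hs0, hs1⟩ := hs
      have key := norm_le_gronwallBound_of_norm_deriv_right_le
        (f := fun x => u (τ x)) (f' := fun x => -(Finv (u (τ x)) (F (u 0) - f)))
        (δ := r) (K := K₀) (ε := b * C₀) (a := 0) (b := s)
        (hycont.mono (fun x hx => ⟨hx.1, lt_of_le_of_lt hx.2 hs1⟩))
        (fun x hx => hyderiv x ⟨hx.1, lt_of_lt_of_le hx.2 hs1.le⟩)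
        (by simpa [hτ0] using hu0)
        ?_ s ⟨hs0, le_refl s⟩
      · have := hgronR (s - 0) ⟨by linarith, by linarith⟩
        simpa using key.trans (by simpa using this)
      · intro x hx
        have hx1 : x < 1 := lt_of_lt_of_le hx.2 hs1.le
        have hnorm : ‖-(Finv (u (τ x)) (F (u 0) - f))‖
            ≤ ‖Finv (u (τ x))‖ * ‖F (u 0) - f‖ := by
          rw [norm_neg]; exact ContinuousLinearMap.le_opNorm _ _
        have hFb : ‖F (u 0) - f‖ ≤ C₀ := hC₀ (u 0) hu0
        have hFinvb : ‖Finv (u (τ x))‖ ≤ a * ‖u (τ x)‖ + b := hinv_bound _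
        have h1 : ‖Finv (u (τ x))‖ * ‖F (u 0) - f‖ ≤ (a * ‖u (τ x)‖ + b) * C₀ :=
          mul_le_mul hFinvb hFb (norm_nonneg _) (by positivity)
        have h2 : (a * ‖u (τ x)‖ + b) * C₀ ≤ K₀ * ‖u (τ x)‖ + b * C₀ := by
          have : a * ‖u (τ x)‖ * C₀ ≤ (a * C₀ + 1) * ‖u (τ x)‖ := by
            nlinarith [norm_nonneg (u (τ x))]
          nlinarith
        calc ‖-(Finv (u (τ x)) (F (u 0) - f))‖ ≤ _ := hnorm
          _ ≤ _ := h1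
          _ ≤ _ := h2
    exact ⟨hyderiv, hbound, hycont⟩
  -- Final Lipschitz constant for the frozen-field ODE
  set L : ℝ := A * A * M₂R * C₀ + 1 with hLdef
  have hL0 : 0 < L := by
    have h1 : 0 ≤ A * A * M₂R * C₀ :=
      mul_nonneg (mul_nonneg (mul_nonneg hA0.le hA0.le) hM₂R0) hC₀0
    rw [hLdef]; linarith
  set c : ℝ := Real.exp L * (1 + A * M₁r / L) with hcdef
  have hc0 : 0 < c := by
    have h1 : 0 ≤ A * M₁r / L := div_nonneg (mul_nonneg hA0.le hM₁r0) hL0.le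
    rw [hcdef]
    exact mul_pos (Real.exp_pos _) (by linarith)
  refine ⟨c, hc0, 1, one_pos, ?_⟩
  intro w₁ w₂ u₁ u₂ hw₁ hw₂ hσ h10 h20 hu₁ hu₂ t ht
  set δ : ℝ := ‖w₁ - w₂‖ with hδdef
  have hδ0 : 0 ≤ δ := norm_nonneg _
  obtain ⟨hy₁d, hy₁b, hy₁c⟩ := sol u₁ (by rw [h10]; exact hw₁) hu₁
  obtain ⟨hy₂d, hy₂b, hy₂c⟩ := sol u₂ (by rw [h20]; exact hw₂) hu₂
  set v₁ : H := F w₁ - f with hv₁def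
  set v₂ : H := F w₂ - f with hv₂def
  have hv₁C : ‖v₁‖ ≤ C₀ := hC₀ w₁ hw₁
  have hv₁₂ : ‖v₁ - v₂‖ ≤ M₁r * δ := by
    have : v₁ - v₂ = F w₁ - F w₂ := by simp [hv₁def, hv₂def]
    rw [this]
    exact hFlip_r w₁ w₂ hw₁ hw₂
  -- Lipschitz property of the frozen vector field
  have hVlip : ∀ _t : ℝ, LipschitzOnWith L.toNNReal
      (fun x : H => -(Finv x v₁)) (closedBall (0:H) R) := by
    intro _t
    apply LipschitzOnWith.of_dist_le_mul
    intro x hx y hy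
    have hx' : ‖x‖ ≤ R := by simpa [mem_closedBall, dist_eq_norm] using hx
    have hy' : ‖y‖ ≤ R := by simpa [mem_closedBall, dist_eq_norm] using hy
    rw [dist_eq_norm, dist_eq_norm]
    have h1 : -(Finv x v₁) - -(Finv y v₁) = -((Finv x - Finv y) v₁) := by
      simp [ContinuousLinearMap.sub_apply]; abel
    rw [h1, norm_neg]
    calc ‖(Finv x - Finv y) v₁‖ ≤ ‖Finv x - Finv y‖ * ‖v₁‖ :=
          ContinuousLinearMap.le_opNorm _ _
      _ ≤ (A * A * M₂R * ‖x - y‖) * C₀ :=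
          mul_le_mul (hFinvLip x y hx' hy') hv₁C (norm_nonneg _)
            (mul_nonneg (mul_nonneg (mul_nonneg hA0.le hA0.le) hM₂R0) (norm_nonneg _))
      _ ≤ L * ‖x - y‖ := by nlinarith [norm_nonneg (x - y)]
      _ = L.toNNReal * ‖x - y‖ := by rw [Real.coe_toNNReal L hL0.le]
  -- pick the reparametrized time for t
  have ht0 : (0:ℝ) ≤ t := ht
  set s : ℝ := 1 - Real.exp (-t) with hsdef
  have hs0 : 0 ≤ s := by
    have : Real.exp (-t) ≤ 1 := Real.exp_le_one_iff.2 (by linarith)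
    simp [hsdef]; linarith
  have hs1 : s < 1 := by
    have : 0 < Real.exp (-t) := Real.exp_pos _
    simp [hsdef]; linarith
  have hτs : τ s = t := by
    simp only [hτdef, hsdef]
    rw [sub_sub_cancel, Real.log_exp]
    ring
  -- apply Grönwall for approximate trajectories on [0, s]
  set εg : ℝ := A * (M₁r * δ) with hεgdef
  have main := dist_le_of_approx_trajectories_ODE_of_mem
    (v := fun _ x => -(Finv x v₁)) (s := fun _ => closedBall (0:H) R)
    (K := L.toNNReal) (fun t _ => hVlip t)
    (f := fun x => u₁ (τ x)) (f' := fun x => -(Finv (u₁ (τ x)) v₁))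
    (g := fun x => u₂ (τ x)) (g' := fun x => -(Finv (u₂ (τ x)) v₂))
    (a := 0) (b := s) (εf := 0) (εg := εg) (δ := δ)
    (hy₁c.mono (fun x hx => ⟨hx.1, lt_of_le_of_lt hx.2 hs1⟩))
    (fun x hx => by
      have := hy₁d x ⟨hx.1, lt_of_lt_of_le hx.2 hs1.le⟩
      simpa [h10, hv₁def] using this)
    (fun x hx => by simp)
    (fun x hx => by
      have := hy₁b x ⟨hx.1, lt_of_lt_of_le hx.2 hs1.le⟩
      simpa [mem_closedBall, dist_eq_norm] using this)
    (hy₂c.mono (fun x hx => ⟨hx.1, lt_of_le_of_lt hx.2 hs1⟩))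
    (fun x hx => by
      have := hy₂d x ⟨hx.1, lt_of_lt_of_le hx.2 hs1.le⟩
      simpa [h20, hv₂def] using this)
    (fun x hx => by
      rw [dist_eq_norm]
      have h1 : -(Finv (u₂ (τ x)) v₂) - -(Finv (u₂ (τ x)) v₁)
          = Finv (u₂ (τ x)) (v₁ - v₂) := by
        rw [neg_sub_neg, ← map_sub]
      rw [h1]
      have hxR : ‖u₂ (τ x)‖ ≤ R := hy₂b x ⟨hx.1, lt_of_lt_of_le hx.2 hs1.le⟩
      calc ‖Finv (u₂ (τ x)) (v₁ - v₂)‖ ≤ ‖Finv (u₂ (τ x))‖ * ‖v₁ - v₂‖ :=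
            ContinuousLinearMap.le_opNorm _ _
        _ ≤ A * (M₁r * δ) :=
            mul_le_mul (hFinvA _ hxR) hv₁₂ (norm_nonneg _) hA0.le
        _ = εg := rfl)
    (fun x hx => by
      have := hy₂b x ⟨hx.1, lt_of_lt_of_le hx.2 hs1.le⟩
      simpa [mem_closedBall, dist_eq_norm] using this)
    (by simp only [hτ0, h10, h20, dist_eq_norm]; exact hδdef.ge)
    s ⟨hs0, le_refl s⟩
  -- convert the Grönwall bound to c * δ
  have hdist : dist (u₁ t) (u₂ t) ≤ gronwallBound δ L.toNNReal (0 + εg) (s - 0) := by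
    rw [← hτs]
    exact main
  have hLcoe : (L.toNNReal : ℝ) = L := Real.coe_toNNReal L hL0.le
  have hfinal : gronwallBound δ L.toNNReal (0 + εg) (s - 0) ≤ c * δ := by
    rw [gronwallBound_of_K_ne_0 (by rw [hLcoe]; exact hL0.ne')]
    simp only [hLcoe, zero_add, sub_zero]
    have hE1 : Real.exp (L * s) ≤ Real.exp L :=
      Real.exp_le_exp.2 (by nlinarith)
    have hE0 : (1:ℝ) ≤ Real.exp (L * s) := Real.one_le_exp (mul_nonneg hL0.le hs0)
    have h1 : δ * Real.exp (L * s) ≤ δ * Real.exp L :=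
      mul_le_mul_of_nonneg_left hE1 hδ0
    have h2 : εg / L * (Real.exp (L * s) - 1) ≤ εg / L * Real.exp L := by
      apply mul_le_mul_of_nonneg_left (by linarith)
      exact div_nonneg (by rw [hεgdef]; exact mul_nonneg hA0.le (mul_nonneg hM₁r0 hδ0)) hL0.le
    have h3 : εg / L * Real.exp L = Real.exp L * (A * M₁r / L) * δ := by
      rw [hεgdef]; field_simp
    have hc' : c * δ = δ * Real.exp L + Real.exp L * (A * M₁r / L) * δ := by
      rw [hcdef]; ring
    rw [hc']
    linarith
  have := hdist.trans hfinal
  rwa [dist_eq_norm] at this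
end

section
/- Let c > 0. There exist δ₀ > 0 and c₃ > 0 such that: if η : [0,∞) → [0,∞) is differentiable, satisfies the differential inequality η̇(t) ≤ −η(t) + c η(t)² + c e^{−t} η(t) for all t ≥ 0, and η(0) = δ with 0 ≤ δ ≤ δ₀, then η(t) ≤ c₃ δ e^{−t} for all t ≥ 0. -/
open Set

/-- For each `c > 0` there are `δ₀ > 0` and `c₃ > 0` such that any
nonnegative differentiable `η` on `[0,∞)` with
`η̇ ≤ -η + c η² + c e^{-t} η` and `η(0) = δ ≤ δ₀` satisfies
`η(t) ≤ c₃ δ e^{-t}` for all `t ≥ 0`. -/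
theorem eta_decay_inequality (c : ℝ) (hc : 0 < c) :
    ∃ δ₀ > (0:ℝ), ∃ c₃ > (0:ℝ),
      ∀ (η η' : ℝ → ℝ) (δ : ℝ), 0 ≤ δ → δ ≤ δ₀ → η 0 = δ →
        (∀ t ∈ Ici (0:ℝ), 0 ≤ η t) →
        (∀ t ∈ Ici (0:ℝ), HasDerivWithinAt η (η' t) (Ici (0:ℝ)) t) →
        (∀ t ∈ Ici (0:ℝ),
          η' t ≤ -η t + c * (η t) ^ 2 + c * Real.exp (-t) * η t) →
        ∀ t ∈ Ici (0:ℝ), η t ≤ c₃ * δ * Real.exp (-t) := by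
  refine ⟨1 / (2 * c * Real.exp (c + 1)), by positivity, Real.exp (c + 1),
    Real.exp_pos _, ?_⟩
  intro η η' δ hδ0 hδδ0 hη0 hηnn hηderiv hηineq t ht
  have ht0 : (0:ℝ) ≤ t := ht
  -- key: comparison with barrier for any admissible δ'
  have key : ∀ δ' : ℝ, δ ≤ δ' → 0 < δ' → c * δ' * Real.exp (c + 1) < 1 →
      η t ≤ Real.exp (c + 1) * δ' * Real.exp (-t) := by
    intro δ' hδδ' hδ'pos hδ'small
    set B : ℝ → ℝ := fun x => δ' * Real.exp (-x + (c + 1) * (1 - Real.exp (-x)))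
      with hBdef
    set B' : ℝ → ℝ := fun x => B x * (-1 + (c + 1) * Real.exp (-x)) with hB'def
    have hBpos : ∀ x, 0 < B x := fun x => by positivity
    have hBderiv : ∀ x, HasDerivAt B (B' x) x := by
      intro x
      have h1 : HasDerivAt (fun x : ℝ => Real.exp (-x)) (-Real.exp (-x)) x := by
        simpa using ((hasDerivAt_id x).neg.exp)
      have h2 : HasDerivAt (fun x : ℝ => -x + (c + 1) * (1 - Real.exp (-x)))
          (-1 + (c + 1) * Real.exp (-x)) x := by
        have := ((hasDerivAt_id x).neg).add
          (((hasDerivAt_const x (1:ℝ)).sub h1).const_mul (c + 1))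
        exact this.congr_deriv (by ring)
      have := (h2.exp).const_mul δ'
      simpa [hBdef, hB'def, mul_comm, mul_assoc, mul_left_comm] using this
    -- barrier key estimate: c * B x < exp (-x) for x ≥ 0
    have hBsmall : ∀ x : ℝ, 0 ≤ x → c * B x < Real.exp (-x) := by
      intro x hx
      have hex : Real.exp (-x + (c + 1) * (1 - Real.exp (-x)))
          ≤ Real.exp (-x) * Real.exp (c + 1) := by
        rw [← Real.exp_add]
        apply Real.exp_le_exp.2
        have h1 : (1 : ℝ) - Real.exp (-x) ≤ 1 := by
          have := Real.exp_pos (-x); linarith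
        nlinarith [hc]
      have : c * B x ≤ c * δ' * Real.exp (c + 1) * Real.exp (-x) := by
        have := mul_le_mul_of_nonneg_left hex (le_of_lt (by positivity : (0:ℝ) < c * δ'))
        calc c * B x = c * δ' * Real.exp (-x + (c + 1) * (1 - Real.exp (-x))) := by
              rw [hBdef]; ring
          _ ≤ c * δ' * (Real.exp (-x) * Real.exp (c + 1)) := this
          _ = c * δ' * Real.exp (c + 1) * Real.exp (-x) := by ring
      have hlt : c * δ' * Real.exp (c + 1) * Real.exp (-x) < 1 * Real.exp (-x) :=
        mul_lt_mul_of_pos_right hδ'small (Real.exp_pos _)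
      linarith
    have hcont : ContinuousOn η (Icc 0 t) := by
      intro x hx
      exact ((hηderiv x hx.1).continuousWithinAt).mono (fun y hy => hy.1)
    have hderiv' : ∀ x ∈ Ico (0:ℝ) t, HasDerivWithinAt η (η' x) (Ici x) x := by
      intro x hx
      exact (hηderiv x hx.1).mono (Ici_subset_Ici.2 hx.1)
    have hstart : η 0 ≤ B 0 := by
      simp [hBdef, hη0]
      linarith [hδδ']
    have hbound : ∀ x ∈ Ico (0:ℝ) t, η x = B x → η' x < B' x := by
      intro x hx heq
      have h1 := hηineq x hx.1
      rw [heq] at h1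
      have h2 := hBsmall x hx.1
      have h3 := hBpos x
      have hB' : B' x = B x * (-1 + (c + 1) * Real.exp (-x)) := rfl
      nlinarith [Real.exp_pos (-x)]
    have := image_le_of_deriv_right_lt_deriv_boundary hcont hderiv' hstart hBderiv hbound
      (Set.right_mem_Icc.2 ht0)
    calc η t ≤ B t := this
      _ ≤ Real.exp (c + 1) * δ' * Real.exp (-t) := by
        rw [hBdef]
        have hex : Real.exp (-t + (c + 1) * (1 - Real.exp (-t)))
            ≤ Real.exp (c + 1) * Real.exp (-t) := by
          rw [← Real.exp_add]
          apply Real.exp_le_exp.2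
          have h1 : (1 : ℝ) - Real.exp (-t) ≤ 1 := by
            have := Real.exp_pos (-t); linarith
          nlinarith [hc]
        calc δ' * Real.exp (-t + (c + 1) * (1 - Real.exp (-t)))
            ≤ δ' * (Real.exp (c + 1) * Real.exp (-t)) :=
              mul_le_mul_of_nonneg_left hex hδ'pos.le
          _ = Real.exp (c + 1) * δ' * Real.exp (-t) := by ring
  rcases eq_or_lt_of_le hδ0 with h0 | hpos
  · -- δ = 0 : use ε-trick
    have hzero : η t ≤ 0 := by
      refine le_of_forall_pos_le_add ?_
      intro ε hε
      set d : ℝ := min (1 / (2 * c * Real.exp (c + 1))) (ε / Real.exp (c + 1)) with hd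
      have hdpos : 0 < d := lt_min (by positivity) (by positivity)
      have hd1 : d ≤ 1 / (2 * c * Real.exp (c + 1)) := min_le_left _ _
      have hd2 : d ≤ ε / Real.exp (c + 1) := min_le_right _ _
      have hE := Real.exp_pos (c + 1)
      have hsmall : c * d * Real.exp (c + 1) < 1 := by
        have h2 : c * d * Real.exp (c + 1)
            ≤ c * (1 / (2 * c * Real.exp (c + 1))) * Real.exp (c + 1) :=
          mul_le_mul_of_nonneg_right (mul_le_mul_of_nonneg_left hd1 hc.le) hE.le
        have h3 : c * (1 / (2 * c * Real.exp (c + 1))) * Real.exp (c + 1) = 1 / 2 := by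
          field_simp
        linarith
      have hkey := key d (h0 ▸ hdpos.le) hdpos hsmall
      have h6 : Real.exp (-t) ≤ 1 := Real.exp_le_one_iff.2 (by linarith)
      have h7 : Real.exp (c + 1) * d ≤ ε := by
        have := mul_le_mul_of_nonneg_left hd2 hE.le
        calc Real.exp (c + 1) * d ≤ Real.exp (c + 1) * (ε / Real.exp (c + 1)) := this
          _ = ε := by field_simp
      have h8 : Real.exp (c + 1) * d * Real.exp (-t) ≤ Real.exp (c + 1) * d * 1 :=
        mul_le_mul_of_nonneg_left h6 (by positivity)
      linarith
    rw [← h0]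
    simpa using hzero
  · -- δ > 0 : apply key directly with δ' = δ
    have hE := Real.exp_pos (c + 1)
    have hsmall : c * δ * Real.exp (c + 1) < 1 := by
      have h2 : c * δ * Real.exp (c + 1)
          ≤ c * (1 / (2 * c * Real.exp (c + 1))) * Real.exp (c + 1) :=
        mul_le_mul_of_nonneg_right (mul_le_mul_of_nonneg_left hδδ0 hc.le) hE.le
      have h3 : c * (1 / (2 * c * Real.exp (c + 1))) * Real.exp (c + 1) = 1 / 2 := by
        field_simp
      linarith
    exact key δ le_rfl hpos hsmall
end

section
/- Let c > 0. There exist δ₀ > 0 and c₃ > 0 such that: if h : [0,∞) → [0,∞) is differentiable, satisfies ḣ(t) ≤ c e^{−t}(h(t)² + h(t)) for all t ≥ 0, and h(0) = δ with 0 ≤ δ ≤ δ₀, then h(t) ≤ c₃ δ for all t ≥ 0. -/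
open Set

/-- For each `c > 0` there are `δ₀ > 0` and `c₃ > 0` such that any
nonnegative differentiable `h` on `[0,∞)` with `ḣ ≤ c e^{-t}(h² + h)` and
`h(0) = δ ≤ δ₀` satisfies `h(t) ≤ c₃ δ` for all `t ≥ 0`. -/
theorem h_bound_inequality (c : ℝ) (hc : 0 < c) :
    ∃ δ₀ > (0:ℝ), ∃ c₃ > (0:ℝ),
      ∀ (h h' : ℝ → ℝ) (δ : ℝ), 0 ≤ δ → δ ≤ δ₀ → h 0 = δ →
        (∀ t ∈ Ici (0:ℝ), 0 ≤ h t) →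
        (∀ t ∈ Ici (0:ℝ), HasDerivWithinAt h (h' t) (Ici (0:ℝ)) t) →
        (∀ t ∈ Ici (0:ℝ), h' t ≤ c * Real.exp (-t) * ((h t) ^ 2 + h t)) →
        ∀ t ∈ Ici (0:ℝ), h t ≤ c₃ * δ := by
  set E : ℝ := Real.exp (2 * c) with hE
  have hEpos : 0 < E := Real.exp_pos _
  refine ⟨E⁻¹ / 4, by positivity, E, hEpos, ?_⟩
  intro h h' δ hδ0 hδle h0 hpos hderiv hbound t ht
  rw [mem_Ici] at ht
  -- main estimate: for every ε ∈ (0, δ₀], h t ≤ (δ + ε) * E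
  have key : ∀ ε : ℝ, 0 < ε → ε ≤ E⁻¹ / 4 → h t ≤ (δ + ε) * E := by
    intro ε hε hεle
    set B : ℝ → ℝ := fun s => (δ + ε) * Real.exp (2 * c * (1 - Real.exp (-s))) with hB
    set B' : ℝ → ℝ := fun s => (δ + ε) * Real.exp (2 * c * (1 - Real.exp (-s)))
        * (2 * c * Real.exp (-s)) with hB'
    have hBderiv : ∀ x, HasDerivAt B (B' x) x := by
      intro x
      have h1 : HasDerivAt (fun s : ℝ => Real.exp (-s)) (-Real.exp (-x)) x := by
        have := (Real.hasDerivAt_exp (-x)).comp x (hasDerivAt_neg x)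
        simp at this; exact this
      have h2 : HasDerivAt (fun s : ℝ => 2 * c * (1 - Real.exp (-s)))
          (2 * c * Real.exp (-x)) x := by
        have := ((hasDerivAt_const x (1:ℝ)).sub h1).const_mul (2 * c)
        simpa using this
      have h3 := (Real.hasDerivAt_exp _).comp x h2
      simpa [B, B', mul_assoc, mul_comm, mul_left_comm] using h3.const_mul (δ + ε)
    have hBge : ∀ x : ℝ, 0 ≤ x → δ + ε ≤ B x := by
      intro x hx
      have he : Real.exp (-x) ≤ 1 := by
        have := Real.exp_le_exp.2 (neg_nonpos.2 hx)
        simpa using this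
      have h1 : (1:ℝ) ≤ Real.exp (2 * c * (1 - Real.exp (-x))) := by
        apply Real.one_le_exp
        nlinarith
      show δ + ε ≤ (δ + ε) * Real.exp (2 * c * (1 - Real.exp (-x)))
      nlinarith [hδ0, hε]
    have hcont : ContinuousOn h (Icc 0 t) := by
      intro x hx
      exact ((hderiv x (mem_Ici.2 hx.1)).continuousWithinAt).mono
        (fun y hy => mem_Ici.2 hy.1)
    have hderiv' : ∀ x ∈ Ico (0:ℝ) t, HasDerivWithinAt h (h' x) (Ici x) x := by
      intro x hx
      exact (hderiv x (mem_Ici.2 hx.1)).mono (fun y hy => le_trans hx.1 hy)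
    have hmain : ∀ ⦃x⦄, x ∈ Icc (0:ℝ) t → h x ≤ B x := by
      apply image_le_of_deriv_right_lt_deriv_boundary hcont hderiv' _ hBderiv
      · -- contact condition
        intro x hx hcontact
        have hxpos : (0:ℝ) ≤ x := hx.1
        have hhx : 0 < h x := by
          rw [hcontact]; exact lt_of_lt_of_le (by linarith) (hBge x hxpos)
        have hexple : Real.exp (2 * c * (1 - Real.exp (-x))) ≤ E := by
          apply Real.exp_le_exp.2
          have h1 : 0 < Real.exp (-x) := Real.exp_pos _
          nlinarith
        have hhalf : h x ≤ 1 / 2 := by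
          rw [hcontact, hB]
          have : (δ + ε) * Real.exp (2 * c * (1 - Real.exp (-x))) ≤ (δ + ε) * E :=
            mul_le_mul_of_nonneg_left hexple (by linarith)
          calc (δ + ε) * Real.exp (2 * c * (1 - Real.exp (-x))) ≤ (δ + ε) * E := this
            _ ≤ (E⁻¹ / 4 + E⁻¹ / 4) * E := by
                apply mul_le_mul_of_nonneg_right _ hEpos.le; linarith
            _ = 1 / 2 := by field_simp; ring
        have hbx := hbound x (mem_Ici.2 hxpos)
        have hex : 0 < Real.exp (-x) := Real.exp_pos _
        have : h' x < 2 * c * Real.exp (-x) * h x := by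
          have h1 : c * Real.exp (-x) * ((h x) ^ 2 + h x)
              ≤ c * Real.exp (-x) * ((3/2) * h x) := by
            apply mul_le_mul_of_nonneg_left _ (by positivity)
            nlinarith
          have h2 : c * Real.exp (-x) * ((3/2) * h x) < 2 * c * Real.exp (-x) * h x := by
            nlinarith [mul_pos (mul_pos hc hex) hhx]
          linarith
        calc h' x < 2 * c * Real.exp (-x) * h x := this
          _ = B' x := by
              show _ = (δ + ε) * Real.exp (2 * c * (1 - Real.exp (-x))) * (2 * c * Real.exp (-x))
              have : h x = (δ + ε) * Real.exp (2 * c * (1 - Real.exp (-x))) := hcontact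
              rw [this]; ring
      · -- initial condition
        rw [h0, hB]
        simp only
        nlinarith [Real.one_le_exp (show (0:ℝ) ≤ 2 * c * (1 - Real.exp (-(0:ℝ)))
          by simp), hε, hδ0]
    have := hmain (mem_Icc.2 ⟨ht, le_refl t⟩)
    calc h t ≤ B t := this
      _ ≤ (δ + ε) * E := by
          apply mul_le_mul_of_nonneg_left _ (by linarith)
          apply Real.exp_le_exp.2
          have h1 : 0 < Real.exp (-t) := Real.exp_pos _
          nlinarith
  -- let ε → 0
  rw [mul_comm]
  apply le_of_forall_pos_le_add
  intro ε' hε'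
  set ε := min (E⁻¹ / 4) (ε' / E) with hεdef
  have hεpos : 0 < ε := lt_min (by positivity) (by positivity)
  have := key ε hεpos (min_le_left _ _)
  have h2 : ε * E ≤ ε' := by
    have : ε ≤ ε' / E := min_le_right _ _
    calc ε * E ≤ (ε' / E) * E := mul_le_mul_of_nonneg_right this hEpos.le
      _ = ε' := by field_simp
  nlinarith
end
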